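/- arXiv:1612.07354 — 6 statements merged into one kernel-verified Lean document; each statement's English description precedes it below -/
import Mathlib

section
/- Every completely metrizable topological space with the Menger property is σ-compact. -/
/-- A topological space has the Menger property if for every sequence of open
covers there are finite subfamilies whose union covers the space. -/
def MengerSpace (X : Type*) [TopologicalSpace X] : Prop :=
  ∀ 𝒰 : ℕ → Set (Set X),
    (∀ n, (∀ s ∈ 𝒰 n, IsOpen s) ∧ ⋃₀ 𝒰 n = Set.univ) →
    ∃ ℱ : ℕ → Set (Set X),
      (∀ n, ℱ n ⊆ 𝒰 n ∧ (ℱ n).Finite) ∧ ⋃ n, ⋃₀ ℱ n = Set.univ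

open Set Metric

namespace MengerSigma

variable {X : Type*} [MetricSpace X]

/-- Menger implies Lindelöf. -/
lemma lindelofSpace_of_menger (hM : MengerSpace X) : LindelofSpace X := by
  constructor
  rw [isLindelof_iff_countable_subcover]
  intro ι U hUo hU
  obtain ⟨F, hF, hcov⟩ := hM (fun _ => Set.range U) (fun n =>
    ⟨by rintro u ⟨i, rfl⟩; exact hUo i,
     by rw [sUnion_range]; exact univ_subset_iff.mp (by simpa using hU)⟩)
  have hex : ∀ n, ∀ u ∈ F n, ∃ i, U i = u := fun n u hu => (hF n).1 hu
  choose g hg using hex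
  haveI : ∀ n, Finite (F n) := fun n => (hF n).2.to_subtype
  refine ⟨⋃ n, Set.range (fun p : (F n) => g n p.1 p.2), ?_, fun x _ => ?_⟩
  · exact countable_iUnion fun n => (Set.finite_range _).countable
  · have : x ∈ ⋃ n, ⋃₀ F n := hcov ▸ mem_univ x
    obtain ⟨_, ⟨n, rfl⟩, u, hu, hxu⟩ := this
    refine mem_biUnion (mem_iUnion.2 ⟨n, ⟨⟨u, hu⟩, rfl⟩⟩) ?_
    rw [hg n u hu]; exact hxu

variable (X) in
/-- The set of points none of whose ball-neighborhoods is contained in a σ-compact set. -/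
def Ybad : Set X := {x | ∀ ε > (0:ℝ), ∀ S : Set X, IsSigmaCompact S → ¬ ball x ε ⊆ S}

/-- The complement of `Ybad` is contained in a σ-compact set (assuming Lindelöf). -/
lemma compl_Ybad_subset [LindelofSpace X] :
    ∃ S : Set X, IsSigmaCompact S ∧ (Ybad X)ᶜ ⊆ S := by
  haveI : SecondCountableTopology X := inferInstance
  have hz : ∀ z : ((Ybad X)ᶜ : Set X), ∃ ε > (0:ℝ), ∃ S : Set X,
      IsSigmaCompact S ∧ ball z.1 ε ⊆ S := by
    rintro ⟨z, hz⟩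
    simp only [Ybad, mem_compl_iff, mem_setOf_eq] at hz
    push_neg at hz
    obtain ⟨ε, hε, S, hS, hsub⟩ := hz
    exact ⟨ε, hε, S, hS, hsub⟩
  choose ε hε S hS hsub using hz
  have hLin : IsLindelof ((Ybad X)ᶜ) := HereditarilyLindelof_LindelofSets _
  obtain ⟨r, hrc, hrcov⟩ := hLin.elim_countable_subcover (fun z => ball z.1 (ε z))
    (fun z => isOpen_ball) (fun z hzc => mem_iUnion.2 ⟨⟨z, hzc⟩, mem_ball_self (hε _)⟩)
  refine ⟨⋃ z ∈ r, S z, isSigmaCompact_biUnion hrc (fun z _ => hS z), ?_⟩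
  intro z hzc
  obtain ⟨w, hw, hzw⟩ := mem_iUnion₂.1 (hrcov hzc)
  exact mem_biUnion hw (hsub w hzw)

/-- Around a point of `Ybad`, the trace of `Ybad` on any ball is not totally bounded. -/
lemma not_totallyBounded [CompleteSpace X] [LindelofSpace X] {x : X} (hx : x ∈ Ybad X)
    {ρ : ℝ} (hρ : 0 < ρ) : ¬ TotallyBounded (ball x ρ ∩ Ybad X) := by
  intro h
  obtain ⟨S, hS, hsub⟩ := compl_Ybad_subset (X := X)
  have hK : IsCompact (closure (ball x ρ ∩ Ybad X)) :=
    TotallyBounded.isCompact_of_isClosed h.closure isClosed_closure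
  refine hx ρ hρ (closure (ball x ρ ∩ Ybad X) ∪ S) ?_ ?_
  · rw [Set.union_eq_iUnion]
    exact isSigmaCompact_iUnion _ (by rintro (_|_) <;> simp [hS, hK.isSigmaCompact])
  · intro y hy
    by_cases hyY : y ∈ Ybad X
    · exact Or.inl (subset_closure ⟨hy, hyY⟩)
    · exact Or.inr (hsub hyY)

/-- From a non-totally-bounded set, extract a uniformly separated sequence. -/
lemma exists_separated_seq {A : Set X} (h : ¬ TotallyBounded A) :
    ∃ ε > (0:ℝ), ∃ f : ℕ → X, (∀ n, f n ∈ A) ∧ ∀ m n, m ≠ n → ε ≤ dist (f m) (f n) := by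
  classical
  rw [Metric.totallyBounded_iff] at h
  push_neg at h
  obtain ⟨ε, hε, h⟩ := h
  have key : ∀ t : Finset X, ∃ y ∈ A, ∀ x ∈ t, ε ≤ dist y x := by
    intro t
    obtain ⟨y, hyA, hy⟩ := not_subset.1 (h t t.finite_toSet)
    refine ⟨y, hyA, fun x hx => ?_⟩
    by_contra hlt
    exact hy (mem_biUnion hx (by simpa using lt_of_not_ge hlt))
  choose pick hpickA hpickd using key
  let Fn : ℕ → Finset X := fun n => Nat.rec ∅ (fun _ F => insert (pick F) F) n
  have hFsucc : ∀ n, Fn (n + 1) = insert (pick (Fn n)) (Fn n) := fun n => rfl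
  have hmem : ∀ n, pick (Fn n) ∈ Fn (n + 1) := fun n => by
    rw [hFsucc]; exact Finset.mem_insert_self _ _
  have hmono : ∀ m n, m ≤ n → Fn m ⊆ Fn n := by
    intro m n hmn
    induction n with
    | zero => simp [Nat.le_zero.1 hmn]
    | succ n ih =>
      rcases Nat.le_succ_iff.1 hmn with h' | h'
      · exact (ih h').trans (by rw [hFsucc]; exact Finset.subset_insert _ _)
      · simp [h']
  refine ⟨ε, hε, fun n => pick (Fn n), fun n => hpickA _, ?_⟩
  have main : ∀ m n, m < n → ε ≤ dist (pick (Fn n)) (pick (Fn m)) := by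
    intro m n hmn
    exact hpickd (Fn n) _ (hmono (m + 1) n hmn (hmem m))
  intro m n hmn
  rcases lt_or_gt_of_ne hmn with h' | h'
  · rw [dist_comm]; exact main m n h'
  · exact main n m h'

section Tree

variable (X) in
/-- A node of the tree: a center together with a positive radius. -/
def Node (Y : Set X) : Type _ := {p : X × ℝ // p.1 ∈ Y ∧ 0 < p.2}

variable {Y : Set X}

variable (hch : ∀ N : Node X Y, ∃ ε > (0:ℝ), ∃ f : ℕ → X,
  (∀ i, f i ∈ ball N.1.1 N.1.2 ∩ Y) ∧ ∀ i j, i ≠ j → ε ≤ dist (f i) (f j))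

/-- The separation constant of a node. -/
noncomputable def eps (N : Node X Y) : ℝ := (hch N).choose

lemma eps_pos (N : Node X Y) : 0 < eps hch N := (hch N).choose_spec.1

/-- The separated sequence of points inside a node's ball. -/
noncomputable def pt (N : Node X Y) : ℕ → X := (hch N).choose_spec.2.choose

lemma pt_mem (N : Node X Y) (i : ℕ) : pt hch N i ∈ ball N.1.1 N.1.2 ∩ Y :=
  (hch N).choose_spec.2.choose_spec.1 i

lemma pt_sep (N : Node X Y) {i j : ℕ} (hij : i ≠ j) :
    eps hch N ≤ dist (pt hch N i) (pt hch N j) :=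
  (hch N).choose_spec.2.choose_spec.2 i j hij

/-- The radii of the children balls. -/
noncomputable def rho (N : Node X Y) (i : ℕ) : ℝ :=
  min (eps hch N / 8) ((N.1.2 - dist (pt hch N i) N.1.1) / 2)

lemma rho_pos (N : Node X Y) (i : ℕ) : 0 < rho hch N i := by
  have h1 := eps_pos hch N
  have h2 : dist (pt hch N i) N.1.1 < N.1.2 := by
    have := (pt_mem hch N i).1; rwa [mem_ball] at this
  have : 0 < N.1.2 - dist (pt hch N i) N.1.1 := by linarith
  exact lt_min (by linarith) (by linarith)

lemma rho_le_eps (N : Node X Y) (i : ℕ) : rho hch N i ≤ eps hch N / 8 := min_le_left _ _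

lemma rho_le_half (N : Node X Y) (i : ℕ) : rho hch N i ≤ N.1.2 / 2 := by
  have h2 : 0 ≤ dist (pt hch N i) N.1.1 := dist_nonneg
  exact (min_le_right _ _).trans (by linarith)

lemma closedBall_child_subset (N : Node X Y) (i : ℕ) :
    closedBall (pt hch N i) (rho hch N i) ⊆ ball N.1.1 N.1.2 := by
  intro y hy
  rw [mem_closedBall] at hy
  rw [mem_ball]
  have h2 : dist (pt hch N i) N.1.1 < N.1.2 := by
    have := (pt_mem hch N i).1; rwa [mem_ball] at this
  have h3 : rho hch N i ≤ (N.1.2 - dist (pt hch N i) N.1.1) / 2 := min_le_right _ _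
  calc dist y N.1.1 ≤ dist y (pt hch N i) + dist (pt hch N i) N.1.1 := dist_triangle _ _ _
    _ < N.1.2 := by linarith

/-- The `i`-th child of a node. -/
noncomputable def child (N : Node X Y) (i : ℕ) : Node X Y :=
  ⟨(pt hch N i, rho hch N i), (pt_mem hch N i).2, rho_pos hch N i⟩

/-- The "escape" region of a node: closure of the union of the doubled children balls
with index at least `k`. -/
def D (N : Node X Y) (k : ℕ) : Set X :=
  closure (⋃ i ∈ {i : ℕ | k ≤ i}, ball (pt hch N i) (2 * rho hch N i))

lemma ball_subset_D (N : Node X Y) {k i : ℕ} (h : k ≤ i) :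
    ball (pt hch N i) (2 * rho hch N i) ⊆ D hch N k :=
  (subset_iUnion₂ (s := fun i _ => ball (pt hch N i) (2 * rho hch N i)) i h).trans
    subset_closure

/-- Every point eventually escapes the tail regions of a node. -/
lemma escape (N : Node X Y) (x : X) : ∃ k, x ∉ D hch N k := by
  by_contra hcon
  push_neg at hcon
  have hε := eps_pos hch N
  have h8 : 0 < eps hch N / 8 := by linarith
  obtain ⟨y₁, hy₁, hd₁⟩ := Metric.mem_closure_iff.1 (hcon 0) _ h8
  obtain ⟨i₁, hi₁, hyb₁⟩ := mem_iUnion₂.1 hy₁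
  obtain ⟨y₂, hy₂, hd₂⟩ := Metric.mem_closure_iff.1 (hcon (i₁ + 1)) _ h8
  obtain ⟨i₂, hi₂, hyb₂⟩ := mem_iUnion₂.1 hy₂
  simp only [mem_setOf_eq] at hi₁ hi₂
  have hne : i₁ ≠ i₂ := by omega
  have hsep := pt_sep hch N hne
  rw [mem_ball] at hyb₁ hyb₂
  have hr₁ : rho hch N i₁ ≤ eps hch N / 8 := rho_le_eps hch N i₁
  have hr₂ : rho hch N i₂ ≤ eps hch N / 8 := rho_le_eps hch N i₂
  have h4 : dist (pt hch N i₁) (pt hch N i₂) ≤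
      dist (pt hch N i₁) y₁ + dist y₁ y₂ + dist y₂ (pt hch N i₂) := dist_triangle4 _ _ _ _
  have h5 : dist y₁ y₂ ≤ dist y₁ x + dist x y₂ := dist_triangle _ _ _
  rw [dist_comm (pt hch N i₁) y₁] at h4
  rw [dist_comm y₁ x] at h5
  linarith

lemma sibling_disjoint (N : Node X Y) {i j : ℕ} (hij : i ≠ j) {z : X}
    (hi : z ∈ closedBall (pt hch N i) (rho hch N i))
    (hj : z ∈ closedBall (pt hch N j) (rho hch N j)) : False := by
  have hsep := pt_sep hch N hij
  rw [mem_closedBall] at hi hj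
  have hε := eps_pos hch N
  have h1 := rho_le_eps hch N i
  have h2 := rho_le_eps hch N j
  have h3 := dist_triangle (pt hch N i) z (pt hch N j)
  rw [dist_comm (pt hch N i) z] at h3
  linarith

variable (R : Node X Y)

/-- The tree of nodes, indexed by finite sequences of naturals. -/
noncomputable def node : List ℕ → Node X Y
  | [] => R
  | i :: s => child hch (node s) i

/-- The closed ball of a node of the tree. -/
noncomputable def cB (s : List ℕ) : Set X :=
  closedBall (node hch R s).1.1 (node hch R s).1.2

/-- The open ball of a node of the tree. -/
noncomputable def oB (s : List ℕ) : Set X :=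
  ball (node hch R s).1.1 (node hch R s).1.2

lemma oB_subset_cB (s : List ℕ) : oB hch R s ⊆ cB hch R s := ball_subset_closedBall

lemma cB_cons_subset (i : ℕ) (s : List ℕ) : cB hch R (i :: s) ⊆ oB hch R s :=
  closedBall_child_subset hch (node hch R s) i

lemma cB_cons_subset_D (i k : ℕ) (s : List ℕ) (hk : k ≤ i) :
    cB hch R (i :: s) ⊆ D hch (node hch R s) k := by
  refine subset_trans ?_ (ball_subset_D hch (node hch R s) hk)
  refine closedBall_subset_ball ?_
  have := rho_pos hch (node hch R s) i
  show (node hch R (i :: s)).1.2 < 2 * rho hch (node hch R s) i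
  show rho hch (node hch R s) i < 2 * rho hch (node hch R s) i
  linarith

lemma level_disjoint : ∀ (n : ℕ) {s t : List ℕ}, s.length = n → t.length = n → s ≠ t →
    ∀ z, z ∈ cB hch R s → z ∈ cB hch R t → False := by
  intro n
  induction n with
  | zero =>
    intro s t hs ht hst
    rw [List.length_eq_zero_iff] at hs ht
    exact absurd (hs.trans ht.symm) hst
  | succ n ih =>
    intro s t hs ht hst z hzs hzt
    rcases s with _ | ⟨i, s⟩; · simp at hs
    rcases t with _ | ⟨j, t⟩; · simp at ht
    simp only [List.length_cons, Nat.add_right_cancel_iff] at hs ht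
    by_cases hst' : s = t
    · subst hst'
      have hij : i ≠ j := fun h => hst (by rw [h])
      exact sibling_disjoint hch (node hch R s) hij hzs hzt
    · exact ih hs ht hst' z (oB_subset_cB hch R s (cB_cons_subset hch R i s hzs))
        (oB_subset_cB hch R t (cB_cons_subset hch R j t hzt))

/-- Local finiteness of the levels of the tree. -/
lemma level_locallyFinite (n : ℕ) (x : X) :
    ∃ U : Set X, IsOpen U ∧ x ∈ U ∧
      {s : List ℕ | s.length = n ∧ (cB hch R s ∩ U).Nonempty}.Finite := by
  induction n generalizing x with
  | zero =>
    exact ⟨univ, isOpen_univ, mem_univ x, (finite_singleton ([] : List ℕ)).subset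
      (fun s hs => by
        have h1 := hs.1; rwa [List.length_eq_zero_iff] at h1)⟩
  | succ n ih =>
    obtain ⟨U, hUo, hxU, hfin⟩ := ih x
    set T := {s : List ℕ | s.length = n ∧ (cB hch R s ∩ U).Nonempty} with hT
    have hk : ∀ s : List ℕ, ∃ k, x ∉ D hch (node hch R s) k := fun s => escape hch _ x
    choose k hk using hk
    refine ⟨U ∩ ⋂ s ∈ T, (D hch (node hch R s) (k s))ᶜ,
      hUo.inter (hfin.isOpen_biInter fun s _ => (isClosed_closure).isOpen_compl),
      ⟨hxU, mem_iInter₂.2 fun s _ => hk s⟩, ?_⟩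
    have hsub : {s : List ℕ | s.length = n + 1 ∧
        (cB hch R s ∩ (U ∩ ⋂ s ∈ T, (D hch (node hch R s) (k s))ᶜ)).Nonempty} ⊆
        ⋃ s ∈ T, (fun i => i :: s) '' {i : ℕ | i < k s} := by
      rintro t ⟨htlen, z, hz1, hz2, hz3⟩
      rcases t with _ | ⟨i, s⟩; · simp at htlen
      simp only [List.length_cons, Nat.add_right_cancel_iff] at htlen
      have hsT : s ∈ T := ⟨htlen, z,
        oB_subset_cB hch R s (cB_cons_subset hch R i s hz1), hz2⟩
      have hzD := mem_iInter₂.1 hz3 s hsT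
      have hik : i < k s := by
        by_contra hik
        exact hzD (cB_cons_subset_D hch R i (k s) s (le_of_not_gt hik) hz1)
      exact mem_biUnion hsT ⟨i, hik, rfl⟩
    exact ((hfin.biUnion fun s _ => (finite_Iio (k s)).image _).subset hsub)

/-- The union of closed balls at a given level of the tree. -/
noncomputable def levC (m : ℕ) : Set X :=
  ⋃ s ∈ {s : List ℕ | s.length = m}, cB hch R s

lemma levC_closed (m : ℕ) : IsClosed (levC hch R m) := by
  have : levC hch R m = ⋃ s : {s : List ℕ // s ∈ {s : List ℕ | s.length = m}},
      cB hch R s.1 := by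
    rw [levC, biUnion_eq_iUnion]
  rw [this]
  refine LocallyFinite.isClosed_iUnion ?_ (fun s => isClosed_closedBall)
  intro x
  obtain ⟨U, hUo, hxU, hfin⟩ := level_locallyFinite hch R m x
  refine ⟨U, hUo.mem_nhds hxU, ?_⟩
  have : {s : {s : List ℕ // s ∈ {s : List ℕ | s.length = m}} |
      (cB hch R s.1 ∩ U).Nonempty} ⊆
      Subtype.val ⁻¹' {s : List ℕ | s.length = m ∧ (cB hch R s ∩ U).Nonempty} :=
    fun s hs => ⟨s.2, hs⟩
  exact (hfin.preimage (Subtype.val_injective.injOn)).subset this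

end Tree

/-- The main theorem, metric version: a complete Menger metric space is σ-compact. -/
theorem sigmaCompactSpace_of_menger [CompleteSpace X] (hM : MengerSpace X) :
    SigmaCompactSpace X := by
  classical
  haveI := lindelofSpace_of_menger hM
  rcases eq_empty_or_nonempty (Ybad X) with hY | ⟨x₀, hx₀⟩
  · obtain ⟨S, hS, hsub⟩ := compl_Ybad_subset (X := X)
    have hSuniv : S = univ := eq_univ_of_univ_subset (by rw [← compl_empty, ← hY]; exact hsub)
    exact isSigmaCompact_univ_iff.mp (hSuniv ▸ hS)
  · exfalso
    have hch : ∀ N : Node X (Ybad X), ∃ ε > (0:ℝ), ∃ f : ℕ → X,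
        (∀ i, f i ∈ ball N.1.1 N.1.2 ∩ Ybad X) ∧ ∀ i j, i ≠ j → ε ≤ dist (f i) (f j) :=
      fun N => exists_separated_seq (not_totallyBounded N.2.1 N.2.2)
    set R : Node X (Ybad X) := ⟨(x₀, 1), hx₀, one_pos⟩ with hR
    set 𝒰 : ℕ → Set (Set X) := fun n =>
      {u | (∃ s : List ℕ, ∃ k : ℕ, s.length = n ∧
        u = oB hch R s \ D hch (node hch R s) k) ∨ u = (levC hch R (n+1))ᶜ} with h𝒰
    have hU : ∀ n, (∀ u ∈ 𝒰 n, IsOpen u) ∧ ⋃₀ 𝒰 n = univ := by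
      intro n
      constructor
      · rintro u (⟨s, k, hslen, rfl⟩ | rfl)
        · exact isOpen_ball.sdiff isClosed_closure
        · exact (levC_closed hch R (n+1)).isOpen_compl
      · refine eq_univ_of_forall fun x => ?_
        by_cases hx : x ∈ levC hch R (n+1)
        · obtain ⟨t, htlen, hxt⟩ := mem_iUnion₂.1 hx
          rcases t with _ | ⟨i, s⟩
          · simp at htlen
          · simp only [mem_setOf_eq, List.length_cons, Nat.add_right_cancel_iff] at htlen
            obtain ⟨k, hk⟩ := escape hch (node hch R s) x
            exact ⟨oB hch R s \ D hch (node hch R s) k, Or.inl ⟨s, k, htlen, rfl⟩,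
              cB_cons_subset hch R i s hxt, hk⟩
        · exact ⟨(levC hch R (n+1))ᶜ, Or.inr rfl, hx⟩
    obtain ⟨F, hF, hcov⟩ := hM 𝒰 hU
    -- the bound extracted from the finite selection at stage n for node s
    set bnd : ℕ → List ℕ → ℕ := fun n s => (hF n).2.toFinset.sup
      (fun u => if h : ∃ k, u = oB hch R s \ D hch (node hch R s) k then Nat.find h else 0)
      with hbnd
    -- the branch
    set σ : ℕ → List ℕ := fun n => Nat.rec [] (fun m sm => bnd m sm :: sm) n with hσ
    have hσsucc : ∀ n, σ (n + 1) = bnd n (σ n) :: σ n := fun n => rfl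
    have hσlen : ∀ n, (σ n).length = n := by
      intro n; induction n with
      | zero => rfl
      | succ n ih => rw [hσsucc]; simp [ih]
    -- radii decay
    have hr : ∀ n, (node hch R (σ n)).1.2 ≤ (1/2) ^ n := by
      intro n; induction n with
      | zero => show (node hch R []).1.2 ≤ (1/2)^0; norm_num [hR, node]
      | succ n ih =>
        rw [hσsucc]
        have h1 : (node hch R (bnd n (σ n) :: σ n)).1.2 ≤ (node hch R (σ n)).1.2 / 2 :=
          rho_le_half hch (node hch R (σ n)) _
        calc (node hch R (bnd n (σ n) :: σ n)).1.2 ≤ (node hch R (σ n)).1.2 / 2 := h1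
          _ ≤ (1/2) ^ n / 2 := by linarith
          _ = (1/2) ^ (n+1) := by ring
    -- the sequence of centers and its limit
    set seq : ℕ → X := fun n => (node hch R (σ n)).1.1 with hseq
    have hmemcons : ∀ n, seq (n+1) ∈ oB hch R (σ n) := by
      intro n
      show (node hch R (σ (n+1))).1.1 ∈ oB hch R (σ n)
      rw [hσsucc n]
      exact (pt_mem hch (node hch R (σ n)) (bnd n (σ n))).1
    have hcauchy : CauchySeq seq := by
      refine cauchySeq_of_le_geometric (1/2) 1 (by norm_num) fun n => ?_
      have h1 := hmemcons n
      rw [oB, mem_ball] at h1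
      rw [dist_comm]
      calc dist (seq (n+1)) (seq n) ≤ (node hch R (σ n)).1.2 := (le_of_lt h1)
        _ ≤ 1 * (1/2)^n := by rw [one_mul]; exact hr n
    obtain ⟨φ, hφ⟩ := cauchySeq_tendsto_of_complete hcauchy
    -- chain of closed balls
    have hchain : ∀ n m, n ≤ m → cB hch R (σ m) ⊆ cB hch R (σ n) := by
      intro n m hnm
      induction m with
      | zero => rw [Nat.le_zero.1 hnm]
      | succ m ih =>
        rcases Nat.le_succ_iff.1 hnm with h' | h'
        · refine subset_trans ?_ (ih h')
          rw [hσsucc]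
          exact (cB_cons_subset hch R _ _).trans (oB_subset_cB hch R _)
        · rw [h']
    have hseqmem : ∀ n m, n ≤ m → seq m ∈ cB hch R (σ n) := by
      intro n m hnm
      refine hchain n m hnm ?_
      exact mem_closedBall_self (le_of_lt (node hch R (σ m)).2.2)
    have hφmem : ∀ n, φ ∈ cB hch R (σ n) := by
      intro n
      refine isClosed_closedBall.mem_of_tendsto hφ ?_
      exact Filter.eventually_atTop.2 ⟨n, fun m hm => hseqmem n m hm⟩
    have hφD : ∀ n k, k ≤ bnd n (σ n) → φ ∈ D hch (node hch R (σ n)) k := by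
      intro n k hk
      have h1 := hφmem (n+1)
      rw [hσsucc] at h1
      exact cB_cons_subset_D hch R _ k _ hk h1
    -- the limit point φ is not covered by the selection, a contradiction
    have hφcov : φ ∈ ⋃ n, ⋃₀ F n := hcov ▸ mem_univ φ
    obtain ⟨_, ⟨n, rfl⟩, u, huF, hφu⟩ := hφcov
    rcases (hF n).1 huF with ⟨s, k, hslen, rfl⟩ | rfl
    · by_cases hss : s = σ n
      · subst hss
        have hex : ∃ k', oB hch R (σ n) \ D hch (node hch R (σ n)) k =
            oB hch R (σ n) \ D hch (node hch R (σ n)) k' := ⟨k, rfl⟩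
        have hle : Nat.find hex ≤ bnd n (σ n) := by
          have hmem : (oB hch R (σ n) \ D hch (node hch R (σ n)) k) ∈ (hF n).2.toFinset :=
            (hF n).2.mem_toFinset.mpr huF
          have := Finset.le_sup (f := fun u => if h : ∃ k', u = oB hch R (σ n) \
            D hch (node hch R (σ n)) k' then Nat.find h else 0) hmem
          simp only [dif_pos hex] at this
          exact this
        have hfind := Nat.find_spec hex
        rw [hfind] at hφu
        exact hφu.2 (hφD n (Nat.find hex) hle)
      · exact level_disjoint hch R n hslen (hσlen n) hss φ
          (oB_subset_cB hch R s hφu.1) (hφmem n)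
    · refine hφu (mem_iUnion₂.2 ⟨σ (n+1), hσlen (n+1), hφmem (n+1)⟩)

end MengerSigma

/-- Every completely metrizable topological space with the Menger property is
σ-compact. -/
theorem menger_completelyMetrizable_sigmaCompact (X : Type*) [t : TopologicalSpace X]
    (hmetr : ∃ m : MetricSpace X,
      m.toUniformSpace.toTopologicalSpace = t ∧ @CompleteSpace X m.toUniformSpace)
    (hMenger : MengerSpace X) :
    SigmaCompactSpace X := by
  obtain ⟨m, hm, hc⟩ := hmetr
  subst hm
  letI : MetricSpace X := m
  haveI : CompleteSpace X := hc
  exact MengerSigma.sigmaCompactSpace_of_menger hMenger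
end

section
/- Every analytic subspace of a Polish space that has the Menger property is σ-compact. -/
open Filter Set Topology Metric

namespace MengerAux

/-! ### Reversed prefixes of elements of `ℕ → ℕ` -/

/-- The reversed prefix of length `n` of `σ`. -/
def rp (σ : ℕ → ℕ) : ℕ → List ℕ
  | 0 => []
  | n + 1 => σ n :: rp σ n

@[simp] lemma rp_zero (σ : ℕ → ℕ) : rp σ 0 = [] := rfl

@[simp] lemma rp_succ (σ : ℕ → ℕ) (n : ℕ) : rp σ (n + 1) = σ n :: rp σ n := rfl

@[simp] lemma rp_length (σ : ℕ → ℕ) (n : ℕ) : (rp σ n).length = n := by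
  induction n with
  | zero => rfl
  | succ n ih => simp [ih]

lemma rp_eq_iff {σ τ : ℕ → ℕ} {n : ℕ} : rp σ n = rp τ n ↔ ∀ i < n, σ i = τ i := by
  induction n with
  | zero => simp
  | succ n ih =>
    simp only [rp_succ, List.cons.injEq]
    constructor
    · rintro ⟨h1, h2⟩ i hi
      rcases Nat.lt_succ_iff_lt_or_eq.mp hi with h | rfl
      · exact ih.mp h2 i h
      · exact h1
    · intro h
      exact ⟨h n (Nat.lt_succ_self n), ih.mpr fun i hi => h i (hi.trans (Nat.lt_succ_self n))⟩

lemma rp_suffix (σ : ℕ → ℕ) {m n : ℕ} (h : m ≤ n) : rp σ m <:+ rp σ n := by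
  induction n with
  | zero =>
    have : m = 0 := Nat.le_zero.mp h
    subst this
    exact List.suffix_rfl
  | succ n ih =>
    rcases Nat.lt_succ_iff_lt_or_eq.mp (Nat.lt_succ_of_le h) with h' | rfl
    · exact (ih (Nat.lt_succ_iff.mp h')).trans (List.suffix_cons _ _)
    · exact List.suffix_rfl

lemma rp_agree_mono {σ τ : ℕ → ℕ} {m n : ℕ} (h : rp σ n = rp τ n) (hm : m ≤ n) :
    rp σ m = rp τ m :=
  rp_eq_iff.mpr fun i hi => rp_eq_iff.mp h i (lt_of_lt_of_le hi hm)

/-- The cylinder determined by a finite (reversed) sequence. -/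
def cyl (l : List ℕ) : Set (ℕ → ℕ) := {σ | rp σ l.length = l}

lemma mem_cyl {l : List ℕ} {σ : ℕ → ℕ} : σ ∈ cyl l ↔ rp σ l.length = l := Iff.rfl

lemma mem_cyl_rp (σ : ℕ → ℕ) (n : ℕ) : σ ∈ cyl (rp σ n) := by
  simp [mem_cyl]

/-- The canonical extension of a finite sequence to an infinite one. -/
def extFun (l : List ℕ) : ℕ → ℕ := fun i => l.reverse.getD i 0

lemma suffix_rev_getD {l1 l2 : List ℕ} (h : l1 <:+ l2) {i : ℕ} (hi : i < l1.length) :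
    l2.reverse.getD i 0 = l1.reverse.getD i 0 := by
  obtain ⟨t, rfl⟩ := h
  rw [List.reverse_append, List.getD_append]
  simpa using hi

lemma rp_extFun (l : List ℕ) : rp (extFun l) l.length = l := by
  induction l with
  | nil => rfl
  | cons a t ih =>
    show rp (extFun (a :: t)) (t.length + 1) = a :: t
    rw [rp_succ]
    have h1 : extFun (a :: t) t.length = a := by
      simp only [extFun, List.reverse_cons]
      rw [List.getD_append_right] <;> simp
    have h2 : rp (extFun (a :: t)) t.length = t := by
      have : rp (extFun (a :: t)) t.length = rp (extFun t) t.length := by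
        refine rp_eq_iff.mpr fun i hi => ?_
        simp only [extFun, List.reverse_cons]
        rw [List.getD_append]
        simpa using hi
      rw [this, ih]
    rw [h1, h2]

lemma extFun_mem_cyl (l : List ℕ) : extFun l ∈ cyl l := rp_extFun l

lemma rp_eq_list {σ : ℕ → ℕ} {l : List ℕ}
    (h : ∀ i, i < l.length → σ i = l.reverse.getD i 0) : rp σ l.length = l := by
  have : rp σ l.length = rp (extFun l) l.length :=
    rp_eq_iff.mpr fun i hi => h i hi
  rw [this, rp_extFun]

lemma isOpen_coord_eq (i v : ℕ) : IsOpen {σ : ℕ → ℕ | σ i = v} := by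
  have : {σ : ℕ → ℕ | σ i = v} = (fun σ : ℕ → ℕ => σ i) ⁻¹' {v} := rfl
  rw [this]
  exact (continuous_apply i).isOpen_preimage _ (isOpen_discrete _)

lemma isOpen_rp_set (n : ℕ) (t : List ℕ) : IsOpen {σ : ℕ → ℕ | rp σ n = t} := by
  by_cases h : t.length = n
  · subst h
    have : {σ : ℕ → ℕ | rp σ t.length = t} = ⋂ i ∈ {i | i < t.length}, {σ : ℕ → ℕ | σ i = extFun t i} := by
      ext σ
      simp only [mem_setOf_eq, mem_iInter]
      constructor
      · intro hσ i hi
        have := rp_eq_iff.mp (hσ.trans (rp_extFun t).symm)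
        exact this i hi
      · intro h'
        have : rp σ t.length = rp (extFun t) t.length := rp_eq_iff.mpr fun i hi => h' i hi
        rw [this, rp_extFun]
    rw [this]
    exact (Set.finite_Iio t.length).isOpen_biInter fun i _ => isOpen_coord_eq i (extFun t i)
  · have : {σ : ℕ → ℕ | rp σ n = t} = ∅ := by
      ext σ
      simp only [mem_setOf_eq, mem_empty_iff_false, iff_false]
      intro hσ
      exact h (by rw [← hσ, rp_length])
    rw [this]
    exact isOpen_empty


lemma isOpen_cyl (l : List ℕ) : IsOpen (cyl l) := isOpen_rp_set l.length l

lemma cyl_mono {l1 l2 : List ℕ} (h : l1 <:+ l2) : cyl l2 ⊆ cyl l1 := by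
  intro σ hσ
  have h1 : rp σ l1.length <:+ rp σ l2.length := rp_suffix σ h.length_le
  rw [hσ] at h1
  have h2 := h
  obtain ⟨t1, ht1⟩ := h1
  obtain ⟨t2, ht2⟩ := h2
  have hlen : t1.length = t2.length := by
    have e1 := congrArg List.length ht1
    have e2 := congrArg List.length ht2
    simp only [List.length_append, rp_length] at e1 e2
    omega
  have : t1 ++ rp σ l1.length = t2 ++ l1 := by rw [ht1, ht2]
  have := List.append_inj_right this hlen
  exact this

/-- Basic neighborhoods in the product space are cylinders. -/
lemma exists_rp_subset {U : Set (ℕ → ℕ)} (hU : IsOpen U) {σ : ℕ → ℕ} (hσ : σ ∈ U) :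
    ∃ n, {τ | rp τ n = rp σ n} ⊆ U := by
  obtain ⟨I, u, hu, hsub⟩ := isOpen_pi_iff.mp hU σ hσ
  refine ⟨(I.sup id) + 1, fun τ hτ => hsub ?_⟩
  intro i hi
  have hiI : i ∈ I := hi
  have : i < I.sup id + 1 := Nat.lt_succ_of_le (Finset.le_sup (f := id) hiI)
  have := rp_eq_iff.mp hτ i this
  rw [this]
  exact (hu i hiI).2

/-! ### Generic recursion helpers -/

lemma rec_subseq {r : ℕ → ℕ → Prop} (h : ∀ j, ∃ j', j < j' ∧ r j j') (j0 : ℕ) :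
    ∃ φ : ℕ → ℕ, φ 0 = j0 ∧ StrictMono φ ∧ ∀ i, r (φ i) (φ (i + 1)) := by
  let φ : ℕ → ℕ := fun n => Nat.rec j0 (fun _ p => (h p).choose) n
  have hstep : ∀ i, φ (i + 1) = (h (φ i)).choose := fun i => rfl
  refine ⟨φ, rfl, strictMono_nat_of_lt_succ fun n => ?_, fun i => ?_⟩
  · rw [hstep]; exact (h (φ n)).choose_spec.1
  · rw [hstep]; exact (h (φ i)).choose_spec.2

lemma injective_unbounded {k : ℕ → ℕ} (hk : Function.Injective k) (N M : ℕ) :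
    ∃ j, M < j ∧ N < k j := by
  have hfin : ({j | k j ≤ N} ∪ {j | j ≤ M}).Finite := by
    refine Set.Finite.union ?_ (Set.finite_Iic M)
    exact Set.Finite.preimage hk.injOn (Set.finite_Iic N)
  obtain ⟨j, hj⟩ := hfin.infinite_compl.nonempty
  simp only [mem_compl_iff, mem_union, mem_setOf_eq, not_or, not_le] at hj
  exact ⟨j, hj.2, hj.1⟩

lemma exists_strictMono_both {k : ℕ → ℕ} (hk : Function.Injective k) :
    ∃ φ : ℕ → ℕ, StrictMono φ ∧ StrictMono (k ∘ φ) := by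
  obtain ⟨φ, -, hφ, hr⟩ := rec_subseq (r := fun j j' => k j < k j')
    (fun j => by
      obtain ⟨j', h1, h2⟩ := injective_unbounded hk (k j) j
      exact ⟨j', h1, h2⟩) 0
  exact ⟨φ, hφ, strictMono_nat_of_lt_succ hr⟩

/-! ### Menger property lemmas -/

theorem menger_closed {Y : Type*} [TopologicalSpace Y] (hM : MengerSpace Y) (F : Set Y)
    (hF : IsClosed F) : MengerSpace ↥F := by
  intro 𝒰 h𝒰
  set 𝒱 : ℕ → Set (Set Y) := fun n =>
    {U | IsOpen U ∧ (Subtype.val ⁻¹' U) ∈ 𝒰 n} ∪ {Fᶜ} with h𝒱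
  have h𝒱p : ∀ n, (∀ s ∈ 𝒱 n, IsOpen s) ∧ ⋃₀ 𝒱 n = Set.univ := by
    intro n
    constructor
    · rintro s (hs | hs)
      · exact hs.1
      · simp only [mem_singleton_iff] at hs
        rw [hs]; exact hF.isOpen_compl
    · rw [eq_univ_iff_forall]
      intro y
      by_cases hy : y ∈ F
      · have : (⟨y, hy⟩ : ↥F) ∈ ⋃₀ 𝒰 n := by rw [(h𝒰 n).2]; trivial
        obtain ⟨U', hU', hyU'⟩ := this
        obtain ⟨t, ht, htU'⟩ := isOpen_induced_iff.mp ((h𝒰 n).1 U' hU')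
        refine ⟨t, Or.inl ⟨ht, by rw [htU']; exact hU'⟩, ?_⟩
        have : (⟨y, hy⟩ : ↥F) ∈ Subtype.val ⁻¹' t := by rw [htU']; exact hyU'
        exact this
      · exact ⟨Fᶜ, Or.inr rfl, hy⟩
  obtain ⟨ℱ, hℱ, hcov⟩ := hM 𝒱 h𝒱p
  refine ⟨fun n => (fun U => Subtype.val ⁻¹' U) '' {U ∈ ℱ n | (Subtype.val ⁻¹' U) ∈ 𝒰 n},
    fun n => ⟨?_, ?_⟩, ?_⟩
  · rintro _ ⟨U, hU, rfl⟩
    exact hU.2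
  · exact Set.Finite.image _ (((hℱ n).2).subset (sep_subset _ _))
  · rw [eq_univ_iff_forall]
    rintro ⟨y, hy⟩
    have : y ∈ ⋃ n, ⋃₀ ℱ n := by rw [hcov]; trivial
    obtain ⟨S, ⟨n, rfl⟩, U, hUℱ, hyU⟩ := this
    have hU𝒱 := (hℱ n).1 hUℱ
    rcases hU𝒱 with hU | hU
    · refine mem_iUnion.mpr ⟨n, ⟨Subtype.val ⁻¹' U, ⟨U, ⟨hUℱ, hU.2⟩, rfl⟩, hyU⟩⟩
    · simp only [mem_singleton_iff] at hU
      rw [hU] at hyU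
      exact absurd hy hyU

theorem menger_image {Y Z : Type*} [TopologicalSpace Y] [TopologicalSpace Z] (hM : MengerSpace Y)
    {h : Y → Z} (hc : Continuous h) (hs : Function.Surjective h) : MengerSpace Z := by
  intro 𝒰 h𝒰
  set 𝒱 : ℕ → Set (Set Y) := fun n => (fun U => h ⁻¹' U) '' 𝒰 n with h𝒱
  have h𝒱p : ∀ n, (∀ s ∈ 𝒱 n, IsOpen s) ∧ ⋃₀ 𝒱 n = Set.univ := by
    intro n
    constructor
    · rintro _ ⟨U, hU, rfl⟩
      exact (h𝒰 n).1 U hU |>.preimage hc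
    · rw [eq_univ_iff_forall]
      intro y
      have : h y ∈ ⋃₀ 𝒰 n := by rw [(h𝒰 n).2]; trivial
      obtain ⟨U, hU, hyU⟩ := this
      exact ⟨h ⁻¹' U, ⟨U, hU, rfl⟩, hyU⟩
  obtain ⟨ℱ, hℱ, hcov⟩ := hM 𝒱 h𝒱p
  refine ⟨fun n => {U ∈ 𝒰 n | h ⁻¹' U ∈ ℱ n}, fun n => ⟨sep_subset _ _, ?_⟩, ?_⟩
  · have : {U ∈ 𝒰 n | h ⁻¹' U ∈ ℱ n} ⊆ (fun U => h ⁻¹' U) ⁻¹' (ℱ n) := fun U hU => hU.2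
    exact Set.Finite.subset (Set.Finite.preimage (hs.preimage_injective.injOn) ((hℱ n).2)) this
  · rw [eq_univ_iff_forall]
    intro z
    obtain ⟨y, rfl⟩ := hs z
    have : y ∈ ⋃ n, ⋃₀ ℱ n := by rw [hcov]; trivial
    obtain ⟨S, ⟨n, rfl⟩, V, hVℱ, hyV⟩ := this
    obtain ⟨U, hU𝒰, rfl⟩ := (hℱ n).1 hVℱ
    exact mem_iUnion.mpr ⟨n, ⟨U, ⟨hU𝒰, hVℱ⟩, hyV⟩⟩

theorem not_menger_baire : ¬ MengerSpace (ℕ → ℕ) := by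
  intro hM
  set U : ℕ → ℕ → Set (ℕ → ℕ) := fun n j => {σ | σ n ≤ j} with hU
  have hUinj : ∀ n, Function.Injective (U n) := by
    intro n j j' hjj'
    have h1 : (fun _ => j : ℕ → ℕ) ∈ U n j := le_refl j
    have h2 : (fun _ => j' : ℕ → ℕ) ∈ U n j' := le_refl j'
    rw [hjj'] at h1
    rw [← hjj'] at h2
    exact le_antisymm h1 h2
  obtain ⟨ℱ, hℱ, hcov⟩ := hM (fun n => Set.range (U n)) (by
    intro n
    refine ⟨?_, ?_⟩
    · rintro _ ⟨j, rfl⟩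
      have : U n j = (fun σ : ℕ → ℕ => σ n) ⁻¹' (Set.Iic j) := rfl
      rw [this]
      exact (continuous_apply n).isOpen_preimage _ (isOpen_discrete _)
    · rw [eq_univ_iff_forall]
      intro σ
      exact ⟨U n (σ n), ⟨σ n, rfl⟩, show σ n ≤ σ n from le_refl _⟩)
  set T : ℕ → Set ℕ := fun n => {j | U n j ∈ ℱ n} with hT
  have hTfin : ∀ n, (T n).Finite := by
    intro n
    exact Set.Finite.preimage ((hUinj n).injOn) ((hℱ n).2)
  set b : ℕ → ℕ := fun n => sSup (T n) with hb
  have hble : ∀ n, ∀ j ∈ T n, j ≤ b n := fun n j hj => le_csSup ((hTfin n).bddAbove) hj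
  have : (fun n => b n + 1) ∈ ⋃ n, ⋃₀ ℱ n := by rw [hcov]; trivial
  obtain ⟨S, ⟨n, rfl⟩, V, hVℱ, hyV⟩ := this
  obtain ⟨j, rfl⟩ := (hℱ n).1 hVℱ
  have hjT : j ∈ T n := hVℱ
  have : b n + 1 ≤ j := hyV
  have := hble n j hjT
  omega

/-- A product of bounded intervals in `ℕ → ℕ` is compact. -/
lemma compact_pi (g : ℕ → ℕ) : IsCompact {σ : ℕ → ℕ | ∀ n, σ n ≤ g n} := by
  have : {σ : ℕ → ℕ | ∀ n, σ n ≤ g n} = Set.pi Set.univ (fun n => Set.Iic (g n)) := by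
    ext σ; simp [Set.mem_pi]; rfl
  rw [this]
  exact isCompact_univ_pi fun n => (Set.finite_Iic (g n)).isCompact

end MengerAux
namespace MengerAux

/-- Dichotomy for a sequence in Baire space: either it is pointwise bounded, or
some node splits into infinitely many occupied children. -/
theorem occupied_dichotomy (σ : ℕ → (ℕ → ℕ)) :
    (∃ g : ℕ → ℕ, ∀ k n, σ k n ≤ g n) ∨
    (∃ s : List ℕ, ∃ m k : ℕ → ℕ, StrictMono m ∧ StrictMono k ∧
      ∀ j, rp (σ (k j)) (s.length + 1) = m j :: s) := by
  by_cases H : ∃ s : List ℕ, {v | ∃ i, rp (σ i) (s.length + 1) = v :: s}.Infinite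
  · right
    obtain ⟨s, hs⟩ := H
    set V := {v | ∃ i, rp (σ i) (s.length + 1) = v :: s} with hV
    obtain ⟨v0, hv0⟩ := hs.nonempty
    obtain ⟨m, hm0, hmmono, hmr⟩ := rec_subseq (r := fun _ v' => v' ∈ V)
      (fun v => by
        obtain ⟨v', hv', hlt⟩ := hs.exists_gt v
        exact ⟨v', hlt, hv'⟩) v0
    have hmV : ∀ i, m i ∈ V := by
      intro i
      cases i with
      | zero => rw [hm0]; exact hv0
      | succ i => exact hmr i
    set w : ℕ → ℕ := fun j => (hmV j).choose with hw
    have hwspec : ∀ j, rp (σ (w j)) (s.length + 1) = m j :: s := fun j => (hmV j).choose_spec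
    have hwinj : Function.Injective w := by
      intro j j' hjj'
      have : m j :: s = m j' :: s := by rw [← hwspec j, ← hwspec j', hjj']
      exact hmmono.injective (List.cons.inj this).1
    obtain ⟨φ, hφ, hwφ⟩ := exists_strictMono_both hwinj
    exact ⟨s, m ∘ φ, w ∘ φ, hmmono.comp hφ, hwφ, fun j => hwspec (φ j)⟩
  · left
    push_neg at H
    have hO : ∀ n, (Set.range fun i => rp (σ i) n).Finite := by
      intro n
      induction n with
      | zero =>
        refine Set.Finite.subset (Set.finite_singleton ([] : List ℕ)) ?_
        rintro _ ⟨i, rfl⟩; simp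
      | succ n ih =>
        have hsub : (Set.range fun i => rp (σ i) (n + 1)) ⊆
            ⋃ t ∈ (Set.range fun i => rp (σ i) n),
              (fun v => v :: t) '' {v | ∃ i, rp (σ i) (t.length + 1) = v :: t} := by
          rintro _ ⟨i, rfl⟩
          refine Set.mem_biUnion ⟨i, rfl⟩ ?_
          exact ⟨σ i n, ⟨i, by simp⟩, rfl⟩
        refine Set.Finite.subset (Set.Finite.biUnion ih fun t _ => Set.Finite.image _ (H t)) hsub
    have hSfin : ∀ n, (Set.range fun i => σ i n).Finite := by
      intro n
      have hsub : (Set.range fun i => σ i n) ⊆ (fun t : List ℕ => t.headD 0) ''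
          (Set.range fun i => rp (σ i) (n + 1)) := by
        rintro _ ⟨i, rfl⟩
        exact ⟨rp (σ i) (n + 1), ⟨i, rfl⟩, rfl⟩
      exact Set.Finite.subset (Set.Finite.image _ (hO (n + 1))) hsub
    refine ⟨fun n => sSup (Set.range fun i => σ i n), fun k n => ?_⟩
    exact le_csSup ((hSfin n).bddAbove) ⟨k, rfl⟩

end MengerAux
set_option linter.unusedSectionVars false

namespace MengerAux

variable {X : Type*} [MetricSpace X] [CompleteSpace X]

/-- `S` is covered by countably many compact subsets of `range f`. -/
def SigCov (f : (ℕ → ℕ) → X) (S : Set X) : Prop :=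
  ∃ K : ℕ → Set X, (∀ n, IsCompact (K n) ∧ K n ⊆ Set.range f) ∧ S ⊆ ⋃ n, K n

lemma sigCov_mono {f : (ℕ → ℕ) → X} {S T : Set X} (hST : S ⊆ T) (h : SigCov f T) :
    SigCov f S := by
  obtain ⟨K, hK, hsub⟩ := h
  exact ⟨K, hK, hST.trans hsub⟩

lemma sigCov_empty (f : (ℕ → ℕ) → X) : SigCov f ∅ :=
  ⟨fun _ => ∅, fun _ => ⟨isCompact_empty, empty_subset _⟩, empty_subset _⟩

lemma sigCov_iUnion {f : (ℕ → ℕ) → X} {ι : Type*} [Countable ι] {T : ι → Set X}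
    (h : ∀ i, SigCov f (T i)) : SigCov f (⋃ i, T i) := by
  rcases isEmpty_or_nonempty ι with hι | hι
  · rw [iUnion_of_empty]; exact sigCov_empty f
  · obtain ⟨ρ, hρ⟩ := exists_surjective_nat ι
    choose K hK hsub using h
    refine ⟨fun n => K (ρ (Nat.unpair n).1) (Nat.unpair n).2,
      fun n => hK _ _, ?_⟩
    rintro x hx
    obtain ⟨S, ⟨i, rfl⟩, hxS⟩ := hx
    obtain ⟨a, rfl⟩ := hρ i
    obtain ⟨S', ⟨m, rfl⟩, hxm⟩ := hsub _ hxS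
    exact mem_iUnion.mpr ⟨Nat.pair a m, by rw [Nat.unpair_pair]; exact hxm⟩

lemma sigCov_union {f : (ℕ → ℕ) → X} {S T : Set X} (hS : SigCov f S) (hT : SigCov f T) :
    SigCov f (S ∪ T) := by
  have : S ∪ T = ⋃ b : Bool, (bif b then S else T) := by
    ext x; simp [Bool.exists_bool, or_comm]
  rw [this]
  exact sigCov_iUnion fun b => by cases b <;> simpa

/-- A node of the tree is *large* if its image cannot be covered by countably many
compact subsets of `range f`. -/
def Lg (f : (ℕ → ℕ) → X) (l : List ℕ) : Prop := ¬ SigCov f (f '' cyl l)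

/-- The set of branches through `p` all of whose nodes are large. -/
def branchSet (f : (ℕ → ℕ) → X) (p : List ℕ) : Set (ℕ → ℕ) :=
  {σ | σ ∈ cyl p ∧ ∀ n, Lg f (rp σ n)}

lemma absorb {f : (ℕ → ℕ) → X} {p : List ℕ} (hp : Lg f p) :
    ¬ SigCov f (f '' branchSet f p) := by
  classical
  intro hSC
  apply hp
  have hsmall : ∀ l : List ℕ, SigCov f (if Lg f l then ∅ else f '' cyl l) := by
    intro l
    by_cases h : Lg f l
    · rw [if_pos h]; exact sigCov_empty f
    · rw [if_neg h]; exact not_not.mp h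
  have hincl : f '' cyl p ⊆ f '' branchSet f p ∪
      ⋃ l : List ℕ, (if Lg f l then ∅ else f '' cyl l) := by
    rintro _ ⟨σ, hσ, rfl⟩
    by_cases hb : ∀ n, Lg f (rp σ n)
    · exact Or.inl ⟨σ, ⟨hσ, hb⟩, rfl⟩
    · push_neg at hb
      obtain ⟨n, hn⟩ := hb
      refine Or.inr (mem_iUnion.mpr ⟨rp σ n, ?_⟩)
      rw [if_neg hn]
      exact ⟨σ, mem_cyl_rp σ n, rfl⟩
  exact sigCov_mono hincl (sigCov_union hSC (sigCov_iUnion hsmall))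

/-- From a large node, extract a sequence of all-large branches whose values are either
uniformly separated or converge to a point outside the range. -/
lemma exists_sep_seq {f : (ℕ → ℕ) → X} {p : List ℕ} (hp : Lg f p) :
    ∃ σs : ℕ → (ℕ → ℕ), (∀ k, σs k ∈ branchSet f p) ∧
      ((∃ ε : ℝ, 0 < ε ∧ ∀ i j, i ≠ j → ε ≤ dist (f (σs i)) (f (σs j))) ∨
       (∃ y : X, y ∉ Set.range f ∧ Tendsto (fun k => f (σs k)) atTop (𝓝 y))) := by
  set L : Set X := f '' branchSet f p with hL
  have hLnc : ¬ SigCov f L := absorb hp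
  by_cases hTB : TotallyBounded L
  · -- the closure is compact; it cannot be inside `range f`
    have hclcp : IsCompact (closure L) :=
      TotallyBounded.isCompact_of_isClosed hTB.closure isClosed_closure
    have : ¬ closure L ⊆ Set.range f := by
      intro hsub
      exact hLnc ⟨fun _ => closure L, fun _ => ⟨hclcp, hsub⟩,
        subset_closure.trans (subset_iUnion (fun _ : ℕ => closure L) 0)⟩
    obtain ⟨y, hycl, hyA⟩ := not_subset.mp this
    have hseq : ∀ k : ℕ, ∃ σ ∈ branchSet f p, dist y (f σ) < 1 / (k + 1) := by
      intro k
      have hpos : (0 : ℝ) < 1 / (k + 1) := by positivity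
      obtain ⟨b, hbL, hbd⟩ := Metric.mem_closure_iff.mp hycl _ hpos
      obtain ⟨σ, hσ, rfl⟩ := hbL
      exact ⟨σ, hσ, hbd⟩
    choose σs hσs hdist using hseq
    refine ⟨σs, hσs, Or.inr ⟨y, hyA, ?_⟩⟩
    rw [tendsto_iff_dist_tendsto_zero]
    refine squeeze_zero (fun k => dist_nonneg) (fun k => ?_) tendsto_one_div_add_atTop_nhds_zero_nat
    rw [dist_comm]
    exact (hdist k).le
  · -- greedy construction of a separated sequence
    obtain ⟨ε, hε, hno⟩ : ∃ ε : ℝ, 0 < ε ∧ ∀ t : Set X, t.Finite → ¬ L ⊆ ⋃ y ∈ t, ball y ε := by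
      rw [totallyBounded_iff] at hTB
      push_neg at hTB
      obtain ⟨ε, hε, h2⟩ := hTB
      exact ⟨ε, hε, fun t ht => h2 t ht⟩
    have hpick : ∀ l : List X, ∃ x ∈ L, ∀ z ∈ l, ε ≤ dist x z := by
      intro l
      have := hno {z | z ∈ l} (List.finite_toSet l)
      obtain ⟨x, hxL, hxn⟩ := not_subset.mp this
      refine ⟨x, hxL, fun z hz => ?_⟩
      by_contra hlt
      push_neg at hlt
      exact hxn (mem_biUnion hz hlt)
    set pickF : List X → X := fun l => (hpick l).choose with hpickF
    have hpickL : ∀ l, pickF l ∈ L := fun l => (hpick l).choose_spec.1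
    have hpickSep : ∀ l, ∀ z ∈ l, ε ≤ dist (pickF l) z := fun l => (hpick l).choose_spec.2
    set hist : ℕ → List X := fun n => Nat.rec [] (fun _ l => pickF l :: l) n with hhist
    have hist_succ : ∀ n, hist (n + 1) = pickF (hist n) :: hist n := fun n => rfl
    set xs : ℕ → X := fun n => pickF (hist n) with hxs
    have hmemhist : ∀ i n, i < n → xs i ∈ hist n := by
      intro i n
      induction n with
      | zero => omega
      | succ n ih =>
        intro hin
        rw [hist_succ]
        rcases Nat.lt_succ_iff_lt_or_eq.mp hin with h | rfl
        · exact List.mem_cons_of_mem _ (ih h)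
        · exact List.mem_cons_self
    have hsep : ∀ i j, i ≠ j → ε ≤ dist (xs i) (xs j) := by
      have key : ∀ i j, i < j → ε ≤ dist (xs j) (xs i) := fun i j hij =>
        hpickSep (hist j) _ (hmemhist i j hij)
      intro i j hij
      rcases lt_or_gt_of_ne hij with h | h
      · rw [dist_comm]; exact key i j h
      · exact key j i h
    have hxsL : ∀ k, xs k ∈ L := fun k => hpickL (hist k)
    choose σs hσs hfσs using fun k => hxsL k
    refine ⟨σs, hσs, Or.inl ⟨ε, hε, fun i j hij => ?_⟩⟩
    rw [hfσs i, hfσs j]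
    exact hsep i j hij

end MengerAux
namespace MengerAux

variable {X : Type*} [MetricSpace X] [CompleteSpace X]

theorem key {f : (ℕ → ℕ) → X} (hf : Continuous f) {p : List ℕ} {O : Set X} (hp : Lg f p)
    (hO : IsOpen O) (hPO : f '' cyl p ⊆ O) :
    ∃ (q : ℕ → List ℕ) (V : ℕ → Set X),
      (∀ j, Lg f (q j) ∧ IsOpen (V j) ∧ f '' cyl (q j) ⊆ V j) ∧
      (∀ j, p <:+ q j ∧ p.length < (q j).length) ∧
      (∀ j, V j ⊆ O) ∧
      (∀ i j, i ≠ j → Disjoint (V i) (V j)) ∧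
      (∀ ψ : ℕ → ℕ, StrictMono ψ → ∀ x : ℕ → X, (∀ j, x j ∈ f '' cyl (q (ψ j))) →
        ∀ a ∈ Set.range f, ¬ Tendsto x atTop (𝓝 a)) := by
  obtain ⟨σs, hB, hsep⟩ := exists_sep_seq hp
  have hcylp : ∀ k, σs k ∈ cyl p := fun k => (hB k).1
  have hrO : ∀ k, ∃ r : ℝ, 0 < r ∧ ball (f (σs k)) r ⊆ O := by
    intro k
    exact Metric.isOpen_iff.mp hO _ (hPO ⟨σs k, hcylp k, rfl⟩)
  choose rO hrOpos hrOsub using hrO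
  -- A uniform intermediate: an index selection and radii with the needed geometry
  have main : ∃ (ι : ℕ → ℕ) (δ : ℕ → ℝ), (∀ j, 0 < δ j) ∧
      (∀ j, ball (f (σs (ι j))) (δ j) ⊆ O) ∧
      (∀ i j, i ≠ j → Disjoint (ball (f (σs (ι i))) (δ i)) (ball (f (σs (ι j))) (δ j))) ∧
      (∀ ψ : ℕ → ℕ, StrictMono ψ → ∀ x : ℕ → X,
        (∀ j, dist (x j) (f (σs (ι (ψ j)))) < δ (ψ j)) →
        ∀ a ∈ Set.range f, ¬ Tendsto x atTop (𝓝 a)) := by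
    rcases hsep with ⟨ε, hε, hsepd⟩ | ⟨y, hyA, hty⟩
    · -- separated case
      refine ⟨id, fun j => min (ε / 3) (rO j), fun j => lt_min (by linarith) (hrOpos j),
        fun j => (ball_subset_ball (min_le_right _ _)).trans (hrOsub j), ?_, ?_⟩
      · intro i j hij
        rw [Set.disjoint_left]
        intro z hzi hzj
        have h1 : dist z (f (σs i)) < ε / 3 := lt_of_lt_of_le (mem_ball.mp hzi) (min_le_left _ _)
        have h2 : dist z (f (σs j)) < ε / 3 := lt_of_lt_of_le (mem_ball.mp hzj) (min_le_left _ _)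
        have h3 := hsepd i j hij
        have := dist_triangle_left (f (σs i)) (f (σs j)) z
        linarith
      · intro ψ hψ x hx a _ hten
        have hC : CauchySeq x := hten.cauchySeq
        obtain ⟨N, hN⟩ := Metric.cauchySeq_iff.mp hC (ε / 3) (by linarith)
        have h1 := hN N (le_refl N) (N + 1) (Nat.le_succ N)
        have hne : ψ N ≠ ψ (N + 1) := fun h => (Nat.lt_irrefl N) (by
          have := hψ.injective h; omega)
        have h3 := hsepd (ψ N) (ψ (N + 1)) hne
        have hx1 := hx N
        have hx2 := hx (N + 1)
        have hδ1 : dist (x N) (f (σs (ψ N))) < ε / 3 :=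
          lt_of_lt_of_le hx1 (min_le_left _ _)
        have hδ2 : dist (x (N + 1)) (f (σs (ψ (N + 1)))) < ε / 3 :=
          lt_of_lt_of_le hx2 (min_le_left _ _)
        have t1 := dist_triangle (f (σs (ψ N))) (x N) (f (σs (ψ (N + 1))))
        have t2 := dist_triangle (x N) (x (N + 1)) (f (σs (ψ (N + 1))))
        rw [dist_comm (f (σs (ψ N))) (x N)] at t1
        linarith
    · -- convergent-to-outside case: extract a rapidly converging subsequence
      have hDpos : ∀ k, 0 < dist (f (σs k)) y := by
        intro k
        rw [dist_pos]
        intro h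
        exact hyA (h ▸ ⟨σs k, rfl⟩)
      have hstep : ∀ j, ∃ j', j < j' ∧ dist (f (σs j')) y < dist (f (σs j)) y / 4 := by
        intro j
        have h4 : 0 < dist (f (σs j)) y / 4 := by linarith [hDpos j]
        obtain ⟨N, hN⟩ := (Metric.tendsto_atTop.mp hty) _ h4
        exact ⟨max N (j + 1), by omega, hN _ (le_max_left _ _)⟩
      obtain ⟨φ, -, hφ, hφr⟩ := rec_subseq hstep 0
      set c : ℕ → X := fun j => f (σs (φ j)) with hc
      set D : ℕ → ℝ := fun j => dist (c j) y with hD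
      have hD4 : ∀ j, D (j + 1) < D j / 4 := hφr
      have hDpos' : ∀ j, 0 < D j := fun j => hDpos (φ j)
      have hDanti : ∀ i j, i < j → D j < D i / 4 := by
        intro i j hij
        induction j with
        | zero => omega
        | succ j ih =>
          rcases Nat.lt_succ_iff_lt_or_eq.mp hij with h | rfl
          · have h1 := ih h
            have h2 := hD4 j
            have := hDpos' i
            linarith
          · exact hD4 i
      have hDdecay : ∀ j, D j ≤ D 0 * (1 / 4) ^ j := by
        intro j
        induction j with
        | zero => simp
        | succ j ih =>
          have h1 := hD4 j
          have : D 0 * (1 / 4) ^ (j + 1) = (D 0 * (1 / 4) ^ j) / 4 := by ring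
          rw [this]
          linarith
      refine ⟨φ, fun j => min (min (D j / 4) (rO (φ j))) ((1 / 2) ^ j), ?_, ?_, ?_, ?_⟩
      · intro j
        have := hDpos' j
        have := hrOpos (φ j)
        have : (0:ℝ) < (1/2)^j := by positivity
        refine lt_min (lt_min (by linarith [hDpos' j]) (hrOpos (φ j))) this
      · intro j
        exact (ball_subset_ball ((min_le_left _ _).trans (min_le_right _ _))).trans
          (hrOsub (φ j))
      · intro i j hij
        -- wlog i < j
        have main2 : ∀ i j, i < j →
            Disjoint (ball (c i) (min (min (D i / 4) (rO (φ i))) ((1 / 2) ^ i)))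
              (ball (c j) (min (min (D j / 4) (rO (φ j))) ((1 / 2) ^ j))) := by
          intro i j hij
          rw [Set.disjoint_left]
          intro z hzi hzj
          have h1 : dist z (c i) < D i / 4 :=
            lt_of_lt_of_le (mem_ball.mp hzi) ((min_le_left _ _).trans (min_le_left _ _))
          have h2 : dist z (c j) < D j / 4 :=
            lt_of_lt_of_le (mem_ball.mp hzj) ((min_le_left _ _).trans (min_le_left _ _))
          have h3 : D j < D i / 4 := hDanti i j hij
          -- dist (c i) y ≤ dist (c i) (c j) + dist (c j) y
          have t1 := dist_triangle (c i) (c j) y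
          have t2 := dist_triangle_left (c i) (c j) z
          have := hDpos' i
          simp only [hD] at h1 h2 h3 this
          linarith
        rcases lt_or_gt_of_ne hij with h | h
        · exact main2 i j h
        · exact (main2 j i h).symm
      · intro ψ hψ x hx a ha hten
        have hxy : Tendsto x atTop (𝓝 y) := by
          rw [tendsto_iff_dist_tendsto_zero]
          have hbound : ∀ j, dist (x j) y ≤ (1 / 2) ^ j + D 0 * (1 / 4) ^ j := by
            intro j
            have h1 : dist (x j) (c (ψ j)) < (1 / 2) ^ (ψ j) :=
              lt_of_lt_of_le (hx j) (min_le_right _ _)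
            have h2 : D (ψ j) ≤ D 0 * (1 / 4) ^ (ψ j) := hDdecay (ψ j)
            have hjψ : j ≤ ψ j := hψ.le_apply
            have h3 : ((1:ℝ) / 2) ^ (ψ j) ≤ (1 / 2) ^ j :=
              pow_le_pow_of_le_one (by norm_num) (by norm_num) hjψ
            have h4 : D 0 * ((1:ℝ) / 4) ^ (ψ j) ≤ D 0 * (1 / 4) ^ j :=
              mul_le_mul_of_nonneg_left
                (pow_le_pow_of_le_one (by norm_num) (by norm_num) hjψ) (hDpos' 0).le
            have t1 := dist_triangle (x j) (c (ψ j)) y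
            simp only [hD] at h2
            linarith
          refine squeeze_zero (fun j => dist_nonneg) hbound ?_
          have l1 : Tendsto (fun j : ℕ => ((1:ℝ) / 2) ^ j) atTop (𝓝 0) :=
            tendsto_pow_atTop_nhds_zero_of_lt_one (by norm_num) (by norm_num)
          have l2 : Tendsto (fun j : ℕ => D 0 * ((1:ℝ) / 4) ^ j) atTop (𝓝 (D 0 * 0)) :=
            (tendsto_pow_atTop_nhds_zero_of_lt_one (by norm_num) (by norm_num)).const_mul _
          rw [mul_zero] at l2
          simpa using l1.add l2
        have : a = y := tendsto_nhds_unique hten hxy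
        exact hyA (this ▸ ha)
  obtain ⟨ι, δ, hδpos, hδO, hδdisj, hδesc⟩ := main
  -- choose cylinder depths via continuity
  have hNex : ∀ j, ∃ n, {τ | rp τ n = rp (σs (ι j)) n} ⊆ f ⁻¹' (ball (f (σs (ι j))) (δ j)) := by
    intro j
    have hU : IsOpen (f ⁻¹' (ball (f (σs (ι j))) (δ j))) :=
      (isOpen_ball).preimage hf
    have hmem : σs (ι j) ∈ f ⁻¹' (ball (f (σs (ι j))) (δ j)) := by
      simp [mem_ball, hδpos j]
    exact exists_rp_subset hU hmem
  choose n0 hn0 using hNex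
  set N : ℕ → ℕ := fun j => max (n0 j) (p.length + 1) with hN
  set q : ℕ → List ℕ := fun j => rp (σs (ι j)) (N j) with hq
  set V : ℕ → Set X := fun j => ball (f (σs (ι j))) (δ j) with hV
  have himg : ∀ j, f '' cyl (q j) ⊆ V j := by
    rintro j _ ⟨τ, hτ, rfl⟩
    have hτ' : rp τ (N j) = rp (σs (ι j)) (N j) := by
      have := hτ
      rw [mem_cyl, hq, rp_length] at this
      exact this
    have : rp τ (n0 j) = rp (σs (ι j)) (n0 j) := rp_agree_mono hτ' (le_max_left _ _)
    exact hn0 j this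
  refine ⟨q, V, fun j => ⟨(hB (ι j)).2 (N j), isOpen_ball, himg j⟩, fun j => ⟨?_, ?_⟩,
    fun j => hδO j, fun i j hij => hδdisj i j hij, ?_⟩
  · have h1 : rp (σs (ι j)) p.length <:+ rp (σs (ι j)) (N j) :=
      rp_suffix _ (le_trans (Nat.le_succ _) (le_max_right _ _))
    have h2 : rp (σs (ι j)) p.length = p := hcylp (ι j)
    rw [h2] at h1
    exact h1
  · have : (q j).length = N j := by rw [hq, rp_length]
    rw [this]
    exact lt_of_lt_of_le (Nat.lt_succ_self _) (le_max_right _ _)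
  · intro ψ hψ x hx a ha hten
    refine hδesc ψ hψ x (fun j => ?_) a ha hten
    exact mem_ball.mp (himg (ψ j) (hx j))

end MengerAux
namespace MengerAux

variable {X : Type*} [MetricSpace X] [CompleteSpace X]

/-- A node of the construction: a large finite sequence with an open set around its image. -/
def Node (f : (ℕ → ℕ) → X) : Type _ :=
  {po : List ℕ × Set X // Lg f po.1 ∧ IsOpen po.2 ∧ f '' cyl po.1 ⊆ po.2}

def nspec (f : (ℕ → ℕ) → X) (nd : Node f) (c : ℕ → Node f) : Prop :=
  (∀ j, nd.1.1 <:+ (c j).1.1 ∧ nd.1.1.length < (c j).1.1.length) ∧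
  (∀ j, (c j).1.2 ⊆ nd.1.2) ∧
  (∀ i j, i ≠ j → Disjoint ((c i).1.2) ((c j).1.2)) ∧
  (∀ ψ : ℕ → ℕ, StrictMono ψ → ∀ x : ℕ → X, (∀ j, x j ∈ f '' cyl ((c (ψ j)).1.1)) →
    ∀ a ∈ Set.range f, ¬ Tendsto x atTop (𝓝 a))

lemma key' {f : (ℕ → ℕ) → X} (hf : Continuous f) (nd : Node f) : ∃ c, nspec f nd c := by
  obtain ⟨q, V, hgood, hext, hsub, hdisj, hesc⟩ := key hf nd.2.1 nd.2.2.1 nd.2.2.2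
  exact ⟨fun j => ⟨(q j, V j), hgood j⟩, hext, hsub, hdisj, hesc⟩

noncomputable def childN {f : (ℕ → ℕ) → X} (hf : Continuous f) (nd : Node f) : ℕ → Node f :=
  (key' hf nd).choose

lemma childN_spec {f : (ℕ → ℕ) → X} (hf : Continuous f) (nd : Node f) :
    nspec f nd (childN hf nd) := (key' hf nd).choose_spec

variable {f : (ℕ → ℕ) → X}

noncomputable def nodeN (hf : Continuous f) (hroot : Lg f ([] : List ℕ)) :
    List ℕ → Node f
  | [] => ⟨(([] : List ℕ), Set.univ), hroot, isOpen_univ, subset_univ _⟩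
  | j :: s => childN hf (nodeN hf hroot s) j

variable (hf : Continuous f) (hroot : Lg f ([] : List ℕ))

/-- The finite sequence at a node. -/
noncomputable def pL (t : List ℕ) : List ℕ := (nodeN hf hroot t).1.1

/-- The open set at a node. -/
noncomputable def OL (t : List ℕ) : Set X := (nodeN hf hroot t).1.2

lemma node_good (t : List ℕ) :
    Lg f (pL hf hroot t) ∧ IsOpen (OL hf hroot t) ∧
      f '' cyl (pL hf hroot t) ⊆ OL hf hroot t := (nodeN hf hroot t).2

lemma node_child_ext (s : List ℕ) (j : ℕ) :
    pL hf hroot s <:+ pL hf hroot (j :: s) ∧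
      (pL hf hroot s).length < (pL hf hroot (j :: s)).length :=
  (childN_spec hf (nodeN hf hroot s)).1 j

lemma node_child_sub (s : List ℕ) (j : ℕ) : OL hf hroot (j :: s) ⊆ OL hf hroot s :=
  (childN_spec hf (nodeN hf hroot s)).2.1 j

lemma node_disj (s : List ℕ) {i j : ℕ} (hij : i ≠ j) :
    Disjoint (OL hf hroot (i :: s)) (OL hf hroot (j :: s)) :=
  (childN_spec hf (nodeN hf hroot s)).2.2.1 i j hij

lemma node_escape (s : List ℕ) :
    ∀ ψ : ℕ → ℕ, StrictMono ψ → ∀ x : ℕ → X,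
      (∀ j, x j ∈ f '' cyl (pL hf hroot (ψ j :: s))) →
      ∀ a ∈ Set.range f, ¬ Tendsto x atTop (𝓝 a) :=
  (childN_spec hf (nodeN hf hroot s)).2.2.2

lemma node_chain (σ : ℕ → ℕ) {n n' : ℕ} (h : n ≤ n') :
    pL hf hroot (rp σ n) <:+ pL hf hroot (rp σ n') := by
  induction n' with
  | zero =>
    have : n = 0 := Nat.le_zero.mp h
    subst this; exact List.suffix_rfl
  | succ n' ih =>
    rcases Nat.lt_succ_iff_lt_or_eq.mp (Nat.lt_succ_of_le h) with h' | rfl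
    · exact (ih (Nat.lt_succ_iff.mp h')).trans (node_child_ext hf hroot (rp σ n') (σ n')).1
    · exact List.suffix_rfl

lemma node_len (σ : ℕ → ℕ) (n : ℕ) : n ≤ (pL hf hroot (rp σ n)).length := by
  induction n with
  | zero => exact Nat.zero_le _
  | succ n ih =>
    have := (node_child_ext hf hroot (rp σ n) (σ n)).2
    have hstep : (pL hf hroot (rp σ n)).length < (pL hf hroot (rp σ (n + 1))).length := this
    omega

/-- The branch map: takes an address to the corresponding branch in the domain tree. -/
noncomputable def ΦF (σ : ℕ → ℕ) : ℕ → ℕ :=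
  fun i => (pL hf hroot (rp σ (i + 1))).reverse.getD i 0

lemma node_entry (σ : ℕ → ℕ) {n i : ℕ} (hi : i < (pL hf hroot (rp σ n)).length) :
    ΦF hf hroot σ i = (pL hf hroot (rp σ n)).reverse.getD i 0 := by
  rcases le_total (i + 1) n with h | h
  · have hsuf := node_chain hf hroot σ h
    have hlen : i < (pL hf hroot (rp σ (i + 1))).length :=
      lt_of_lt_of_le (Nat.lt_succ_self i) (node_len hf hroot σ (i + 1))
    exact (suffix_rev_getD hsuf hlen).symm
  · have hsuf := node_chain hf hroot σ h
    exact suffix_rev_getD hsuf hi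

lemma Φ_mem (σ : ℕ → ℕ) (n : ℕ) : ΦF hf hroot σ ∈ cyl (pL hf hroot (rp σ n)) := by
  rw [mem_cyl]
  exact rp_eq_list fun i hi => node_entry hf hroot σ hi

lemma Φ_in_O (σ : ℕ → ℕ) (n : ℕ) : f (ΦF hf hroot σ) ∈ OL hf hroot (rp σ n) :=
  (node_good hf hroot (rp σ n)).2.2 ⟨ΦF hf hroot σ, Φ_mem hf hroot σ n, rfl⟩

lemma unique_addr (n : ℕ) (σ τ : ℕ → ℕ) (h : f (ΦF hf hroot σ) ∈ OL hf hroot (rp τ n)) :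
    rp σ n = rp τ n := by
  induction n with
  | zero => rfl
  | succ n ih =>
    have h' : f (ΦF hf hroot σ) ∈ OL hf hroot (rp τ n) :=
      node_child_sub hf hroot (rp τ n) (τ n) h
    have hs := ih h'
    have hself : f (ΦF hf hroot σ) ∈ OL hf hroot (σ n :: rp σ n) :=
      Φ_in_O hf hroot σ (n + 1)
    rw [hs] at hself
    by_cases hne : σ n = τ n
    · rw [rp_succ, rp_succ, hne, hs]
    · exact absurd (Set.disjoint_left.mp (node_disj hf hroot (rp τ n) hne) hself h) (by simp)

lemma ΦF_inj : Function.Injective (fun σ => f (ΦF hf hroot σ)) := by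
  intro σ τ h
  simp only at h
  funext i
  have hmem : f (ΦF hf hroot σ) ∈ OL hf hroot (rp τ (i + 1)) := by
    rw [h]; exact Φ_in_O hf hroot τ (i + 1)
  have := unique_addr hf hroot (i + 1) σ τ hmem
  exact rp_eq_iff.mp this i (Nat.lt_succ_self i)

lemma ΦF_cont : Continuous (ΦF hf hroot) := by
  refine continuous_pi fun i => ?_
  rw [continuous_discrete_rng]
  intro v
  have hset : (fun σ => ΦF hf hroot σ i) ⁻¹' {v} =
      ⋃ (t : List ℕ), ⋃ (_ : (pL hf hroot t).reverse.getD i 0 = v), {σ | rp σ (i + 1) = t} := by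
    ext σ
    simp only [mem_preimage, mem_singleton_iff, mem_iUnion, mem_setOf_eq]
    constructor
    · intro h
      exact ⟨rp σ (i + 1), h, rfl⟩
    · rintro ⟨t, hv, ht⟩
      rw [show ΦF hf hroot σ i = (pL hf hroot (rp σ (i+1))).reverse.getD i 0 from rfl, ht, hv]
  rw [hset]
  exact isOpen_iUnion fun t => isOpen_iUnion fun _ => isOpen_rp_set (i + 1) t

end MengerAux
namespace MengerAux

variable {X : Type*} [MetricSpace X] [CompleteSpace X] {f : (ℕ → ℕ) → X}

theorem sigmaCompact_of_menger (hf : Continuous f) (hM : MengerSpace ↥(Set.range f)) :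
    IsSigmaCompact (Set.range f) := by
  by_cases hroot : Lg f ([] : List ℕ)
  · exfalso
    set FΦ : (ℕ → ℕ) → X := fun σ => f (ΦF hf hroot σ) with hFΦ
    have hFΦA : ∀ σ, FΦ σ ∈ Set.range f := fun σ => ⟨ΦF hf hroot σ, rfl⟩
    set CY : Set ↥(Set.range f) := {y | ∃ σ, FΦ σ = ↑y} with hCY
    have hFΦcont : Continuous FΦ := hf.comp (ΦF_cont hf hroot)
    have hseqcl : IsSeqClosed CY := by
      intro y a hy hten
      have hten' : Tendsto (fun j => (y j : X)) atTop (𝓝 ↑a) :=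
        (continuous_subtype_val.tendsto _).comp hten
      choose σ hσ using hy
      rcases occupied_dichotomy σ with ⟨g, hg⟩ | ⟨s, m, k, hm, hk, haddr⟩
      · obtain ⟨τ, -, φ, hφ, hconv⟩ :=
          (compact_pi g).tendsto_subseq (x := σ) (fun j => fun n => hg j n)
        have h1 : Tendsto (fun j => FΦ (σ (φ j))) atTop (𝓝 (FΦ τ)) :=
          (hFΦcont.tendsto τ).comp hconv
        have h2 : Tendsto (fun j => FΦ (σ (φ j))) atTop (𝓝 ↑a) := by
          have h3 := hten'.comp hφ.tendsto_atTop
          exact h3.congr fun j => (hσ (φ j)).symm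
        exact ⟨τ, (tendsto_nhds_unique h2 h1).symm⟩
      · exfalso
        refine node_escape hf hroot s m hm (fun j => ↑(y (k j))) (fun j => ?_) ↑a a.2 ?_
        · show (↑(y (k j)) : X) ∈ f '' cyl (pL hf hroot (m j :: s))
          rw [← hσ (k j)]
          have hmem := Φ_mem hf hroot (σ (k j)) (s.length + 1)
          rw [haddr j] at hmem
          exact ⟨ΦF hf hroot (σ (k j)), hmem, rfl⟩
        · exact hten'.comp hk.tendsto_atTop
    have hclosed : IsClosed CY := hseqcl.isClosed
    have hMC : MengerSpace ↥CY := menger_closed hM CY hclosed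
    set G : ↥CY → (ℕ → ℕ) := fun yc => Exists.choose (yc.2 : ∃ σ, FΦ σ = ↑(yc.1)) with hG
    have hGspec : ∀ yc : ↥CY, FΦ (G yc) = ↑(yc.1) :=
      fun yc => Exists.choose_spec (yc.2 : ∃ σ, FΦ σ = ↑(yc.1))
    have hGsurj : Function.Surjective G := by
      intro σ
      refine ⟨⟨⟨FΦ σ, hFΦA σ⟩, ⟨σ, rfl⟩⟩, ?_⟩
      apply ΦF_inj hf hroot
      exact hGspec _
    have hGcont : Continuous G := by
      refine continuous_pi fun n => ?_
      rw [continuous_discrete_rng]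
      intro v
      have hset : (fun yc : ↥CY => G yc n) ⁻¹' {v} =
          ⋃ (t : List ℕ), ⋃ (_ : t.length = n + 1 ∧ t.headD 0 = v),
            (fun yc : ↥CY => (↑↑yc : X)) ⁻¹' (OL hf hroot t) := by
        ext yc
        simp only [mem_preimage, mem_singleton_iff, mem_iUnion]
        constructor
        · intro hv
          refine ⟨rp (G yc) (n + 1), ⟨by simp, by rw [rp_succ]; simpa using hv⟩, ?_⟩
          have : FΦ (G yc) ∈ OL hf hroot (rp (G yc) (n + 1)) :=
            Φ_in_O hf hroot (G yc) (n + 1)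
          rw [hGspec yc] at this
          exact this
        · rintro ⟨t, ⟨hlen, hhead⟩, hmem⟩
          have ht : rp (extFun t) (n + 1) = t := by rw [← hlen]; exact rp_extFun t
          rw [← ht] at hmem
          have hmem' : f (ΦF hf hroot (G yc)) ∈ OL hf hroot (rp (extFun t) (n + 1)) := by
            have h5 : f (ΦF hf hroot (G yc)) = (↑↑yc : X) := hGspec yc
            rw [h5]
            exact hmem
          have huniq := unique_addr hf hroot (n + 1) (G yc) (extFun t) hmem'
          have : G yc n = (rp (G yc) (n + 1)).headD 0 := by rw [rp_succ]; rfl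
          rw [this, huniq, ht, hhead]
      rw [hset]
      exact isOpen_iUnion fun t => isOpen_iUnion fun _ =>
        ((node_good hf hroot t).2.1).preimage
          (continuous_subtype_val.comp continuous_subtype_val)
    exact not_menger_baire (menger_image hMC hGcont hGsurj)
  · have hsc : SigCov f (f '' cyl ([] : List ℕ)) := not_not.mp hroot
    have hcyl : cyl ([] : List ℕ) = Set.univ := by
      ext σ; simp [mem_cyl]
    rw [hcyl, Set.image_univ] at hsc
    obtain ⟨K, hK, hsub⟩ := hsc
    refine ⟨K, fun n => (hK n).1, ?_⟩
    exact subset_antisymm (iUnion_subset fun n => (hK n).2) hsub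

end MengerAux

/-- Every analytic subspace of a Polish space that has the Menger property is
σ-compact. -/
theorem menger_analyticSet_sigmaCompact (X : Type*) [TopologicalSpace X] [PolishSpace X]
    (A : Set X) (hA : MeasureTheory.AnalyticSet A) (hMenger : MengerSpace ↥A) :
    IsSigmaCompact A := by
  rw [MeasureTheory.AnalyticSet] at hA
  rcases hA with rfl | ⟨f, hfc, hfr⟩
  · exact isSigmaCompact_empty
  · letI := TopologicalSpace.upgradeIsCompletelyMetrizable X
    subst hfr
    exact MengerAux.sigmaCompact_of_menger hfc hMenger
end

section
/- Every regular Hausdorff topological space that is a continuous image of a Polish space and has the Menger property is σ-compact. -/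
open Set Function Filter Topology Metric TopologicalSpace

universe u v

section Aux

variable {P : Type v} {X : Type u} [TopologicalSpace P] [SecondCountableTopology P]
  [TopologicalSpace X]
/-- Lindelöf-type extraction through a continuous surjection from a second countable space. -/
lemma aux_countable_subcover {f : P → X} (hf : Continuous f) (hfs : Function.Surjective f)
    {ι : Type*} (U : ι → Set X) (hU : ∀ i, IsOpen (U i)) (B : Set X) (hB : B ⊆ ⋃ i, U i) :
    ∃ T : Set ι, T.Countable ∧ B ⊆ ⋃ i ∈ T, U i := by
  obtain ⟨T, hTc, hTeq⟩ := TopologicalSpace.isOpen_iUnion_countable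
      (fun i => f ⁻¹' U i) (fun i => (hU i).preimage hf)
  refine ⟨T, hTc, fun x hx => ?_⟩
  obtain ⟨p, rfl⟩ := hfs x
  have hp : p ∈ ⋃ i, f ⁻¹' U i := by
    rcases mem_iUnion.1 (hB hx) with ⟨i, hi⟩; exact mem_iUnion.2 ⟨i, hi⟩
  rw [← hTeq] at hp
  rcases mem_iUnion₂.1 hp with ⟨i, hiT, hi⟩
  exact mem_iUnion₂.2 ⟨i, hiT, hi⟩

lemma aux_seq_subcover {f : P → X} (hf : Continuous f) (hfs : Function.Surjective f)
    {ι : Type*} (U : ι → Set X) (hU : ∀ i, IsOpen (U i)) (B : Set X) (hBne : B.Nonempty)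
    (hB : B ⊆ ⋃ i, U i) :
    ∃ g : ℕ → ι, B ⊆ ⋃ j, U (g j) := by
  obtain ⟨T, hTc, hTcov⟩ := aux_countable_subcover hf hfs U hU B hB
  have hTne : T.Nonempty := by
    obtain ⟨x, hx⟩ := hBne
    rcases mem_iUnion₂.1 (hTcov hx) with ⟨i, hiT, _⟩
    exact ⟨i, hiT⟩
  obtain ⟨g, hg⟩ := hTc.exists_eq_range hTne
  refine ⟨g, fun x hx => ?_⟩
  rcases mem_iUnion₂.1 (hTcov hx) with ⟨i, hiT, hi⟩
  rw [hg] at hiT; rcases hiT with ⟨j, rfl⟩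
  exact mem_iUnion.2 ⟨j, hi⟩



lemma aux_noncluster [T3Space X] {f : P → X} (hf : Continuous f)
    (hfs : Function.Surjective f)
    {A : Set X} (hAne : A.Nonempty) (hnc : ¬ IsCompact (closure A)) :
    ∃ y : ℕ → X, Function.Injective y ∧ (∀ k, y k ∈ A) ∧
      LocallyFinite (fun k => ({y k} : Set X)) := by
  classical
  have h1 : ¬ ∀ (ι : Type u) (U : ι → Set X), (∀ i, IsOpen (U i)) → closure A ⊆ ⋃ i, U i →
      ∃ t : Finset ι, closure A ⊆ ⋃ i ∈ t, U i :=
    fun h => hnc (isCompact_of_finite_subcover fun {ι} U hU hcov => h ι U hU hcov)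
  push_neg at h1
  obtain ⟨ι, U, hUo, hUc, hnofin⟩ := h1
  obtain ⟨g, hg⟩ := aux_seq_subcover hf hfs U hUo (closure A) hAne.closure hUc
  have hshr : ∀ x : closure A, ∃ (j : ℕ) (W : Set X), IsOpen W ∧ (x : X) ∈ W ∧
      closure W ⊆ U (g j) := by
    intro x
    rcases mem_iUnion.1 (hg x.2) with ⟨j, hj⟩
    obtain ⟨s, hs_mem, hs_closed, hs_sub⟩ :=
      exists_mem_nhds_isClosed_subset ((hUo (g j)).mem_nhds hj)
    refine ⟨j, interior s, isOpen_interior, mem_interior_iff_mem_nhds.2 hs_mem, ?_⟩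
    refine (closure_mono interior_subset).trans ?_
    rw [hs_closed.closure_eq]; exact hs_sub
  choose jx Wx hWo hWmem hWcl using hshr
  have hcov2 : closure A ⊆ ⋃ x : closure A, Wx x := fun z hz => mem_iUnion.2 ⟨⟨z, hz⟩, hWmem _⟩
  obtain ⟨e, he⟩ := aux_seq_subcover hf hfs Wx hWo (closure A) hAne.closure hcov2
  set V : ℕ → Set X := fun m => Wx (e m) with hV
  have hnof : ∀ k : ℕ, (A \ ⋃ m ∈ Finset.range (k+1), V m).Nonempty := by
    intro k
    by_contra hcon
    rw [Set.not_nonempty_iff_eq_empty, diff_eq_empty] at hcon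
    have h2 : closure A ⊆ ⋃ m ∈ Finset.range (k+1), closure (V m) := by
      calc closure A ⊆ closure (⋃ m ∈ Finset.range (k+1), V m) := closure_mono hcon
      _ = ⋃ m ∈ Finset.range (k+1), closure (V m) := Finset.closure_biUnion _ _
    have h3 : closure A ⊆
        ⋃ i ∈ (Finset.range (k+1)).image (fun m => g (jx (e m))), U i := by
      intro z hz
      rcases mem_iUnion₂.1 (h2 hz) with ⟨m, hm, hzm⟩
      exact mem_iUnion₂.2 ⟨g (jx (e m)), Finset.mem_image_of_mem _ hm, hWcl (e m) hzm⟩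
    exact hnofin _ h3
  choose xs hxsA using hnof
  have hxA : ∀ k, xs k ∈ A := fun k => (hxsA k).1
  have hxV : ∀ k m, m ≤ k → xs k ∉ V m := by
    intro k m hm hmem
    exact (hxsA k).2 (Set.mem_biUnion (Finset.mem_range.2 (Nat.lt_succ_of_le hm)) hmem)
  have hlf : LocallyFinite (fun k => ({xs k} : Set X)) := by
    intro z
    by_cases hz : z ∈ closure A
    · rcases mem_iUnion.1 (he hz) with ⟨m, hm⟩
      refine ⟨V m, (hWo (e m)).mem_nhds hm, (Set.finite_Iio m).subset ?_⟩
      intro k hk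
      rw [Set.mem_setOf_eq, Set.singleton_inter_nonempty] at hk
      rw [Set.mem_Iio, ← not_le]
      intro hcon
      exact hxV k m hcon hk
    · refine ⟨(closure A)ᶜ, (isClosed_closure.isOpen_compl).mem_nhds hz, Set.Finite.subset
        (Set.finite_empty) ?_⟩
      intro k hk
      rw [Set.mem_setOf_eq, Set.singleton_inter_nonempty] at hk
      exact absurd (subset_closure (hxA k)) hk
  have hfib : ∀ z : X, {k | xs k = z}.Finite := by
    intro z
    obtain ⟨t, ht, hfin⟩ := hlf z
    refine hfin.subset fun k hk => ?_
    rw [Set.mem_setOf_eq] at hk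
    rw [Set.mem_setOf_eq, Set.singleton_inter_nonempty, hk]
    exact mem_of_mem_nhds ht
  have hinf : (Set.range xs).Infinite := by
    intro hfin
    have hsub : (Set.univ : Set ℕ) ⊆ ⋃ z ∈ Set.range xs, {k | xs k = z} :=
      fun k _ => mem_iUnion₂.2 ⟨xs k, ⟨k, rfl⟩, rfl⟩
    exact Set.infinite_univ ((hfin.biUnion (fun z _ => hfib z)).subset hsub)
  let emb := hinf.natEmbedding _
  have hembA : ∀ k, (emb k : X) ∈ A := by
    intro k; obtain ⟨k', hk'⟩ := (emb k).2; exact hk' ▸ hxA k'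
  refine ⟨fun k => (emb k : X), fun a b hab => emb.injective (Subtype.ext hab), hembA, ?_⟩
  intro z
  obtain ⟨t, ht, hfin⟩ := hlf z
  refine ⟨t, ht, ?_⟩
  have hS : (t ∩ Set.range xs).Finite := by
    have hsub : (t ∩ Set.range xs) ⊆ xs '' {k' | ({xs k'} ∩ t).Nonempty} := by
      rintro z' ⟨hzt, k', rfl⟩
      exact ⟨k', by rwa [Set.mem_setOf_eq, Set.singleton_inter_nonempty], rfl⟩
    exact (hfin.image xs).subset hsub
  have : {k | (({(emb k : X)} : Set X) ∩ t).Nonempty} =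
      (fun k => (emb k : X)) ⁻¹' (t ∩ Set.range xs) := by
    ext k
    simp only [Set.mem_setOf_eq, Set.singleton_inter_nonempty, Set.mem_preimage, Set.mem_inter_iff]
    exact ⟨fun h => ⟨h, (emb k).2⟩, fun h => h.1⟩
  rw [this]
  exact hS.preimage (fun a _ b _ hab => emb.injective (Subtype.ext hab))

lemma aux_expansion [T3Space X] {f : P → X} (hf : Continuous f) (hfs : Function.Surjective f)
    (y : ℕ → X) (hlf : LocallyFinite (fun k => ({y k} : Set X))) :
    ∃ W : ℕ → Set X, (∀ k, IsOpen (W k)) ∧ (∀ k, y k ∈ W k) ∧ LocallyFinite W := by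
  classical
  have hM : ∀ z : X, ∃ M : Set X, IsOpen M ∧ z ∈ M ∧ {k | y k ∈ closure M}.Finite := by
    intro z
    obtain ⟨t, ht, hfin⟩ := hlf z
    obtain ⟨s, hs_mem, hs_closed, hs_sub⟩ := exists_mem_nhds_isClosed_subset ht
    refine ⟨interior s, isOpen_interior, mem_interior_iff_mem_nhds.2 hs_mem, hfin.subset ?_⟩
    intro k hk
    rw [Set.mem_setOf_eq] at hk
    rw [Set.mem_setOf_eq, Set.singleton_inter_nonempty]
    refine hs_sub ?_
    have : closure (interior s) ⊆ s := by
      refine (closure_mono interior_subset).trans ?_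
      rw [hs_closed.closure_eq]
    exact this hk
  choose M hMo hMmem hMfin using hM
  have hcov : (univ : Set X) ⊆ ⋃ z, M z := fun z _ => mem_iUnion.2 ⟨z, hMmem z⟩
  obtain ⟨e, he⟩ := aux_seq_subcover hf hfs M hMo univ ⟨y 0, trivial⟩ hcov
  set Mr : ℕ → Set X := fun r => M (e r) with hMr
  let bad : ℕ → Finset ℕ := fun k => (Finset.range (k+1)).filter (fun r => y k ∉ closure (Mr r))
  refine ⟨fun k => (⋃ r ∈ bad k, closure (Mr r))ᶜ, ?_, ?_, ?_⟩
  · intro k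
    exact (Set.Finite.isClosed_biUnion (bad k).finite_toSet
      (fun r _ => isClosed_closure)).isOpen_compl
  · intro k
    rw [Set.mem_compl_iff]
    intro hmem
    rcases mem_iUnion₂.1 hmem with ⟨r, hr, hmem'⟩
    exact (Finset.mem_filter.1 hr).2 hmem'
  · intro z
    rcases mem_iUnion.1 (he (mem_univ z)) with ⟨r, hr⟩
    refine ⟨Mr r, (hMo (e r)).mem_nhds hr, ?_⟩
    have hsub : {k | ((⋃ s ∈ bad k, closure (Mr s))ᶜ ∩ Mr r).Nonempty} ⊆
        {k | k < r} ∪ {k | y k ∈ closure (Mr r)} := by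
      intro k hk
      by_contra hcon
      rw [Set.mem_union] at hcon
      push_neg at hcon
      obtain ⟨hc1, hc2⟩ := hcon
      rw [Set.mem_setOf_eq, not_lt] at hc1
      rw [Set.mem_setOf_eq] at hc2
      obtain ⟨w, hw1, hw2⟩ := hk
      exact hw1 (mem_iUnion₂.2 ⟨r,
        Finset.mem_filter.2 ⟨Finset.mem_range.2 (by omega), hc2⟩, subset_closure hw2⟩)
    exact ((Set.finite_Iio r).union (hMfin (e r))).subset hsub

end Aux

lemma aux_step {P : Type v} {X : Type u} [MetricSpace P] [SecondCountableTopology P]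
    [TopologicalSpace X] [T3Space X] {f : P → X} (hf : Continuous f)
    (hfs : Function.Surjective f) {Sig : Set X} (hSigC : IsSigmaCompact Sig)
    (hSig : ∀ V : Set P, IsOpen V → (∃ S, IsSigmaCompact S ∧ f '' V ⊆ S) → f '' V ⊆ Sig)
    (V : Set P) (hV : IsOpen V) (hne : (f '' V \ Sig).Nonempty) (n : ℕ) :
    ∃ ch : ℕ → Set P,
      (∀ k, IsOpen (ch k)) ∧ (∀ k, (f '' ch k \ Sig).Nonempty) ∧
      (∀ k, closure (ch k) ⊆ V) ∧ (∀ k, ∃ c, ch k ⊆ Metric.ball c ((1/2 : ℝ) ^ n)) ∧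
      LocallyFinite (fun k => closure (f '' ch k)) := by
  classical
  set A := f '' V \ Sig with hA
  have hnc : ¬ IsCompact (closure A) := by
    intro hcpt
    have hsub : f '' V ⊆ closure A ∪ Sig := by
      intro x hx
      by_cases hxs : x ∈ Sig
      · exact Or.inr hxs
      · exact Or.inl (subset_closure ⟨hx, hxs⟩)
    have hsc : IsSigmaCompact (closure A ∪ Sig) := by
      rw [Set.union_eq_iUnion]
      refine isSigmaCompact_iUnion _ (fun b => ?_)
      cases b
      · exact hSigC
      · exact hcpt.isSigmaCompact
    have hVS := hSig V hV ⟨_, hsc, hsub⟩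
    obtain ⟨x, hx1, hx2⟩ := hne
    exact hx2 (hVS hx1)
  obtain ⟨y, hyinj, hyA, hylf⟩ := aux_noncluster hf hfs hne hnc
  obtain ⟨W, hWo, hWmem, hWlf⟩ := aux_expansion hf hfs y hylf
  have hchoice : ∀ k, ∃ q : Set P, IsOpen q ∧ (f '' q \ Sig).Nonempty ∧ closure q ⊆ V ∧
      (∃ c, q ⊆ Metric.ball c ((1/2 : ℝ)^n)) ∧ f '' q ⊆ W k := by
    intro k
    obtain ⟨p, hpV, hpf⟩ := (hyA k).1
    have hpO : p ∈ V ∩ f ⁻¹' (W k) := ⟨hpV, by rw [Set.mem_preimage, hpf]; exact hWmem k⟩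
    have hO : IsOpen (V ∩ f ⁻¹' (W k)) := hV.inter ((hWo k).preimage hf)
    rcases Metric.isOpen_iff.1 hO p hpO with ⟨ε, hε, hball⟩
    set r := min (ε/2) ((1/2 : ℝ)^n) with hr
    have hr0 : 0 < r := lt_min (by linarith) (by positivity)
    have hrε : r < ε := lt_of_le_of_lt (min_le_left _ _) (by linarith)
    have hbsub : Metric.ball p r ⊆ V ∩ f ⁻¹' (W k) :=
      (Metric.ball_subset_ball hrε.le).trans hball
    refine ⟨Metric.ball p r, Metric.isOpen_ball, ⟨y k, ⟨p, Metric.mem_ball_self hr0, hpf⟩,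
      (hyA k).2⟩, ?_, ⟨p, Metric.ball_subset_ball (min_le_right _ _)⟩, ?_⟩
    · exact (Metric.closure_ball_subset_closedBall.trans
        (Metric.closedBall_subset_ball hrε)).trans (hball.trans Set.inter_subset_left)
    · rintro x ⟨q, hq, rfl⟩
      exact (hbsub hq).2
  choose ch h1 h2 h3 h4 h5 using hchoice
  exact ⟨ch, h1, h2, h3, h4, hWlf.closure.subset (fun k => closure_mono (h5 k))⟩

/-- Auxiliary recursion along lists: the value at `k :: u` is obtained from the value at `u`,
the length of `u`, and `k`. -/
def treeRec {α : Type*} (root : α) (step : α → ℕ → ℕ → α) : List ℕ → α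
  | [] => root
  | k :: u => step (treeRec root step u) u.length k


/-- Every regular Hausdorff topological space that is a continuous image of a Polish
space and has the Menger property is σ-compact. -/
theorem menger_continuousImageOfPolish_sigmaCompact (X : Type*) [TopologicalSpace X]
    [T3Space X]
    (himage : ∃ (P : Type) (_ : TopologicalSpace P) (_ : PolishSpace P) (f : P → X),
      Continuous f ∧ Function.Surjective f)
    (hMenger : MengerSpace X) :
    SigmaCompactSpace X := by
  classical
  obtain ⟨P, _tP, _pP, f, hf, hfs⟩ := himage
  letI := upgradeIsCompletelyMetrizable P
  obtain ⟨ℬ, hBc, _hBne, hBbasis⟩ := TopologicalSpace.exists_countable_basis P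
  set small : Set P → Prop := fun s => ∃ S : Set X, IsSigmaCompact S ∧ f '' s ⊆ S with hsmalldef
  set Sg : Set P → Set X := fun s => if h : small s then h.choose else ∅ with hSgdef
  have hSgC : ∀ s, IsSigmaCompact (Sg s) := by
    intro s; by_cases h : small s
    · simp only [hSgdef, dif_pos h]; exact h.choose_spec.1
    · simp only [hSgdef, dif_neg h]; exact isSigmaCompact_empty
  have hSgsub : ∀ s, small s → f '' s ⊆ Sg s := by
    intro s h; simp only [hSgdef, dif_pos h]; exact h.choose_spec.2
  set Sig : Set X := ⋃ s ∈ ℬ, Sg s with hSigdef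
  have hSigC : IsSigmaCompact Sig := isSigmaCompact_biUnion hBc (fun s _ => hSgC s)
  have hSig : ∀ V : Set P, IsOpen V → (∃ S, IsSigmaCompact S ∧ f '' V ⊆ S) → f '' V ⊆ Sig := by
    rintro V hV ⟨S, hS, hVS⟩
    have hVeq : V = ⋃₀ {s ∈ ℬ | s ⊆ V} := hBbasis.open_eq_sUnion' hV
    rintro x ⟨p, hp, rfl⟩
    rw [hVeq] at hp
    obtain ⟨s, ⟨hsB, hsV⟩, hps⟩ := hp
    have hsmall : small s := ⟨S, hS, (Set.image_mono hsV).trans hVS⟩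
    exact Set.mem_biUnion hsB (hSgsub s hsmall ⟨p, hps, rfl⟩)
  by_cases hroot : (f '' (univ : Set P) \ Sig).Nonempty
  swap
  · rw [Set.not_nonempty_iff_eq_empty, diff_eq_empty] at hroot
    have hXS : (univ : Set X) ⊆ Sig := by
      intro x _; obtain ⟨p, rfl⟩ := hfs x; exact hroot ⟨p, trivial, rfl⟩
    have hSigeq : Sig = (univ : Set X) := Set.eq_univ_of_univ_subset hXS
    rw [← isSigmaCompact_univ_iff, ← hSigeq]
    exact hSigC
  · exfalso
    -- the tree of "non-small" open sets
    set Node := {V : Set P // IsOpen V ∧ (f '' V \ Sig).Nonempty} with hNode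
    have hstep : ∀ (a : Node) (n : ℕ), ∃ chn : ℕ → Node,
        (∀ k, closure (chn k).1 ⊆ a.1) ∧
        (∀ k, ∃ c, (chn k).1 ⊆ Metric.ball c ((1/2 : ℝ) ^ n)) ∧
        LocallyFinite (fun k => closure (f '' (chn k).1)) := by
      intro a n
      obtain ⟨ch, h1, h2, h3, h4, h5⟩ := aux_step hf hfs hSigC hSig a.1 a.2.1 a.2.2 n
      exact ⟨fun k => ⟨ch k, h1 k, h2 k⟩, h3, h4, h5⟩
    choose chn hch1 hch2 hch3 using hstep
    set root : Node := ⟨univ, isOpen_univ, hroot⟩ with hrootdef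
    set E : List ℕ → Node := treeRec root (fun a n k => chn a (n+1) k) with hEdef
    have hEcons : ∀ (k : ℕ) (u : List ℕ), E (k :: u) = chn (E u) (u.length + 1) k :=
      fun _ _ => rfl
    set Cs : List ℕ → Set X := fun u => closure (f '' (E u).1) with hCsdef
    have hclos : ∀ (k : ℕ) (u : List ℕ), closure (E (k :: u)).1 ⊆ (E u).1 := by
      intro k u
      have h := hch1 (E u) (u.length + 1) k
      rw [← hEcons k u] at h
      exact h
    have hmono : ∀ (k : ℕ) (u : List ℕ), (E (k :: u)).1 ⊆ (E u).1 :=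
      fun k u => subset_closure.trans (hclos k u)
    have hCsmono : ∀ (k : ℕ) (u : List ℕ), Cs (k :: u) ⊆ Cs u :=
      fun k u => closure_mono (Set.image_mono (hmono k u))
    have hball : ∀ (k : ℕ) (u : List ℕ),
        ∃ c, (E (k :: u)).1 ⊆ Metric.ball c ((1/2 : ℝ) ^ (u.length + 1)) := by
      intro k u
      have h := hch2 (E u) (u.length + 1) k
      rw [← hEcons k u] at h
      exact h
    have hchildlf : ∀ u : List ℕ, LocallyFinite (fun k => closure (f '' (E (k :: u)).1)) := by
      intro u
      have h := hch3 (E u) (u.length + 1)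
      have heq : (fun k => closure (f '' (chn (E u) (u.length + 1) k).1)) =
          (fun k => closure (f '' (E (k :: u)).1)) := by
        funext k; rw [← hEcons k u]
      rwa [heq] at h
    -- level families are locally finite
    have hlev : ∀ n, LocallyFinite (fun u : List ℕ => if u.length = n then Cs u else ∅) := by
      intro n
      induction n with
      | zero =>
        intro x
        refine ⟨univ, univ_mem, (Set.finite_singleton ([] : List ℕ)).subset ?_⟩
        intro u hu
        rcases hu with ⟨z, hz1, _⟩
        change z ∈ (if u.length = 0 then Cs u else ∅) at hz1
        by_cases h : u.length = 0
        · rw [Set.mem_singleton_iff]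
          exact List.length_eq_zero_iff.1 h
        · rw [if_neg h] at hz1; exact absurd hz1 (Set.notMem_empty z)
      | succ n ih =>
        intro x
        obtain ⟨t₀, ht₀, hfin₀⟩ := ih x
        set F₀ := hfin₀.toFinset with hF₀
        have hch3' : ∀ u : List ℕ, ∃ t, t ∈ 𝓝 x ∧
            {k : ℕ | (closure (f '' (E (k :: u)).1) ∩ t).Nonempty}.Finite :=
          fun u => hchildlf u x
        choose tf htf hfinf using hch3'
        refine ⟨t₀ ∩ ⋂ u ∈ F₀, tf u,
          inter_mem ht₀ ((Filter.biInter_finset_mem F₀).2 fun u _ => htf u), ?_⟩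
        have hsubset : {w : List ℕ |
            ((if w.length = n+1 then Cs w else ∅) ∩ (t₀ ∩ ⋂ u ∈ F₀, tf u)).Nonempty}
            ⊆ ⋃ u ∈ (F₀ : Set (List ℕ)),
              (fun k => k :: u) '' {k | (closure (f '' (E (k :: u)).1) ∩ tf u).Nonempty} := by
          intro w hw
          obtain ⟨z, hz1, hz2⟩ := hw
          change z ∈ (if w.length = n+1 then Cs w else ∅) at hz1
          by_cases hlen : w.length = n+1
          swap
          · rw [if_neg hlen] at hz1; exact absurd hz1 (Set.notMem_empty z)
          rw [if_pos hlen] at hz1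
          cases w with
          | nil => simp at hlen
          | cons k u =>
            have hulen : u.length = n := by simpa using hlen
            have huF : u ∈ F₀ := by
              rw [hF₀, Set.Finite.mem_toFinset]
              refine ⟨z, ?_, hz2.1⟩
              show z ∈ (if u.length = n then Cs u else ∅)
              rw [if_pos hulen]
              exact hCsmono k u hz1
            have hztf : z ∈ tf u := by
              have := hz2.2
              rw [Set.mem_iInter₂] at this
              exact this u huF
            refine Set.mem_biUnion (Finset.mem_coe.2 huF) ⟨k, ⟨z, hz1, hztf⟩, rfl⟩
        refine (Set.Finite.biUnion F₀.finite_toSet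
          (fun u _ => ((hfinf u).image _))).subset hsubset
    -- the closed "tail" sets
    set D : ℕ → ℕ → Set X := fun n m =>
      ⋃ u : List ℕ, if u.length = n ∧ m ≤ Encodable.encode u then Cs u else ∅ with hDdef
    have hDclosed : ∀ n m, IsClosed (D n m) := by
      intro n m
      apply LocallyFinite.isClosed_iUnion
      · refine (hlev n).subset ?_
        intro u
        by_cases h : u.length = n ∧ m ≤ Encodable.encode u
        · rw [if_pos h, if_pos h.1]
        · rw [if_neg h]; exact Set.empty_subset _
      · intro u
        by_cases h : u.length = n ∧ m ≤ Encodable.encode u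
        · rw [if_pos h]; exact isClosed_closure
        · rw [if_neg h]; exact isClosed_empty
    have hDanti : ∀ n m m', m ≤ m' → D n m' ⊆ D n m := by
      intro n m m' hm x hx
      rcases mem_iUnion.1 hx with ⟨u, hu⟩
      by_cases h : u.length = n ∧ m' ≤ Encodable.encode u
      · refine mem_iUnion.2 ⟨u, ?_⟩
        rw [if_pos ⟨h.1, le_trans hm h.2⟩]
        rwa [if_pos h] at hu
      · rw [if_neg h] at hu; exact absurd hu (Set.notMem_empty x)
    have hDav : ∀ (n : ℕ) (x : X), ∃ m, x ∉ D n m := by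
      intro n x
      have hfin : {u : List ℕ | x ∈ (if u.length = n then Cs u else ∅)}.Finite :=
        (hlev n).point_finite x
      obtain ⟨m, hm⟩ := (hfin.image Encodable.encode).bddAbove
      refine ⟨m + 1, fun hx => ?_⟩
      rcases mem_iUnion.1 hx with ⟨u, hu⟩
      by_cases h : u.length = n ∧ m + 1 ≤ Encodable.encode u
      · rw [if_pos h] at hu
        have hle : Encodable.encode u ≤ m := hm ⟨u, by rw [Set.mem_setOf_eq, if_pos h.1]; exact hu, rfl⟩
        omega
      · rw [if_neg h] at hu; exact hu
    -- apply Menger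
    have hUprop : ∀ n, (∀ s ∈ {S : Set X | ∃ m, S = (D (n+1) m)ᶜ}, IsOpen s) ∧
        ⋃₀ {S : Set X | ∃ m, S = (D (n+1) m)ᶜ} = Set.univ := by
      intro n
      constructor
      · rintro S ⟨m, rfl⟩; exact (hDclosed (n+1) m).isOpen_compl
      · apply Set.eq_univ_of_forall
        intro x
        obtain ⟨m, hm⟩ := hDav (n+1) x
        exact ⟨(D (n+1) m)ᶜ, ⟨m, rfl⟩, hm⟩
    obtain ⟨ℱ, hℱ, hcov⟩ := hMenger (fun n => {S | ∃ m, S = (D (n+1) m)ᶜ}) hUprop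
    have hg : ∀ n, ∃ m, ⋃₀ ℱ n ⊆ (D (n+1) m)ᶜ := by
      intro n
      obtain ⟨hsub, hfin⟩ := hℱ n
      set idx : Set X → ℕ := fun S => if h : ∃ m, S = (D (n+1) m)ᶜ then h.choose else 0 with hidxdef
      refine ⟨hfin.toFinset.sup idx, ?_⟩
      rintro x ⟨S, hS, hxS⟩
      have hSm : ∃ m, S = (D (n+1) m)ᶜ := hsub hS
      have hidx : S = (D (n+1) (idx S))ᶜ := by
        simp only [hidxdef, dif_pos hSm]; exact hSm.choose_spec
      have hle : idx S ≤ hfin.toFinset.sup idx := Finset.le_sup (hfin.mem_toFinset.2 hS)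
      rw [hidx] at hxS
      exact fun hmem => hxS (hDanti (n+1) (idx S) _ hle hmem)
    choose g hgs using hg
    -- the branch
    have hkselE : ∀ (v : List ℕ) (m : ℕ), ∃ k : ℕ, m ≤ Encodable.encode (k :: v) := by
      intro v m
      have hinj : Function.Injective (fun k : ℕ => Encodable.encode (k :: v)) := by
        intro a b hab
        have h2 : a :: v = b :: v := Encodable.encode_injective hab
        exact (List.cons_eq_cons.1 h2).1
      obtain ⟨b, hbmem, hb⟩ := (Set.infinite_range_of_injective hinj).exists_gt m
      obtain ⟨k, rfl⟩ := hbmem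
      exact ⟨k, hb.le⟩
    choose ksel hksel using hkselE
    set br : ℕ → List ℕ := fun n => Nat.rec [] (fun n v => ksel v (g n) :: v) n with hbrdef
    have hbr_succ : ∀ n, br (n+1) = ksel (br n) (g n) :: br n := fun n => rfl
    have hbrlen : ∀ n, (br n).length = n := by
      intro n
      induction n with
      | zero => rfl
      | succ n ih => rw [hbr_succ, List.length_cons, ih]
    have hbrenc : ∀ n, g n ≤ Encodable.encode (br (n+1)) := fun n => hksel (br n) (g n)
    have hchain : ∀ n m, n ≤ m → (E (br m)).1 ⊆ (E (br n)).1 := by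
      intro n m hnm
      induction m, hnm using Nat.le_induction with
      | base => exact subset_rfl
      | succ m hnm ih =>
        rw [hbr_succ]
        exact (hmono _ _).trans ih
    have hpt : ∀ u : List ℕ, ∃ p : P, p ∈ (E u).1 := by
      intro u
      obtain ⟨x, ⟨p, hp, _⟩, _⟩ := (E u).2.2
      exact ⟨p, hp⟩
    choose pt hptm using hpt
    set q : ℕ → P := fun n => pt (br (n+1)) with hqdef
    have hqmem : ∀ n m, n ≤ m → q m ∈ (E (br (n+1))).1 :=
      fun n m h => hchain (n+1) (m+1) (by omega) (hptm _)
    have hcauchy : CauchySeq q := by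
      apply cauchySeq_of_le_tendsto_0 (fun N => 2 * (1/2 : ℝ) ^ (N+1))
      · intro a b N ha hb
        obtain ⟨c, hc⟩ := hball (ksel (br N) (g N)) (br N)
        rw [hbrlen N, ← hbr_succ N] at hc
        have hd1 : dist (q a) c < (1/2 : ℝ)^(N+1) := Metric.mem_ball.1 (hc (hqmem N a ha))
        have hd2 : dist (q b) c < (1/2 : ℝ)^(N+1) := Metric.mem_ball.1 (hc (hqmem N b hb))
        calc dist (q a) (q b) ≤ dist (q a) c + dist (q b) c := dist_triangle_right _ _ _
        _ ≤ 2 * (1/2 : ℝ)^(N+1) := by linarith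
      · have h0 : Tendsto (fun N : ℕ => (1/2 : ℝ) ^ N) atTop (𝓝 0) :=
          tendsto_pow_atTop_nhds_zero_of_lt_one (by norm_num) (by norm_num)
        have h1 := (h0.comp (tendsto_add_atTop_nat 1)).const_mul (2 : ℝ)
        simpa [Function.comp] using h1
    obtain ⟨p, hp⟩ := cauchySeq_tendsto_of_complete hcauchy
    have hfp : ∀ n, f p ∈ Cs (br (n+1)) := by
      intro n
      have hpcl : p ∈ closure (E (br (n+1))).1 :=
        mem_closure_of_tendsto hp (Filter.eventually_atTop.2 ⟨n, fun m hm => hqmem n m hm⟩)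
      exact image_closure_subset_closure_image hf ⟨p, hpcl, rfl⟩
    have hfpD : ∀ n, f p ∈ D (n+1) (g n) := by
      intro n
      refine mem_iUnion.2 ⟨br (n+1), ?_⟩
      rw [if_pos ⟨hbrlen (n+1), hbrenc n⟩]
      exact hfp n
    have hmem : f p ∈ ⋃ n, ⋃₀ ℱ n := hcov ▸ mem_univ (f p)
    rcases mem_iUnion.1 hmem with ⟨n, hn⟩
    exact (hgs n hn) (hfpD n)
end

section
/- If there exists a Michael space (a Lindelöf space whose product with the Baire space ℕ^ℕ is not Lindelöf), then every productively Lindelöf Čech-complete space is σ-compact. -/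
open Set Metric Topology Function Filter

namespace MichaelAux


/-- In a metric space, the intersection of an open set with a σ-compact set is σ-compact. -/
lemma isSigmaCompact_inter_of_isOpen {A : Type*} [MetricSpace A] {U S : Set A}
    (hU : IsOpen U) (hS : IsSigmaCompact S) : IsSigmaCompact (U ∩ S) := by
  obtain ⟨K, hKc, hKU⟩ := hS
  set C : ℕ → Set A := fun n => {x | ∀ y, y ∉ U → ((n : ℝ) + 1)⁻¹ ≤ dist x y} with hC
  have hCclosed : ∀ n, IsClosed (C n) := by
    intro n
    have : C n = ⋂ (y : A) (_ : y ∉ U), {x | ((n : ℝ) + 1)⁻¹ ≤ dist x y} := by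
      ext x; simp [hC]
    rw [this]
    exact isClosed_iInter fun y => isClosed_iInter fun _ =>
      isClosed_le continuous_const (continuous_id.dist continuous_const)
  have hCU : ∀ n, C n ⊆ U := by
    intro n x hx
    by_contra hxU
    have := hx x hxU
    simp at this
    have : (0:ℝ) < ((n : ℝ) + 1)⁻¹ := by positivity
    have := hx x hxU
    simp only [dist_self] at this
    linarith
  have hcover : U ⊆ ⋃ n, C n := by
    intro x hx
    obtain ⟨ε, hε, hball⟩ := Metric.isOpen_iff.1 hU x hx
    obtain ⟨n, hn⟩ := exists_nat_one_div_lt hε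
    refine mem_iUnion.2 ⟨n, fun y hy => ?_⟩
    by_contra h
    push_neg at h
    exact hy (hball (by
      have : (1:ℝ)/((n:ℝ)+1) = ((n:ℝ)+1)⁻¹ := one_div _
      rw [mem_ball']
      calc dist x y < ((n:ℝ)+1)⁻¹ := h
        _ < ε := by rw [← this]; exact hn))
  have : U ∩ S = ⋃ p : ℕ × ℕ, (C p.1 ∩ K p.2) := by
    ext x
    constructor
    · rintro ⟨hxU, hxS⟩
      obtain ⟨n, hn⟩ := mem_iUnion.1 (hcover hxU)
      rw [← hKU] at hxS
      obtain ⟨m, hm⟩ := mem_iUnion.1 hxS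
      exact mem_iUnion.2 ⟨⟨n, m⟩, hn, hm⟩
    · rintro hx
      obtain ⟨⟨n, m⟩, hn, hm⟩ := mem_iUnion.1 hx
      exact ⟨hCU n hn, by rw [← hKU]; exact mem_iUnion.2 ⟨m, hm⟩⟩
  rw [this]
  exact isSigmaCompact_iUnion_of_isCompact _ fun p => ((hKc p.2).inter_left (hCclosed p.1))

/-- A non-totally-bounded set contains a uniformly separated sequence. -/
lemma exists_sep_seq {A : Type*} [MetricSpace A] {s : Set A} (h : ¬ TotallyBounded s) :
    ∃ ε > (0:ℝ), ∃ x : ℕ → A, (∀ n, x n ∈ s) ∧ ∀ m n, m ≠ n → ε ≤ dist (x m) (x n) := by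
  rw [Metric.totallyBounded_iff] at h
  push_neg at h
  obtain ⟨ε, hε, hnet⟩ := h
  refine ⟨ε, hε, ?_⟩
  have key : ∀ t : Finset A, ∃ x ∈ s, ∀ y ∈ t, ε ≤ dist x y := by
    intro t
    have := hnet t t.finite_toSet
    rw [not_subset] at this
    obtain ⟨x, hxs, hx⟩ := this
    refine ⟨x, hxs, fun y hy => ?_⟩
    by_contra hlt
    push_neg at hlt
    exact hx (mem_biUnion hy (mem_ball.2 hlt))
  classical
  choose f hf1 hf2 using key
  let F : ℕ → Finset A := fun n => Nat.rec ∅ (fun _ Fn => insert (f Fn) Fn) n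
  have hFsucc : ∀ n, F (n+1) = insert (f (F n)) (F n) := fun n => rfl
  have hFmono : ∀ m n, m ≤ n → F m ⊆ F n := by
    intro m n hmn
    induction n with
    | zero => simp_all
    | succ k ih =>
      rcases Nat.lt_or_ge m (k+1) with h | h
      · refine (ih (Nat.lt_succ_iff.1 h)).trans ?_
        rw [hFsucc]; exact Finset.subset_insert _ _
      · have : m = k + 1 := le_antisymm hmn h
        subst this; rfl
  have hmem : ∀ m n, m < n → f (F m) ∈ F n := by
    intro m n hmn
    have : f (F m) ∈ F (m+1) := by rw [hFsucc]; exact Finset.mem_insert_self _ _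
    exact hFmono _ _ hmn this
  refine ⟨fun n => f (F n), fun n => hf1 _, fun m n hmn => ?_⟩
  rcases Nat.lt_or_ge m n with h | h
  · rw [dist_comm]; exact hf2 (F n) _ (hmem m n h)
  · exact hf2 (F m) _ (hmem n m (lt_of_le_of_ne h (Ne.symm hmn)))



variable {X : Type*} [TopologicalSpace X]

/-- For a T₃.₅ space, the unit into the Stone–Čech compactification is an embedding. -/
lemma isEmbedding_stoneCechUnit' [T35Space X] :
    Topology.IsEmbedding (stoneCechUnit : X → StoneCech X) := by
  refine ⟨Topology.isInducing_iff_nhds.2 fun x => le_antisymm ?_ ?_, injective_stoneCechUnit_of_t35Space⟩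
  · -- 𝓝 x ≤ comap
    exact continuous_stoneCechUnit.continuousAt.le_comap
  · intro U hU
    obtain ⟨U', hU'sub, hU'open, hxU'⟩ := mem_nhds_iff.1 hU
    obtain ⟨f, hf, hfx, hfK⟩ :=
      CompletelyRegularSpace.completely_regular x U'ᶜ hU'open.isClosed_compl (by simpa)
    let g := stoneCechExtend hf
    have hg : Continuous g := continuous_stoneCechExtend hf
    have hgu : ∀ y : X, g (stoneCechUnit y) = f y := fun y =>
      congrFun (stoneCechExtend_extends hf) y
    refine Filter.mem_comap.2 ⟨g ⁻¹' {z : unitInterval | (z : ℝ) < 1/2}, ?_, ?_⟩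
    · have : IsOpen {z : unitInterval | (z : ℝ) < 1/2} :=
        isOpen_lt continuous_subtype_val continuous_const
      refine (this.preimage hg).mem_nhds ?_
      simp only [mem_preimage, mem_setOf_eq, hgu x, hfx]
      norm_num
    · intro y hy
      simp only [mem_preimage, mem_setOf_eq, hgu y] at hy
      apply hU'sub
      by_contra hyU'
      have : f y = 1 := hfK hyU'
      rw [this] at hy
      norm_num at hy

/-- A Gδ subset of a Polish space is Polish. -/
theorem gdelta_polishSpace {A : Type*} [TopologicalSpace A] [PolishSpace A] {s : Set A}
    (hs : IsGδ s) : PolishSpace s := by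
  obtain ⟨U, hUo, rfl⟩ := isGδ_iff_eq_iInter_nat.1 hs
  haveI : ∀ n, PolishSpace (U n) := fun n => (hUo n).polishSpace
  have hmem : ∀ (x : ↥(⋂ n, U n)) (n : ℕ), (x : A) ∈ U n := fun x n => mem_iInter.1 x.2 n
  let f : ↥(⋂ n, U n) → (Π n : ℕ, ↥(U n)) := fun x n => ⟨x.1, hmem x n⟩
  have hfc : Continuous f := continuous_pi fun n => continuous_subtype_val.subtype_mk _
  have hgf : (fun p : Π n : ℕ, ↥(U n) => (p 0 : A)) ∘ f = Subtype.val := rfl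
  have hind : Topology.IsInducing f :=
    Topology.IsInducing.of_comp hfc ((continuous_apply 0).subtype_val) (hgf ▸ Topology.IsInducing.subtypeVal)
  have hinj : Function.Injective f := fun x y hxy => Subtype.ext (congrArg (fun p : Π n : ℕ, ↥(U n) => (p 0 : A)) hxy)
  have hrange : range f = {p : Π n : ℕ, ↥(U n) | ∀ n m, (p n : A) = (p m : A)} := by
    ext p
    constructor
    · rintro ⟨x, rfl⟩ n m; rfl
    · intro hp
      have hx : (p 0 : A) ∈ ⋂ n, U n := mem_iInter.2 fun n => (hp 0 n) ▸ (p n).2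
      exact ⟨⟨(p 0 : A), hx⟩, funext fun n => Subtype.ext (hp 0 n)⟩
  have hclosed : IsClosed (range f) := by
    rw [hrange]
    have : {p : Π n : ℕ, ↥(U n) | ∀ n m, (p n : A) = (p m : A)} =
        ⋂ (n : ℕ) (m : ℕ), {p : Π n : ℕ, ↥(U n) | (p n : A) = (p m : A)} := by
      ext p; simp
    rw [this]
    exact isClosed_iInter fun n => isClosed_iInter fun m =>
      isClosed_eq ((continuous_apply n).subtype_val) ((continuous_apply m).subtype_val)
  exact Topology.IsClosedEmbedding.polishSpace ⟨⟨hind, hinj⟩, hclosed⟩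




section Tree

variable {Y : Type*} [MetricSpace Y] {P : Set Y}

/-- A "good" open set: one meeting `P`. -/
def Good (P O : Set Y) : Prop := IsOpen O ∧ (O ∩ P).Nonempty

/-- Specification for a family of children of a node `O`. -/
def ChildSpec (P O : Set Y) (δ : ℝ) (c : ℝ × (ℕ → Set Y)) : Prop :=
  0 < c.1 ∧ ∀ n : ℕ, Good P (c.2 n) ∧ closure (c.2 n) ⊆ O ∧
    (∀ a ∈ c.2 n, ∀ b ∈ c.2 n, dist a b ≤ δ) ∧
    ∀ m, n ≠ m → ∀ a ∈ closure (c.2 n), ∀ b ∈ closure (c.2 m), c.1 ≤ dist a b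

lemma exists_children [CompleteSpace Y] (hPc : IsClosed P)
    (hP : ∀ O : Set Y, IsOpen O → (O ∩ P).Nonempty → ¬ IsSigmaCompact (O ∩ P))
    {O : Set Y} (hO : Good P O) {δ : ℝ} (hδ : 0 < δ) :
    ∃ c : ℝ × (ℕ → Set Y), ChildSpec P O δ c := by
  obtain ⟨x₀, hx₀O, hx₀P⟩ := hO.2
  obtain ⟨r0, hr0, hball⟩ := Metric.isOpen_iff.1 hO.1 x₀ hx₀O
  set r : ℝ := r0/4 with hr_def
  have hr : 0 < r := by positivity
  set O' : Set Y := ball x₀ r with hO'_def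
  have hO'P : (O' ∩ P).Nonempty := ⟨x₀, mem_ball_self hr, hx₀P⟩
  have hnsc : ¬ IsSigmaCompact (O' ∩ P) := hP O' isOpen_ball hO'P
  set T : Set Y := closure (O' ∩ P) with hT_def
  have hTnc : ¬ IsCompact T := by
    intro hK
    apply hnsc
    have h1 : IsCompact (T ∩ P) := hK.inter_right hPc
    have h2 : IsSigmaCompact (O' ∩ (T ∩ P)) :=
      isSigmaCompact_inter_of_isOpen isOpen_ball h1.isSigmaCompact
    have heq : O' ∩ (T ∩ P) = O' ∩ P := by
      apply subset_antisymm
      · rintro x ⟨h1', h2', h3'⟩; exact ⟨h1', h3'⟩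
      · intro x hx; exact ⟨hx.1, subset_closure hx, hx.2⟩
    rwa [heq] at h2
  have hTnb : ¬ TotallyBounded T := fun htb =>
    hTnc (isCompact_iff_totallyBounded_isComplete.2 ⟨htb, isClosed_closure.isComplete⟩)
  obtain ⟨ε, hε, x, hxT, hsep⟩ := exists_sep_seq hTnb
  set ρ : ℝ := min (ε/4) (min r (δ/2)) with hρ_def
  have hρ : 0 < ρ := by
    apply lt_min (by positivity) (lt_min hr (by positivity))
  have hρε : ρ ≤ ε/4 := min_le_left _ _
  have hρr : ρ ≤ r := le_trans (min_le_right _ _) (min_le_left _ _)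
  have hρδ : ρ ≤ δ/2 := le_trans (min_le_right _ _) (min_le_right _ _)
  have hxO' : ∀ n, dist (x n) x₀ ≤ r := by
    intro n
    have : x n ∈ closure O' := closure_mono inter_subset_left (hxT n)
    have := (closure_ball_subset_closedBall : closure (ball x₀ r) ⊆ closedBall x₀ r) this
    rwa [mem_closedBall] at this
  refine ⟨(ε/2, fun n => ball (x n) ρ), by positivity, fun n => ⟨⟨isOpen_ball, ?_⟩, ?_, ?_, ?_⟩⟩
  · -- meets P
    obtain ⟨b, hb, hbd⟩ := Metric.mem_closure_iff.1 (hxT n) ρ hρ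
    exact ⟨b, mem_ball'.2 hbd, hb.2⟩
  · -- closure ⊆ O
    intro a ha
    have had : dist a (x n) ≤ ρ := by
      have := (closure_ball_subset_closedBall : closure (ball (x n) ρ) ⊆ closedBall (x n) ρ) ha
      rwa [mem_closedBall] at this
    apply hball
    rw [mem_ball]
    calc dist a x₀ ≤ dist a (x n) + dist (x n) x₀ := dist_triangle _ _ _
      _ ≤ ρ + r := add_le_add had (hxO' n)
      _ ≤ r + r := by linarith
      _ < r0 := by rw [hr_def]; linarith
  · -- diameter control
    intro a ha b hb
    rw [mem_ball] at ha hb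
    calc dist a b ≤ dist a (x n) + dist (x n) b := dist_triangle _ _ _
      _ ≤ ρ + ρ := by
          rw [dist_comm (x n) b] at *
          exact add_le_add ha.le hb.le
      _ ≤ δ := by linarith
  · -- separation
    intro m hnm a ha b hb
    have had : dist a (x n) ≤ ρ := by
      have := (closure_ball_subset_closedBall) ha; rwa [mem_closedBall] at this
    have hbd : dist b (x m) ≤ ρ := by
      have := (closure_ball_subset_closedBall) hb; rwa [mem_closedBall] at this
    have h1 : ε ≤ dist (x n) (x m) := hsep n m hnm
    have h2 : dist (x n) (x m) ≤ dist (x n) a + dist a b + dist b (x m) := dist_triangle4 _ _ _ _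
    rw [dist_comm (x n) a] at h2
    linarith

variable [CompleteSpace Y]
variable (hPc : IsClosed P)
  (hP : ∀ O : Set Y, IsOpen O → (O ∩ P).Nonempty → ¬ IsSigmaCompact (O ∩ P))
  (hPne : (univ ∩ P).Nonempty)

/-- The chosen children data of a good node. -/
noncomputable def child {O : Set Y} (hO : Good P O) (k : ℕ) : ℝ × (ℕ → Set Y) :=
  (exists_children hPc hP hO (show (0:ℝ) < (1/2)^(k+1) by positivity)).choose

lemma child_spec {O : Set Y} (hO : Good P O) (k : ℕ) :
    ChildSpec P O ((1/2:ℝ)^(k+1)) (child hPc hP hO k) :=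
  (exists_children hPc hP hO (show (0:ℝ) < (1/2)^(k+1) by positivity)).choose_spec

/-- The tree of good open sets, indexed by (reversed) finite sequences. -/
noncomputable def node : List ℕ → {O : Set Y // Good P O}
  | [] => ⟨univ, isOpen_univ, hPne⟩
  | n :: s => ⟨(child hPc hP (node s).2 s.length).2 n,
      ((child_spec hPc hP (node s).2 s.length).2 n).1⟩

/-- The separation constant for the children of a node. -/
noncomputable def eps (s : List ℕ) : ℝ :=
  (child hPc hP (node hPc hP hPne s).2 s.length).1

lemma eps_pos (s : List ℕ) : 0 < eps hPc hP hPne s :=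
  (child_spec hPc hP (node hPc hP hPne s).2 s.length).1

lemma node_cons (n : ℕ) (s : List ℕ) :
    (node hPc hP hPne (n :: s)).1 = (child hPc hP (node hPc hP hPne s).2 s.length).2 n := rfl

lemma node_closure (n : ℕ) (s : List ℕ) :
    closure (node hPc hP hPne (n :: s)).1 ⊆ (node hPc hP hPne s).1 :=
  ((child_spec hPc hP (node hPc hP hPne s).2 s.length).2 n).2.1

lemma node_diam (n : ℕ) (s : List ℕ) :
    ∀ a ∈ (node hPc hP hPne (n :: s)).1, ∀ b ∈ (node hPc hP hPne (n :: s)).1,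
      dist a b ≤ (1/2:ℝ)^(s.length+1) :=
  ((child_spec hPc hP (node hPc hP hPne s).2 s.length).2 n).2.2.1

lemma node_sep {n m : ℕ} (hnm : n ≠ m) (s : List ℕ) :
    ∀ a ∈ closure (node hPc hP hPne (n :: s)).1, ∀ b ∈ closure (node hPc hP hPne (m :: s)).1,
      eps hPc hP hPne s ≤ dist a b :=
  ((child_spec hPc hP (node hPc hP hPne s).2 s.length).2 n).2.2.2 m hnm

/-- Reversed prefix of a branch. -/
def pre (σ : ℕ → ℕ) : ℕ → List ℕ
  | 0 => []
  | k+1 => σ k :: pre σ k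

@[simp] lemma pre_zero (σ : ℕ → ℕ) : pre σ 0 = [] := rfl
@[simp] lemma pre_succ (σ : ℕ → ℕ) (k : ℕ) : pre σ (k+1) = σ k :: pre σ k := rfl

lemma pre_length (σ : ℕ → ℕ) : ∀ k, (pre σ k).length = k
  | 0 => rfl
  | k+1 => by simp [pre_length σ k]

lemma node_anti (σ : ℕ → ℕ) : ∀ k l, k ≤ l →
    (node hPc hP hPne (pre σ l)).1 ⊆ (node hPc hP hPne (pre σ k)).1 := by
  intro k l hkl
  induction l with
  | zero => simp_all
  | succ l ih =>
    rcases Nat.lt_or_ge k (l+1) with h | h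
    · refine subset_trans ?_ (ih (Nat.lt_succ_iff.1 h))
      refine subset_trans subset_closure (node_closure hPc hP hPne _ _)
    · have : k = l + 1 := le_antisymm hkl h
      subst this; rfl

/-- The branch relation: `y` lies in the closures along the branch `σ`. -/
def Br (σ : ℕ → ℕ) (y : Y) : Prop :=
  ∀ k, y ∈ closure (node hPc hP hPne (pre σ k)).1

/-- The "Baire kernel". -/
def Nset : Set Y := {y | ∃ σ, Br hPc hP hPne σ y}

open Classical in
/-- The coding map. -/
noncomputable def code (y : Y) : ℕ → ℕ :=
  if h : ∃ σ, Br hPc hP hPne σ y then h.choose else fun _ => 0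

lemma code_spec {y : Y} (hy : y ∈ Nset hPc hP hPne) : Br hPc hP hPne (code hPc hP hPne y) y := by
  have h : ∃ σ, Br hPc hP hPne σ y := hy
  rw [code, dif_pos h]
  exact h.choose_spec

lemma Br_pre_unique {σ τ : ℕ → ℕ} {y : Y} (hσ : Br hPc hP hPne σ y)
    (hτ : Br hPc hP hPne τ y) : ∀ k, pre σ k = pre τ k ∧ σ k = τ k := by
  intro k
  induction k with
  | zero =>
    refine ⟨rfl, ?_⟩
    by_contra hne
    have h1 : y ∈ closure (node hPc hP hPne (σ 0 :: [])).1 := hσ 1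
    have h2 : y ∈ closure (node hPc hP hPne (τ 0 :: [])).1 := hτ 1
    have := node_sep hPc hP hPne hne [] y h1 y h2
    have := eps_pos hPc hP hPne ([] : List ℕ)
    simp only [dist_self] at *
    linarith
  | succ k ih =>
    have hp : pre σ (k+1) = pre τ (k+1) := by
      simp [ih.1, ih.2]
    refine ⟨hp, ?_⟩
    by_contra hne
    have h1 : y ∈ closure (node hPc hP hPne (σ (k+1) :: pre σ (k+1))).1 := hσ (k+2)
    have h2 : y ∈ closure (node hPc hP hPne (τ (k+1) :: pre τ (k+1))).1 := hτ (k+2)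
    rw [← hp] at h2
    have := node_sep hPc hP hPne hne (pre σ (k+1)) y h1 y h2
    have := eps_pos hPc hP hPne (pre σ (k+1))
    simp only [dist_self] at *
    linarith

lemma Br_unique {σ τ : ℕ → ℕ} {y : Y} (hσ : Br hPc hP hPne σ y)
    (hτ : Br hPc hP hPne τ y) : σ = τ :=
  funext fun k => (Br_pre_unique hPc hP hPne hσ hτ k).2

/-- Local stability of prefixes. -/
lemma prefix_stable (y : Y) (σy : ℕ → ℕ) (hy : Br hPc hP hPne σy y) (k : ℕ) :
    ∃ r > (0:ℝ), ∀ x σx, Br hPc hP hPne σx x → dist x y < r → pre σx k = pre σy k := by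
  induction k with
  | zero => exact ⟨1, one_pos, fun _ _ _ _ => rfl⟩
  | succ k ih =>
    obtain ⟨r, hr, hst⟩ := ih
    refine ⟨min r (eps hPc hP hPne (pre σy k)),
      lt_min hr (eps_pos hPc hP hPne _), fun x σx hx hdist => ?_⟩
    have hpk : pre σx k = pre σy k := hst x σx hx (lt_of_lt_of_le hdist (min_le_left _ _))
    have hhead : σx k = σy k := by
      by_contra hne
      have h1 := hx (k+1)
      have h2 := hy (k+1)
      simp only [pre_succ] at h1 h2
      rw [hpk] at h1
      have := node_sep hPc hP hPne hne (pre σy k) x h1 y h2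
      have := lt_of_lt_of_le hdist (min_le_right _ _)
      linarith
    simp [hpk, hhead]

lemma Nset_isClosed : IsClosed (Nset hPc hP hPne) := by
  refine IsSeqClosed.isClosed ?_
  intro u y hu huy
  choose σ hσ using hu
  have stab : ∀ k, ∃ t : List ℕ, ∀ᶠ j in atTop, pre (σ j) k = t := by
    intro k
    induction k with
    | zero => exact ⟨[], Eventually.of_forall fun j => rfl⟩
    | succ k ih =>
      obtain ⟨t, ht⟩ := ih
      have hcn : ∀ᶠ j in atTop, dist (u j) y < eps hPc hP hPne t / 2 :=
        (Metric.tendsto_nhds.1 huy _ (half_pos (eps_pos hPc hP hPne t)))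
      obtain ⟨J, hJ⟩ := eventually_atTop.1 (ht.and hcn)
      refine ⟨σ J k :: t, eventually_atTop.2 ⟨J, fun j hj => ?_⟩⟩
      have hj1 := hJ j hj
      have hJ1 := hJ J le_rfl
      have hhead : σ j k = σ J k := by
        by_contra hne
        have h1 := hσ j (k+1)
        have h2 := hσ J (k+1)
        simp only [pre_succ] at h1 h2
        rw [hj1.1] at h1
        rw [hJ1.1] at h2
        have hsep := node_sep hPc hP hPne hne t (u j) h1 (u J) h2
        have : dist (u j) (u J) ≤ dist (u j) y + dist y (u J) := dist_triangle _ _ _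
        rw [dist_comm y (u J)] at this
        have := hj1.2
        have := hJ1.2
        linarith
      simp [hhead, hj1.1]
  choose t ht using stab
  have hcoh : ∀ k, ∃ n, t (k+1) = n :: t k := by
    intro k
    obtain ⟨J, hJ⟩ := eventually_atTop.1 ((ht (k+1)).and (ht k))
    have h := hJ J le_rfl
    exact ⟨σ J k, by rw [← h.1, pre_succ, h.2]⟩
  choose hd hhd using hcoh
  have hpre : ∀ k, pre hd k = t k := by
    intro k
    induction k with
    | zero =>
      obtain ⟨J, hJ⟩ := eventually_atTop.1 (ht 0)
      rw [pre_zero, ← hJ J le_rfl, pre_zero]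
    | succ k ih => rw [pre_succ, ih, ← hhd k]
  refine ⟨hd, fun k => ?_⟩
  have hev : ∀ᶠ j in atTop, u j ∈ closure (node hPc hP hPne (t k)).1 :=
    (ht k).mono fun j hj => hj ▸ hσ j k
  rw [hpre k]
  exact isClosed_closure.mem_of_tendsto huy hev

lemma code_continuousOn : ContinuousOn (code hPc hP hPne) (Nset hPc hP hPne) := by
  intro y hy
  rw [continuousWithinAt_pi]
  intro k
  have hBy := code_spec hPc hP hPne hy
  obtain ⟨r, hr, hst⟩ := prefix_stable hPc hP hPne y _ hBy (k+1)
  have hev : (fun x => code hPc hP hPne x k) =ᶠ[𝓝[Nset hPc hP hPne] y]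
      (fun _ => code hPc hP hPne y k) := by
    filter_upwards [self_mem_nhdsWithin,
      mem_nhdsWithin_of_mem_nhds (Metric.ball_mem_nhds y hr)] with x hxN hxb
    have hBx := code_spec hPc hP hPne hxN
    have := hst x _ hBx (by rwa [mem_ball] at hxb)
    simpa using congrArg List.headI this
  exact (continuousWithinAt_const : ContinuousWithinAt (fun _ => code hPc hP hPne y k) _ y
    ).congr_of_eventuallyEq hev rfl

lemma code_surj (σ : ℕ → ℕ) : ∃ y ∈ Nset hPc hP hPne, code hPc hP hPne y = σ := by
  have hne : ∀ k, ((node hPc hP hPne (pre σ k)).1 ∩ P).Nonempty :=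
    fun k => (node hPc hP hPne (pre σ k)).2.2
  choose x hx using hne
  have hxmem : ∀ k l, k ≤ l → x l ∈ (node hPc hP hPne (pre σ k)).1 :=
    fun k l hkl => node_anti hPc hP hPne σ k l hkl (hx l).1
  have hcauchy : CauchySeq x := by
    refine Metric.cauchySeq_iff'.2 fun ε hε => ?_
    obtain ⟨K, hK⟩ := exists_pow_lt_of_lt_one hε (show (1/2:ℝ) < 1 by norm_num)
    refine ⟨K+1, fun n hn => ?_⟩
    have h1 : x n ∈ (node hPc hP hPne (pre σ (K+1))).1 := hxmem _ _ hn
    have h2 : x (K+1) ∈ (node hPc hP hPne (pre σ (K+1))).1 := hxmem _ _ le_rfl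
    have hd := node_diam hPc hP hPne (σ K) (pre σ K) (x n) h1 (x (K+1)) h2
    calc dist (x n) (x (K+1)) ≤ (1/2:ℝ)^((pre σ K).length+1) := hd
      _ = (1/2:ℝ)^(K+1) := by rw [pre_length]
      _ ≤ (1/2:ℝ)^K := by
          apply pow_le_pow_of_le_one <;> norm_num
      _ < ε := hK
  obtain ⟨y, hy⟩ := cauchySeq_tendsto_of_complete hcauchy
  have hBr : Br hPc hP hPne σ y := by
    intro k
    have hev : ∀ᶠ j in atTop, x j ∈ closure (node hPc hP hPne (pre σ k)).1 :=
      eventually_atTop.2 ⟨k, fun j hj => subset_closure (hxmem k j hj)⟩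
    exact isClosed_closure.mem_of_tendsto hy hev
  exact ⟨y, ⟨σ, hBr⟩, Br_unique hPc hP hPne (code_spec hPc hP hPne ⟨σ, hBr⟩) hBr⟩

end Tree

/-- The key Hurewicz-type lemma: a completely metrizable, second countable space which is
not σ-compact has a closed subset which maps continuously onto the Baire space. -/
theorem hurewicz_aux (Y : Type*) [MetricSpace Y] [CompleteSpace Y] [SecondCountableTopology Y]
    (h : ¬ IsSigmaCompact (univ : Set Y)) :
    ∃ N : Set Y, IsClosed N ∧ ∃ g : Y → ℕ → ℕ, ContinuousOn g N ∧
      ∀ σ : ℕ → ℕ, ∃ y ∈ N, g y = σ := by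
  classical
  set W : Set Y := ⋃₀ {U : Set Y | IsOpen U ∧ IsSigmaCompact U} with hW_def
  have hWopen : IsOpen W := isOpen_sUnion fun U hU => hU.1
  have hWsc : IsSigmaCompact W := by
    have hLin : IsLindelof W :=
      (HereditarilyLindelofSpace.isHereditarilyLindelof_univ).isLindelof_subset (subset_univ W)
    have hcov : W ⊆ ⋃ U : {U : Set Y // IsOpen U ∧ IsSigmaCompact U}, U.1 := by
      intro x hx
      obtain ⟨U, hU, hxU⟩ := hx
      exact mem_iUnion.2 ⟨⟨U, hU⟩, hxU⟩
    obtain ⟨t, htc, htcov⟩ := hLin.elim_countable_subcover _ (fun U => U.2.1) hcov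
    have : W = ⋃ U ∈ t, (U : {U : Set Y // IsOpen U ∧ IsSigmaCompact U}).1 := by
      apply subset_antisymm htcov
      intro x hx
      obtain ⟨U, hU, hxU⟩ := mem_iUnion₂.1 hx
      exact ⟨U.1, U.2, hxU⟩
    rw [this]
    exact isSigmaCompact_biUnion htc fun U _ => U.2.2
  set P : Set Y := Wᶜ with hP_def
  have hPc : IsClosed P := hWopen.isClosed_compl
  have hP : ∀ O : Set Y, IsOpen O → (O ∩ P).Nonempty → ¬ IsSigmaCompact (O ∩ P) := by
    intro O hO hOP hsc
    have hOW : IsSigmaCompact (O ∩ W) := isSigmaCompact_inter_of_isOpen hO hWsc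
    have hOsc : IsSigmaCompact O := by
      have : O = (O ∩ P) ∪ (O ∩ W) := by
        rw [← inter_union_distrib_left, hP_def, compl_union_self, inter_univ]
      rw [this, Set.union_eq_iUnion]
      exact isSigmaCompact_iUnion _ (fun b => by cases b <;> simpa)
    have : O ⊆ W := subset_sUnion_of_mem ⟨hO, hOsc⟩
    obtain ⟨z, hzO, hzP⟩ := hOP
    exact hzP (this hzO)
  have hPne : (univ ∩ P).Nonempty := by
    rw [univ_inter]
    rcases eq_empty_or_nonempty P with hPe | hPn
    · exfalso
      apply h
      have : W = univ := by
        rw [hP_def] at hPe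
        rwa [compl_empty_iff] at hPe
      rw [← this]
      exact hWsc
    · exact hPn
  exact ⟨Nset hPc hP hPne, Nset_isClosed hPc hP hPne, code hPc hP hPne,
    code_continuousOn hPc hP hPne, code_surj hPc hP hPne⟩


end MichaelAux

universe u

/-- A space is productively Lindelöf if its product with every Lindelöf space is
Lindelöf. -/
def ProductivelyLindelof (X : Type u) [TopologicalSpace X] : Prop :=
  ∀ (Y : Type u) (_ : TopologicalSpace Y), LindelofSpace Y → LindelofSpace (X × Y)

/-- A Tychonoff space is Čech-complete if its image in its Stone–Čech
compactification is a Gδ set. -/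
def CechComplete (X : Type*) [TopologicalSpace X] : Prop :=
  IsGδ (Set.range (stoneCechUnit : X → StoneCech X))

/-- A Michael space is a Lindelöf regular Hausdorff space whose product with the
Baire space `ℕ → ℕ` is not Lindelöf. -/
def IsMichaelSpace (M : Type u) [TopologicalSpace M] : Prop :=
  T3Space M ∧ LindelofSpace M ∧ ¬ LindelofSpace (M × (ℕ → ℕ))

open MichaelAux Set Metric Topology Function in
/-- If there is a Michael space, then every productively Lindelöf Čech-complete
(Tychonoff) space is σ-compact. -/
theorem michael_productivelyLindelof_cechComplete_sigmaCompact
    (hMichael : ∃ (M : Type u) (_ : TopologicalSpace M), IsMichaelSpace M)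
    (X : Type u) [TopologicalSpace X] [T35Space X]
    (hCech : CechComplete X) (hProd : ProductivelyLindelof X) :
    SigmaCompactSpace X := by
  classical
  rcases isEmpty_or_nonempty X with hXe | hXne
  · infer_instance
  by_contra hX
  obtain ⟨M, tM, hM⟩ := hMichael
  haveI : LindelofSpace M := hM.2.1
  haveI hXM : LindelofSpace (X × M) := hProd M tM hM.2.1
  haveI : LindelofSpace X := by
    haveI h1 : LindelofSpace (X × PUnit.{u+1}) := hProd PUnit.{u+1} inferInstance inferInstance
    have h2 : IsLindelof (Prod.fst '' (univ : Set (X × PUnit.{u+1}))) :=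
      isLindelof_univ.image continuous_fst
    rw [image_univ, Surjective.range_eq Prod.fst_surjective] at h2
    exact isLindelof_univ_iff.1 h2
  -- Decompose the (Gδ) image of `X` in its Stone–Čech compactification.
  obtain ⟨G, hGo, hGeq⟩ := isGδ_iff_eq_iInter_nat.1 hCech
  have hRL : IsLindelof (range (stoneCechUnit : X → StoneCech X)) := by
    rw [← image_univ]
    exact isLindelof_univ.image continuous_stoneCechUnit
  -- countably many functions separating `X` from the complement of each `G n`
  have hFn : ∀ n : ℕ, ∃ F : ℕ → StoneCech X → ℝ, (∀ k, Continuous (F k)) ∧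
      (∀ k z, z ∉ G n → F k z = 0) ∧
      (∀ a ∈ range (stoneCechUnit : X → StoneCech X), ∃ k, F k a ≠ 0) := by
    intro n
    have hpt : ∀ a : ↥(range (stoneCechUnit : X → StoneCech X)), ∃ f : StoneCech X → ℝ,
        Continuous f ∧ (∀ z, z ∉ G n → f z = 0) ∧ f a ≠ 0 := by
      intro a
      have haG : (a : StoneCech X) ∈ G n := by
        have h : (a : StoneCech X) ∈ ⋂ n, G n := by rw [← hGeq]; exact a.2
        exact mem_iInter.1 h n
      obtain ⟨f, hfc, hf0, hf1⟩ := CompletelyRegularSpace.completely_regular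
        (a : StoneCech X) (G n)ᶜ (hGo n).isClosed_compl (by simpa using haG)
      refine ⟨fun z => 1 - ((f z : ℝ)),
        continuous_const.sub (continuous_subtype_val.comp hfc), ?_, ?_⟩
      · intro z hz
        have h1 : f z = 1 := hf1 hz
        show (1:ℝ) - ((f z : ℝ)) = 0
        rw [h1]
        norm_num
      · show (1:ℝ) - ((f (a : StoneCech X) : ℝ)) ≠ 0
        rw [hf0]
        norm_num
    choose f hfc hf0 hfne using hpt
    have hcov : range (stoneCechUnit : X → StoneCech X) ⊆ ⋃ a, {z | f a z ≠ 0} :=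
      fun b hb => mem_iUnion.2 ⟨⟨b, hb⟩, hfne ⟨b, hb⟩⟩
    obtain ⟨t, htc, htcov⟩ := hRL.elim_countable_subcover _
      (fun a => (isOpen_compl_singleton.preimage (hfc a) : IsOpen (f a ⁻¹' {(0:ℝ)}ᶜ))) hcov
    have htne : t.Nonempty := by
      rcases t.eq_empty_or_nonempty with rfl | h
      · exfalso
        have := htcov (mem_range_self (Classical.arbitrary X))
        simpa using this
      · exact h
    obtain ⟨u, hu⟩ := htc.exists_eq_range htne
    refine ⟨fun k => f (u k), fun k => hfc _, fun k z hz => hf0 _ z hz, ?_⟩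
    intro a ha
    obtain ⟨i, hit, hi⟩ := mem_iUnion₂.1 (htcov ha)
    rw [hu] at hit
    obtain ⟨k, rfl⟩ := hit
    exact ⟨k, hi⟩
  choose F hFc hF0 hFne using hFn
  set e : StoneCech X → ((ℕ × ℕ) → ℝ) := fun z p => F p.1 p.2 z with he_def
  have hec : Continuous e := continuous_pi fun p => hFc p.1 p.2
  set φ : X → ((ℕ × ℕ) → ℝ) := fun x => e (stoneCechUnit x) with hφ_def
  have hφc : Continuous φ := hec.comp continuous_stoneCechUnit
  set R : Set ((ℕ × ℕ) → ℝ) := range φ with hR_def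
  have key : ∀ z (x : X), e z = e (stoneCechUnit x) →
      z ∈ range (stoneCechUnit : X → StoneCech X) := by
    intro z x hzx
    rw [hGeq]
    refine mem_iInter.2 fun n => ?_
    obtain ⟨k, hk⟩ := hFne n (stoneCechUnit x) (mem_range_self x)
    by_contra hzn
    have h0 : F n k z = 0 := hF0 n k z hzn
    have h1 : F n k z = F n k (stoneCechUnit x) := congrFun hzx (n, k)
    rw [h0] at h1
    exact hk h1.symm
  have hkeyR : ∀ z, e z ∈ R → z ∈ range (stoneCechUnit : X → StoneCech X) := by
    intro z hz
    obtain ⟨x, hx⟩ := hz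
    exact key z x hx.symm
  -- R is a Gδ subset of the Polish space of functions, hence Polish
  have hReq : R = (e '' univ) ∩ ⋂ n, ((e '' (G n)ᶜ)ᶜ) := by
    ext w
    constructor
    · rintro ⟨x, rfl⟩
      refine ⟨⟨stoneCechUnit x, mem_univ _, rfl⟩, mem_iInter.2 fun n => ?_⟩
      rintro ⟨z, hz, hez⟩
      have hzr := key z x hez
      rw [hGeq] at hzr
      exact hz (mem_iInter.1 hzr n)
    · rintro ⟨⟨z, -, rfl⟩, hw⟩
      have hzR : z ∈ range (stoneCechUnit : X → StoneCech X) := by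
        rw [hGeq]
        refine mem_iInter.2 fun n => ?_
        by_contra hzn
        exact (mem_iInter.1 hw n) ⟨z, hzn, rfl⟩
      obtain ⟨x, rfl⟩ := hzR
      exact mem_range_self x
  have hRGδ : IsGδ R := by
    letI := TopologicalSpace.upgradeIsCompletelyMetrizable ((ℕ × ℕ) → ℝ)
    rw [hReq]
    have h1 : IsClosed (e '' univ) := (isCompact_univ.image hec).isClosed
    have h2 : ∀ n, IsOpen ((e '' (G n)ᶜ)ᶜ) := fun n =>
      (((hGo n).isClosed_compl.isCompact).image hec).isClosed.isOpen_compl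
    exact h1.isGδ.inter (IsGδ.iInter_of_isOpen h2)
  haveI hPolR : PolishSpace ↥R := gdelta_polishSpace hRGδ
  -- R is not σ-compact (otherwise X would be)
  have hnR : ¬ IsSigmaCompact (univ : Set ↥R) := by
    intro hsc
    apply hX
    obtain ⟨K, hKc, hKU⟩ := hsc
    refine ⟨⟨fun n => φ ⁻¹' (Subtype.val '' K n), fun n => ?_, ?_⟩⟩
    · have hCc : IsCompact (Subtype.val '' K n) := (hKc n).image continuous_subtype_val
      have hpre : IsCompact (e ⁻¹' (Subtype.val '' K n)) :=
        (hCc.isClosed.preimage hec).isCompact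
      have hsub : e ⁻¹' (Subtype.val '' K n) ⊆ range (stoneCechUnit : X → StoneCech X) := by
        intro z hz
        refine hkeyR z ?_
        obtain ⟨v, _, hv⟩ := hz
        rw [← hv]
        exact v.2
      have himg : stoneCechUnit '' (φ ⁻¹' (Subtype.val '' K n))
          = e ⁻¹' (Subtype.val '' K n) := by
        have hpp : φ ⁻¹' (Subtype.val '' K n)
            = stoneCechUnit ⁻¹' (e ⁻¹' (Subtype.val '' K n)) := rfl
        rw [hpp, image_preimage_eq_inter_range, inter_eq_left.2 hsub]
      rw [isEmbedding_stoneCechUnit'.isCompact_iff, himg]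
      exact hpre
    · apply eq_univ_of_forall
      intro x
      have hmem : (⟨φ x, mem_range_self x⟩ : ↥R) ∈ ⋃ n, K n := by
        rw [hKU]; exact mem_univ _
      obtain ⟨n, hn⟩ := mem_iUnion.1 hmem
      exact mem_iUnion.2 ⟨n, ⟨⟨φ x, mem_range_self x⟩, hn, rfl⟩⟩
  letI mR := TopologicalSpace.upgradeIsCompletelyMetrizable ↥R
  obtain ⟨N, hNc, g, hg, hsurj⟩ :=
    @hurewicz_aux ↥R mR.toMetricSpace mR.toCompleteSpace (inferInstance : SecondCountableTopology ↥R) hnR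
  set φ' : X → ↥R := fun x => (⟨φ x, mem_range_self x⟩ : ↥R) with hφ'_def
  have hφ'c : Continuous φ' := hφc.subtype_mk _
  set Z : Set X := φ' ⁻¹' N with hZ_def
  have hZc : IsClosed Z := hNc.preimage hφ'c
  set ψ : X × M → M × (ℕ → ℕ) := fun p => (p.2, g (φ' p.1)) with hψ_def
  have hψ : ContinuousOn ψ (Z ×ˢ (univ : Set M)) := by
    apply ContinuousOn.prodMk
    · exact continuous_snd.continuousOn
    · refine hg.comp (hφ'c.comp continuous_fst).continuousOn ?_
      intro p hp
      exact hp.1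
  have hlin : IsLindelof (Z ×ˢ (univ : Set M)) := (hZc.prod isClosed_univ).isLindelof
  have himg : ψ '' (Z ×ˢ (univ : Set M)) = univ := by
    apply eq_univ_of_forall
    rintro ⟨m, σ⟩
    obtain ⟨y, hyN, hyg⟩ := hsurj σ
    obtain ⟨x, hx⟩ := y.2
    have hφ'x : φ' x = y := Subtype.ext hx
    refine ⟨(x, m), ⟨show φ' x ∈ N by rw [hφ'x]; exact hyN, mem_univ m⟩, ?_⟩
    show (m, g (φ' x)) = (m, σ)
    rw [hφ'x, hyg]
  have hcontra : LindelofSpace (M × (ℕ → ℕ)) := by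
    rw [← isLindelof_univ_iff, ← himg]
    exact hlin.image_of_continuousOn hψ
  exact hM.2.2 hcontra
end

section
/- If a T1 topological space X is od-compact, then the set of non-isolated points of X is compact. -/
open Set Cardinal

universe u

/-- A space is od-compact if every cover by open dense subsets has a finite
subcover. -/
def OdCompact (X : Type*) [TopologicalSpace X] : Prop :=
  ∀ 𝒰 : Set (Set X), (∀ U ∈ 𝒰, IsOpen U ∧ Dense U) → ⋃₀ 𝒰 = Set.univ →
    ∃ ℱ ⊆ 𝒰, ℱ.Finite ∧ ⋃₀ ℱ = Set.univ

/-- In an od-compact space, every closed set with empty interior is compact. -/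
lemma OdCompact.isCompact_of_closed_nwd {X : Type u} [TopologicalSpace X] (h : OdCompact X)
    {K : Set X} (hK : IsClosed K) (hint : interior K = ∅) : IsCompact K := by
  classical
  rcases K.eq_empty_or_nonempty with rfl | ⟨x0, hx0⟩
  · exact isCompact_empty
  apply isCompact_of_finite_subcover
  intro ιu U hUopen hUcov
  obtain ⟨i0, hi0⟩ : ∃ i, x0 ∈ U i := mem_iUnion.mp (hUcov hx0)
  have hdense : Dense (Kᶜ : Set X) := by
    rw [dense_iff_closure_eq, closure_compl, hint, compl_empty]
  obtain ⟨F, hFsub, hFfin, hFun⟩ := h (insert Kᶜ (Set.range fun i => U i ∪ Kᶜ))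
    (by
      rintro W hW
      rcases hW with rfl | ⟨i, rfl⟩
      · exact ⟨hK.isOpen_compl, hdense⟩
      · exact ⟨(hUopen i).union hK.isOpen_compl, hdense.mono subset_union_right⟩)
    (by
      apply eq_univ_of_forall; intro x
      by_cases hx : x ∈ K
      · obtain ⟨i, hi⟩ := mem_iUnion.mp (hUcov hx)
        exact ⟨U i ∪ Kᶜ, Or.inr ⟨i, rfl⟩, Or.inl hi⟩
      · exact ⟨Kᶜ, Or.inl rfl, hx⟩)
  set σ : Set X → ιu := fun W => if hw : ∃ i, W = U i ∪ Kᶜ then hw.choose else i0 with hσdef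
  refine ⟨hFfin.toFinset.image σ, fun x hx => ?_⟩
  have hxF : x ∈ ⋃₀ F := by rw [hFun]; trivial
  obtain ⟨W, hWF, hxW⟩ := hxF
  rcases hFsub hWF with rfl | ⟨i, rfl⟩
  · exact absurd hx hxW
  · have hex2 : ∃ j, (U i ∪ Kᶜ) = U j ∪ Kᶜ := ⟨i, rfl⟩
    have hmem : σ (U i ∪ Kᶜ) ∈ hFfin.toFinset.image σ :=
      Finset.mem_image_of_mem σ (hFfin.mem_toFinset.mpr hWF)
    apply mem_iUnion₂.mpr
    refine ⟨σ (U i ∪ Kᶜ), hmem, ?_⟩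
    have hxW2 : x ∈ U (σ (U i ∪ Kᶜ)) ∪ Kᶜ := by
      rw [hσdef]; simp only [dif_pos hex2]
      rw [← hex2.choose_spec]; exact hxW
    rcases hxW2 with h' | h'
    · exact h'
    · exact absurd hx h'

theorem odc_aux {X : Type u} [TopologicalSpace X] [T1Space X] (h : OdCompact X) :
    IsCompact {x : X | ¬ IsOpen ({x} : Set X)} := by
  classical
  by_cases hXe : IsEmpty X
  · have he : {x : X | ¬ IsOpen ({x} : Set X)} = ∅ := Set.eq_empty_of_isEmpty _
    rw [he]; exact isCompact_empty
  have hXne : Nonempty X := not_isEmpty_iff.mp hXe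
  set N : Set X := {x : X | ¬ IsOpen ({x} : Set X)} with hNdef
  have hIopen : IsOpen Nᶜ := by
    rw [isOpen_iff_forall_mem_open]
    intro x hx
    have hxo : IsOpen ({x} : Set X) := by
      have hx' := hx
      rw [Set.mem_compl_iff, hNdef, Set.mem_setOf_eq, not_not] at hx'
      exact hx'
    refine ⟨{x}, ?_, hxo, rfl⟩
    intro y hy; rw [mem_singleton_iff] at hy; subst hy; exact hx
  have hNclosed : IsClosed N := isOpen_compl_iff.mp hIopen
  by_contra hN
  have hex : ∃ (ι₀ : Type u) (V₀ : ι₀ → Set X), (∀ i, IsOpen (V₀ i)) ∧ (N ⊆ ⋃ i, V₀ i) ∧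
      ∀ t : Finset ι₀, ¬ N ⊆ ⋃ i ∈ t, V₀ i := by
    by_contra hc
    push_neg at hc
    exact hN (isCompact_of_finite_subcover (fun {ιx} U hU hcov => hc ιx U hU hcov))
  obtain ⟨ι₀, V₀, hV₀open, hV₀cov, hV₀nofin⟩ := hex
  -- minimal cardinality of a covering subfamily
  set Cov : Set Cardinal.{u} := {c | ∃ s : Set ι₀, #(↥s) = c ∧ N ⊆ ⋃ i ∈ s, V₀ i} with hCovdef
  have hCovne : Cov.Nonempty := by
    refine ⟨#(↥(Set.univ : Set ι₀)), Set.univ, rfl, ?_⟩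
    intro x hx
    obtain ⟨i, hi⟩ := mem_iUnion.mp (hV₀cov hx)
    exact mem_iUnion₂.mpr ⟨i, trivial, hi⟩
  set κ : Cardinal.{u} := sInf Cov with hκdef
  have hκmem : κ ∈ Cov := csInf_mem hCovne
  have hκmin : ∀ c ∈ Cov, ¬ c < κ := fun c hc hlt => absurd (csInf_le' hc) (not_le.mpr hlt)
  obtain ⟨s₀, hs₀card, hs₀cov⟩ := hκmem
  set ι : Type u := ↥s₀ with hιdef
  set V : ι → Set X := fun i => V₀ i.1 with hVdef
  have hVopen : ∀ i, IsOpen (V i) := fun i => hV₀open _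
  have hVcov : N ⊆ ⋃ i : ι, V i := by
    intro x hx
    obtain ⟨i, hi, hxi⟩ := mem_iUnion₂.mp (hs₀cov hx)
    exact mem_iUnion.mpr ⟨⟨i, hi⟩, hxi⟩
  have hVnofin : ∀ t : Finset ι, ¬ N ⊆ ⋃ i ∈ t, V i := by
    intro t hsub
    apply hV₀nofin (t.image Subtype.val)
    intro x hx
    obtain ⟨i, hit, hxi⟩ := mem_iUnion₂.mp (hsub hx)
    exact mem_iUnion₂.mpr ⟨i.1, Finset.mem_image_of_mem _ hit, hxi⟩
  have hVmin : ∀ s : Set ι, #(↥s) < κ → ¬ N ⊆ ⋃ i ∈ s, V i := by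
    intro s hlt hsub
    have hmkeq : #(↥(Subtype.val '' s)) = #(↥s) := Cardinal.mk_image_eq Subtype.val_injective
    refine hκmin _ ⟨Subtype.val '' s, rfl, ?_⟩ (by rw [hmkeq]; exact hlt)
    intro x hx
    obtain ⟨i, his, hxi⟩ := mem_iUnion₂.mp (hsub hx)
    exact mem_iUnion₂.mpr ⟨i.1, ⟨i, his, rfl⟩, hxi⟩
  have hcardι : #ι = κ := hs₀card
  have hκinf : Cardinal.aleph0 ≤ κ := by
    by_contra hlt
    push_neg at hlt
    have hfin : Finite ι := by
      rw [← Cardinal.lt_aleph0_iff_finite, hcardι]; exact hlt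
    haveI := Fintype.ofFinite ι
    apply hVnofin Finset.univ
    intro x hx
    obtain ⟨i, hi⟩ := mem_iUnion.mp (hVcov hx)
    exact mem_iUnion₂.mpr ⟨i, Finset.mem_univ i, hi⟩
  obtain ⟨r, hwo, hord⟩ := Cardinal.ord_eq ι
  haveI := hwo
  rw [hcardι] at hord
  have htype : Ordinal.type r = κ.ord := hord.symm
  have hlim : Order.IsSuccLimit κ.ord := Cardinal.isSuccLimit_ord hκinf
  have hordpos : 0 < κ.ord := hlim.pos
  have hseg : ∀ o, o < κ.ord → #(↥{i : ι | Ordinal.typein r i ≤ o}) < κ := by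
    intro o ho
    have h1 : o + 1 < κ.ord := by
      rw [Ordinal.add_one_eq_succ]; exact hlim.succ_lt ho
    obtain ⟨j, hj⟩ := Ordinal.typein_surj r (htype ▸ h1)
    have hset : {i : ι | Ordinal.typein r i ≤ o} = {i : ι | r i j} := by
      ext i
      simp only [mem_setOf_eq]
      rw [← Ordinal.typein_lt_typein r, hj, Ordinal.add_one_eq_succ, Order.lt_succ_iff]
    rw [hset]
    have hcard2 : #(↥{i : ι | r i j}) = (Ordinal.typein r j).card := Ordinal.card_typein j
    rw [hcard2, hj]
    exact Cardinal.lt_ord.mp h1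
  -- the open sets E o
  set Uo : Ordinal.{u} → Set X := fun o => ⋃ i : ι, ⋃ (_ : Ordinal.typein r i ≤ o), V i
    with hUodef
  set E : Ordinal.{u} → Set X := fun o => (closure (Uo o ∪ Nᶜ))ᶜ with hEdef
  have hUoopen : ∀ o, IsOpen (Uo o) :=
    fun o => isOpen_iUnion (fun i => isOpen_iUnion (fun _ => hVopen i))
  have hEopen : ∀ o, IsOpen (E o) := fun o => isClosed_closure.isOpen_compl
  have hUomono : ∀ {o o' : Ordinal.{u}}, o ≤ o' → Uo o ⊆ Uo o' := by
    intro o o' hle x hx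
    rw [hUodef] at hx ⊢
    simp only [mem_iUnion] at hx ⊢
    obtain ⟨i, hio, hxi⟩ := hx
    exact ⟨i, hio.trans hle, hxi⟩
  have hEanti : ∀ {o o' : Ordinal.{u}}, o ≤ o' → E o' ⊆ E o := fun {o o'} hle =>
    compl_subset_compl.mpr (closure_mono (union_subset_union_left _ (hUomono hle)))
  have hEdisj : ∀ o, E o ∩ (Uo o ∪ Nᶜ) = ∅ := by
    intro o
    rw [eq_empty_iff_forall_notMem]
    rintro x ⟨hx1, hx2⟩
    rw [hEdef] at hx1
    exact hx1 (subset_closure hx2)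
  have hclEN : ∀ o, closure (E o) ⊆ N := by
    intro o x hx
    by_contra hxN
    have hxc : x ∈ Nᶜ := hxN
    obtain ⟨y, hy1, hy2⟩ := mem_closure_iff.mp hx Nᶜ hIopen hxc
    have hmem : y ∈ E o ∩ (Uo o ∪ Nᶜ) := ⟨hy2, Or.inr hy1⟩
    rw [hEdisj o] at hmem
    exact hmem
  have hEN : ∀ o, E o ⊆ N := fun o x hx => hclEN o (subset_closure hx)
  have hdisjV : ∀ o (i : ι), Ordinal.typein r i ≤ o → V i ∩ closure (E o) = ∅ := by
    intro o i hio
    have h1 : V i ∩ E o = ∅ := by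
      rw [eq_empty_iff_forall_notMem]
      rintro x ⟨hxV, hxE⟩
      have hxU : x ∈ Uo o := by
        rw [hUodef]; simp only [mem_iUnion]; exact ⟨i, hio, hxV⟩
      have hmem : x ∈ E o ∩ (Uo o ∪ Nᶜ) := ⟨hxE, Or.inl hxU⟩
      rw [hEdisj o] at hmem
      exact hmem
    rw [eq_empty_iff_forall_notMem]
    rintro x ⟨hxV, hxcl⟩
    obtain ⟨y, hy1, hy2⟩ := mem_closure_iff.mp hxcl (V i) (hVopen i) hxV
    have : y ∈ V i ∩ E o := ⟨hy1, hy2⟩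
    rw [h1] at this
    exact this
  have hEne : ∀ o, o < κ.ord → (E o).Nonempty := by
    intro o ho
    rw [nonempty_iff_ne_empty]
    intro hemp
    rw [hEdef] at hemp
    have hclu : closure (Uo o ∪ Nᶜ) = Set.univ := compl_empty_iff.mp hemp
    set R : Set X := (Uo o ∪ Nᶜ)ᶜ with hRdef
    have hRclosed : IsClosed R := ((hUoopen o).union hIopen).isClosed_compl
    have hRint : interior R = ∅ := by
      rw [hRdef, interior_compl, hclu, Set.compl_univ]
    have hRcomp : IsCompact R := h.isCompact_of_closed_nwd hRclosed hRint
    have hRsub : R ⊆ ⋃ i : ι, V i := by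
      intro x hx
      rw [hRdef, Set.mem_compl_iff] at hx
      have hxN : x ∈ N := by
        by_contra hxN
        exact hx (Or.inr hxN)
      exact hVcov hxN
    obtain ⟨t, ht⟩ := hRcomp.elim_finite_subcover V hVopen hRsub
    set s' : Set ι := {i | Ordinal.typein r i ≤ o} ∪ ↑t with hs'def
    have hs'card : #(↥s') < κ := by
      apply lt_of_le_of_lt (Cardinal.mk_union_le _ _)
      exact Cardinal.add_lt_of_lt hκinf (hseg o ho) (lt_of_lt_of_le t.finite_toSet.lt_aleph0 hκinf)
    apply hVmin s' hs'card
    intro x hx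
    by_cases hxU : x ∈ Uo o
    · have : ∃ i, ∃ (_ : Ordinal.typein r i ≤ o), x ∈ V i := by
        rw [hUodef] at hxU; simpa only [mem_iUnion] using hxU
      obtain ⟨i, hio, hxi⟩ := this
      exact mem_iUnion₂.mpr ⟨i, Or.inl hio, hxi⟩
    · have hxR : x ∈ R := by
        rw [hRdef, Set.mem_compl_iff]
        rintro (h1 | h2)
        · exact hxU h1
        · exact h2 hx
      obtain ⟨i, hit, hxi⟩ := mem_iUnion₂.mp (ht hxR)
      exact mem_iUnion₂.mpr ⟨i, Or.inr hit, hxi⟩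
  have hinterp : ∀ o, o < κ.ord → ∃ o', o' < κ.ord ∧ o < o' ∧ closure (E o') ⊆ E o := by
    intro o ho
    set D : Set X := closure (E o) \ E o with hDdef
    have hDclosed : IsClosed D := by
      rw [hDdef, diff_eq]
      exact isClosed_closure.inter (hEopen o).isClosed_compl
    have hDint : interior D = ∅ := by
      rw [eq_empty_iff_forall_notMem]
      intro x hx
      have hxcl : x ∈ closure (E o) := (interior_subset hx).1
      obtain ⟨y, hy1, hy2⟩ := mem_closure_iff.mp hxcl (interior D) isOpen_interior hx
      exact (interior_subset hy1).2 hy2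
    have hDcomp : IsCompact D := h.isCompact_of_closed_nwd hDclosed hDint
    have hDsub : D ⊆ ⋃ i : ι, V i := fun x hx => hVcov (hclEN o hx.1)
    obtain ⟨t, ht⟩ := hDcomp.elim_finite_subcover V hVopen hDsub
    set o' : Ordinal.{u} := (t.sup (fun i => Ordinal.typein r i) ⊔ o) + 1 with ho'def
    have hsuplt : t.sup (fun i => Ordinal.typein r i) ⊔ o < κ.ord := by
      apply max_lt ?_ ho
      apply Finset.sup_lt_iff (show (⊥ : Ordinal.{u}) < κ.ord from hordpos) |>.mpr
      intro i _
      exact htype ▸ Ordinal.typein_lt_type r i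
    have hmaxlt : t.sup (fun i => Ordinal.typein r i) ⊔ o < o' := by
      rw [ho'def, Ordinal.add_one_eq_succ]; exact Order.lt_succ _
    have ho'lt : o' < κ.ord := by
      rw [ho'def, Ordinal.add_one_eq_succ]; exact hlim.succ_lt hsuplt
    have hoo' : o < o' := lt_of_le_of_lt le_sup_right hmaxlt
    refine ⟨o', ho'lt, hoo', ?_⟩
    intro x hx
    have hxcl : x ∈ closure (E o) := closure_mono (hEanti (le_of_lt hoo')) hx
    by_contra hxE
    have hxD : x ∈ D := ⟨hxcl, hxE⟩
    obtain ⟨i, hit, hxi⟩ := mem_iUnion₂.mp (ht hxD)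
    have hio' : Ordinal.typein r i ≤ o' :=
      le_of_lt (lt_of_le_of_lt (le_trans (Finset.le_sup hit) le_sup_left) hmaxlt)
    have hmem : x ∈ V i ∩ closure (E o') := ⟨hxi, hx⟩
    rw [hdisjV o' i hio'] at hmem
    exact hmem
  have hescape : ∀ x, x ∈ N → ∃ b, b < κ.ord ∧ ∀ o, b ≤ o → x ∉ closure (E o) := by
    intro x hx
    obtain ⟨i, hxi⟩ := mem_iUnion.mp (hVcov hx)
    refine ⟨Ordinal.typein r i, htype ▸ Ordinal.typein_lt_type r i, ?_⟩
    intro o hbo hmem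
    have hm2 : x ∈ V i ∩ closure (E o) := ⟨hxi, hmem⟩
    rw [hdisjV o i hbo] at hm2
    exact hm2
  set e : Ordinal.{u} → X :=
    fun o => if ho : (E o).Nonempty then ho.choose else Classical.arbitrary X with hedef
  have he : ∀ o, o < κ.ord → e o ∈ E o := by
    intro o ho
    rw [hedef]
    simp only [dif_pos (hEne o ho)]
    exact (hEne o ho).choose_spec
  -- transfinite recursion
  set F : (ξ : Ordinal.{u}) → ((η : Ordinal.{u}) → η < ξ → Ordinal.{u}) → Ordinal.{u} :=
    fun ξ IH => sInf {o : Ordinal.{u} | o < κ.ord ∧ ∀ (η : Ordinal.{u}) (hη : η < ξ),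
      IH η hη < o ∧ closure (E o) ⊆ E (IH η hη) ∧ e (IH η hη) ∉ closure (E o)} with hFdef
  set f : Ordinal.{u} → Ordinal.{u} := Ordinal.lt_wf.fix F with hfdef
  set C : Ordinal.{u} → Set Ordinal.{u} := fun ξ => {o : Ordinal.{u} | o < κ.ord ∧
      ∀ (η : Ordinal.{u}), η < ξ →
      f η < o ∧ closure (E o) ⊆ E (f η) ∧ e (f η) ∉ closure (E o)} with hCdef
  have hCmem : ∀ ξ o, o ∈ C ξ ↔ (o < κ.ord ∧ ∀ (η : Ordinal.{u}), η < ξ →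
      f η < o ∧ closure (E o) ⊆ E (f η) ∧ e (f η) ∉ closure (E o)) := by
    intro ξ o
    rw [hCdef]
    exact Iff.rfl
  have hfC : ∀ ξ, f ξ = sInf (C ξ) := by
    intro ξ
    rw [hCdef, hfdef]
    rw [WellFounded.fix_eq]
  have hfmem : ∀ ξ, (C ξ).Nonempty → f ξ ∈ C ξ := fun ξ hne => by
    rw [hfC ξ]; exact csInf_mem hne
  have hflt : ∀ ξ, (C ξ).Nonempty → f ξ < κ.ord :=
    fun ξ hne => ((hCmem ξ (f ξ)).mp (hfmem ξ hne)).1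
  have hfprop : ∀ ξ, (C ξ).Nonempty → ∀ η, η < ξ →
      f η < f ξ ∧ closure (E (f ξ)) ⊆ E (f η) ∧ e (f η) ∉ closure (E (f ξ)) :=
    fun ξ hne => ((hCmem ξ (f ξ)).mp (hfmem ξ hne)).2
  have hcont : ∀ ξ : Ordinal.{u}, (∀ η, η < ξ → (C η).Nonempty) →
      (∃ s, s < κ.ord ∧ ∀ η, η < ξ → f η < s) → (C ξ).Nonempty := by
    intro ξ hgood hbd
    obtain ⟨s, hs, hbound⟩ := hbd
    rcases Ordinal.zero_or_succ_or_isSuccLimit ξ with hz | ⟨μ, hμ⟩ | hl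
    · subst hz
      exact ⟨0, (hCmem 0 0).mpr ⟨hordpos, fun η hη => absurd hη (not_lt_of_ge zero_le)⟩⟩
    · subst hμ
      have hμlt : μ < Order.succ μ := Order.lt_succ μ
      have hgoodμ := hgood μ hμlt
      have hfμ : f μ < κ.ord := hflt μ hgoodμ
      have heμ : e (f μ) ∈ N := hEN _ (he _ hfμ)
      obtain ⟨b, hb, hbesc⟩ := hescape _ heμ
      have ht₀ : s ⊔ b < κ.ord := max_lt hs hb
      obtain ⟨o', ho'κ, ht₀o', ho'sub⟩ := hinterp _ ht₀
      refine ⟨o', (hCmem _ o').mpr ⟨ho'κ, ?_⟩⟩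
      intro η hη
      have hημ : η ≤ μ := Order.lt_succ_iff.mp hη
      have hηs : f η < s := hbound η hη
      have hηt₀ : f η < s ⊔ b := lt_of_lt_of_le hηs le_sup_left
      refine ⟨lt_trans hηt₀ ht₀o', ho'sub.trans (hEanti (le_of_lt hηt₀)), ?_⟩
      rcases eq_or_lt_of_le hημ with rfl | hηlt2
      · exact hbesc o' (le_trans le_sup_right (le_of_lt ht₀o'))
      · have hsucclt : Order.succ η < Order.succ μ := Order.succ_lt_succ hηlt2
        have hgη := hgood (Order.succ η) hsucclt
        have hnotin := (hfprop _ hgη η (Order.lt_succ η)).2.2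
        intro hmem
        apply hnotin
        have hfsle : f (Order.succ η) < s := hbound _ hsucclt
        exact closure_mono (hEanti (le_of_lt (lt_trans (lt_of_lt_of_le hfsle le_sup_left) ht₀o'))) hmem
    · obtain ⟨o', ho'κ, hso', ho'sub⟩ := hinterp s hs
      refine ⟨o', (hCmem _ o').mpr ⟨ho'κ, ?_⟩⟩
      intro η hη
      have hηs : f η < s := hbound η hη
      have hη1 : Order.succ η < ξ := hl.succ_lt hη
      refine ⟨lt_trans hηs hso', ho'sub.trans (hEanti (le_of_lt hηs)), ?_⟩
      have hgη := hgood _ hη1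
      have hnotin := (hfprop _ hgη η (Order.lt_succ η)).2.2
      intro hmem
      apply hnotin
      have hfsle : f (Order.succ η) < s := hbound _ hη1
      exact closure_mono (hEanti (le_of_lt (lt_trans hfsle hso'))) hmem
  have hbadex : ∃ ξ : Ordinal.{u}, ¬ (C ξ).Nonempty := by
    by_contra hall
    push_neg at hall
    have hle : ∀ ξ : Ordinal.{u}, ξ ≤ f ξ := by
      intro ξ
      induction ξ using Ordinal.induction with
      | h ξ IH =>
        by_contra hlt
        push_neg at hlt
        have h1 : f ξ ≤ f (f ξ) := IH (f ξ) hlt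
        have h2 : f (f ξ) < f ξ := (hfprop ξ (hall ξ) (f ξ) hlt).1
        exact absurd (lt_of_le_of_lt h1 h2) (lt_irrefl _)
    exact absurd (hflt κ.ord (hall κ.ord)) (not_lt.mpr (hle κ.ord))
  set ξs : Ordinal.{u} := Ordinal.lt_wf.min {ξ : Ordinal.{u} | ¬ (C ξ).Nonempty} hbadex
    with hξsdef
  have hξsbad : ¬ (C ξs).Nonempty := Ordinal.lt_wf.min_mem _ hbadex
  have hgoodlt : ∀ η, η < ξs → (C η).Nonempty := by
    intro η hη
    by_contra hbad
    exact Ordinal.lt_wf.not_lt_min _ hbad hη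
  have hgood0 : (C 0).Nonempty :=
    ⟨0, (hCmem 0 0).mpr ⟨hordpos, fun η hη => absurd hη (not_lt_of_ge zero_le)⟩⟩
  have hξpos : 0 < ξs := pos_iff_ne_zero.mpr (fun h0 => hξsbad (h0 ▸ hgood0))
  have hunb : ∀ s, s < κ.ord → ∃ η, η < ξs ∧ s ≤ f η := by
    intro s hs
    by_contra hno
    push_neg at hno
    exact hξsbad (hcont ξs hgoodlt ⟨s, hs, hno⟩)
  have hfmono : ∀ γ η, γ ≤ η → η < ξs → f γ ≤ f η := by
    intro γ η hle hη
    rcases eq_or_lt_of_le hle with rfl | hlt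
    · exact le_rfl
    · exact le_of_lt ((hfprop η (hgoodlt η hη) γ hlt).1)
  set S : Ordinal.{u} → Set X := fun lam => (fun η => e (f η)) '' (Set.Iio lam) with hSdef
  have hmemS : ∀ lam z, z ∈ S lam ↔ ∃ η, η < lam ∧ e (f η) = z := by
    intro lam z
    rw [hSdef]
    simp only [Set.mem_image, Set.mem_Iio]
  have hnwd : ∀ lam, lam ≤ ξs → interior (closure (S lam)) = ∅ := by
    intro lam
    induction lam using Ordinal.induction with
    | h lam IH =>
      intro hlam
      rw [eq_empty_iff_forall_notMem]
      intro x hx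
      by_cases hA : ∃ γ, γ < lam ∧ ¬ interior (closure (S lam)) ⊆ closure (E (f γ))
      · obtain ⟨γ, hγ, hnsub⟩ := hA
        rw [Set.not_subset] at hnsub
        obtain ⟨y, hyW, hynotcl⟩ := hnsub
        have hV'open : IsOpen (interior (closure (S lam)) ∩ (closure (E (f γ)))ᶜ) :=
          isOpen_interior.inter isClosed_closure.isOpen_compl
        have hV'S : (interior (closure (S lam)) ∩ (closure (E (f γ)))ᶜ) ∩ S lam ⊆ S γ := by
          rintro z ⟨hzV, hzS⟩
          obtain ⟨η, hη, hzeq⟩ := (hmemS lam z).mp hzS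
          subst hzeq
          have hηγ : η < γ := by
            by_contra hge
            push_neg at hge
            have hηξ : η < ξs := lt_of_lt_of_le hη hlam
            have hmem2 : e (f η) ∈ E (f η) := he _ (hflt η (hgoodlt η hηξ))
            have hmem3 : e (f η) ∈ E (f γ) := hEanti (hfmono γ η hge hηξ) hmem2
            exact hzV.2 (subset_closure hmem3)
          exact (hmemS γ _).mpr ⟨η, hηγ, rfl⟩
        have hV'cl : (interior (closure (S lam)) ∩ (closure (E (f γ)))ᶜ) ⊆ closure (S γ) := by
          intro z hz
          have h1 : z ∈ closure ((interior (closure (S lam)) ∩ (closure (E (f γ)))ᶜ) ∩ S lam) :=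
            hV'open.inter_closure ⟨hz, interior_subset hz.1⟩
          exact closure_mono hV'S h1
        have hsub2 : (interior (closure (S lam)) ∩ (closure (E (f γ)))ᶜ) ⊆
            interior (closure (S γ)) := interior_maximal hV'cl hV'open
        rw [IH γ hγ (le_trans (le_of_lt hγ) hlam)] at hsub2
        exact hsub2 ⟨hyW, hynotcl⟩
      · push_neg at hA
        have hWS : interior (closure (S lam)) ∩ S lam ⊆ {z | ∃ η, lam = η + 1 ∧ z = e (f η)} := by
          rintro z ⟨hzW, hzS⟩
          obtain ⟨η, hη, hzeq⟩ := (hmemS lam z).mp hzS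
          by_cases hsucc : η + 1 < lam
          · exfalso
            have hg := hgoodlt (η + 1) (lt_of_lt_of_le hsucc hlam)
            have hnotin := (hfprop (η + 1) hg η (by
              rw [Ordinal.add_one_eq_succ]; exact Order.lt_succ η)).2.2
            apply hnotin
            rw [hzeq]
            exact hA (η + 1) hsucc hzW
          · push_neg at hsucc
            have hlamle : η + 1 ≤ lam := by
              rw [Ordinal.add_one_eq_succ]; exact Order.succ_le_of_lt hη
            exact ⟨η, le_antisymm hsucc hlamle, hzeq.symm⟩
        have hWcl : interior (closure (S lam)) ⊆ closure (interior (closure (S lam)) ∩ S lam) :=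
          fun z hz => isOpen_interior.inter_closure ⟨hz, interior_subset hz⟩
        by_cases hsucc2 : ∃ μ : Ordinal.{u}, lam = μ + 1
        · obtain ⟨μ, rfl⟩ := hsucc2
          have hμlam : μ < μ + 1 := by
            rw [Ordinal.add_one_eq_succ]; exact Order.lt_succ μ
          have hWsing : interior (closure (S (μ + 1))) ∩ S (μ + 1) ⊆ {e (f μ)} := by
            intro z hz
            obtain ⟨η, heq, hzeq⟩ := hWS hz
            have hημ : η = μ := by
              have h1 : η ≤ μ := by
                have : η < μ + 1 := heq ▸ (by
                  rw [Ordinal.add_one_eq_succ]; exact Order.lt_succ η)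
                rw [Ordinal.add_one_eq_succ, Order.lt_succ_iff] at this
                exact this
              have h2 : μ ≤ η := by
                have : μ < η + 1 := heq ▸ hμlam
                rw [Ordinal.add_one_eq_succ, Order.lt_succ_iff] at this
                exact this
              exact le_antisymm h1 h2
            rw [hzeq, hημ]
            exact rfl
          have hWeq : interior (closure (S (μ + 1))) ⊆ {e (f μ)} := by
            intro z hz
            have h1 := hWcl hz
            have h2 : z ∈ closure {e (f μ)} := closure_mono hWsing h1
            rwa [closure_singleton] at h2
          have hxe : x = e (f μ) := hWeq hx
          have hWE : interior (closure (S (μ + 1))) = {e (f μ)} := by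
            apply Set.Subset.antisymm hWeq
            intro z hz
            rw [mem_singleton_iff] at hz
            subst hz
            rw [← hxe]
            exact hx
          have hopen2 : IsOpen ({e (f μ)} : Set X) := hWE ▸ isOpen_interior
          have hμξ : μ < ξs := lt_of_lt_of_le hμlam hlam
          have hin : e (f μ) ∈ N := hEN _ (he _ (hflt μ (hgoodlt μ hμξ)))
          rw [hNdef, Set.mem_setOf_eq] at hin
          exact hin hopen2
        · have hWempty : interior (closure (S lam)) ∩ S lam = ∅ := by
            rw [eq_empty_iff_forall_notMem]
            intro z hz
            obtain ⟨η, heq, _⟩ := hWS hz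
            exact hsucc2 ⟨η, heq⟩
          have h1 := hWcl hx
          rw [hWempty, closure_empty] at h1
          exact h1
  have hKnwd : interior (closure (S ξs)) = ∅ := hnwd ξs le_rfl
  have hKcomp : IsCompact (closure (S ξs)) := h.isCompact_of_closed_nwd isClosed_closure hKnwd
  set T : {η : Ordinal.{u} // η < ξs} → Set X :=
    fun η => closure ((fun ζ => e (f ζ)) '' (Set.Ico η.1 ξs)) with hTdef
  haveI : Nonempty {η : Ordinal.{u} // η < ξs} := ⟨⟨0, hξpos⟩⟩
  have hTsub : ∀ η, T η ⊆ closure (S ξs) := by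
    intro η
    rw [hTdef, hSdef]
    exact closure_mono (Set.image_mono (fun ζ hζ => hζ.2))
  have hTclosed : ∀ η, IsClosed (T η) := fun η => isClosed_closure
  have hTcomp : ∀ η, IsCompact (T η) := fun η => hKcomp.of_isClosed_subset (hTclosed η) (hTsub η)
  have hTne : ∀ η, (T η).Nonempty := by
    intro η
    refine ⟨e (f η.1), subset_closure ⟨η.1, ⟨le_rfl, η.2⟩, rfl⟩⟩
  have hTdir : Directed (· ⊇ ·) T := by
    intro η1 η2
    refine ⟨⟨η1.1 ⊔ η2.1, max_lt η1.2 η2.2⟩, ?_, ?_⟩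
    · apply closure_mono
      apply Set.image_mono
      intro ζ hζ
      exact ⟨le_trans le_sup_left hζ.1, hζ.2⟩
    · apply closure_mono
      apply Set.image_mono
      intro ζ hζ
      exact ⟨le_trans le_sup_right hζ.1, hζ.2⟩
  obtain ⟨z, hz⟩ :=
    IsCompact.nonempty_iInter_of_directed_nonempty_isCompact_isClosed T hTdir hTne hTcomp hTclosed
  have hzT : ∀ η : {η : Ordinal.{u} // η < ξs}, z ∈ T η := by
    intro η
    exact mem_iInter.mp hz η
  have hzcl : ∀ η, ∀ hη : η < ξs, z ∈ closure (E (f η)) := by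
    intro η hη
    have h1 : T ⟨η, hη⟩ ⊆ closure (E (f η)) := by
      rw [hTdef]
      apply closure_minimal ?_ isClosed_closure
      rintro w ⟨ζ, hζ, rfl⟩
      have hw : e (f ζ) ∈ E (f ζ) := he _ (hflt ζ (hgoodlt ζ hζ.2))
      exact subset_closure (hEanti (hfmono η ζ hζ.1 hζ.2) hw)
    exact h1 (hzT ⟨η, hη⟩)
  have hzN : z ∈ N := hclEN _ (hzcl 0 hξpos)
  obtain ⟨i, hzi⟩ := mem_iUnion.mp (hVcov hzN)
  have hbκ : Ordinal.typein r i < κ.ord := htype ▸ Ordinal.typein_lt_type r i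
  obtain ⟨η, hηξ, hbη⟩ := hunb _ hbκ
  have hfinal : z ∈ V i ∩ closure (E (f η)) := ⟨hzi, hzcl η hηξ⟩
  rw [hdisjV (f η) i hbη] at hfinal
  exact hfinal

/-- If a T1 space is od-compact, then the set of its non-isolated points is
compact. -/
theorem odCompact_nonIsolated_isCompact (X : Type*) [TopologicalSpace X] [T1Space X]
    (h : OdCompact X) : IsCompact {x : X | ¬ IsOpen ({x} : Set X)} := by
  exact odc_aux h
end

section
/- If a T1 topological space X is od-Lindelöf, then the subspace of non-isolated points of X is linearly Lindelöf. -/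
/-- A space is od-Lindelöf if every cover by open dense subsets has a countable
subcover. -/
def OdLindelof (X : Type*) [TopologicalSpace X] : Prop :=
  ∀ 𝒰 : Set (Set X), (∀ U ∈ 𝒰, IsOpen U ∧ Dense U) → ⋃₀ 𝒰 = Set.univ →
    ∃ ℱ ⊆ 𝒰, ℱ.Countable ∧ ⋃₀ ℱ = Set.univ

/-- A space is linearly Lindelöf if every open cover that is linearly ordered by
inclusion has a countable subcover. -/
def LinearlyLindelof (Y : Type*) [TopologicalSpace Y] : Prop :=
  ∀ 𝒰 : Set (Set Y), (∀ U ∈ 𝒰, IsOpen U) → IsChain (· ⊆ ·) 𝒰 → ⋃₀ 𝒰 = Set.univ →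
    ∃ ℱ ⊆ 𝒰, ℱ.Countable ∧ ⋃₀ ℱ = Set.univ

open Set

universe u v

lemma od_aux_fix {ι : Type v} (F : (α : Ordinal.{u}) → ((β : Ordinal.{u}) → β < α → ι) → ι) :
    ∃ f : Ordinal.{u} → ι, ∀ α, f α = F α (fun β _ => f β) :=
  ⟨WellFounded.fix Ordinal.lt_wf F, fun α => WellFounded.fix_eq _ _ _⟩

lemma od_tool {X : Type u} [TopologicalSpace X] (hod : OdLindelof X) {ι : Type v}
    (A : ι → Set X) (hcl : ∀ i, IsClosed (A i)) (hint : ∀ i, interior (A i) = ∅)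
    (hI : (⋂ i, A i) = ∅) :
    ∃ t : Set ι, t.Countable ∧ (⋂ i ∈ t, A i) = ∅ := by
  obtain ⟨ℱ, hsub, hcount, hcovℱ⟩ := hod (range fun i => (A i)ᶜ)
    (by
      rintro U ⟨i, rfl⟩
      refine ⟨(hcl i).isOpen_compl, ?_⟩
      rw [dense_iff_closure_eq, closure_compl, hint i, compl_empty])
    (by rw [sUnion_range, ← compl_iInter, hI, compl_empty])
  have hsel : ∀ U ∈ ℱ, ∃ i, (A i)ᶜ = U := fun U hU => hsub hU
  choose sel hsel using hsel
  refine ⟨⋃ (U : Set X) (hU : U ∈ ℱ), {sel U hU},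
    hcount.biUnion (fun _ _ => countable_singleton _), ?_⟩
  rw [eq_empty_iff_forall_notMem]
  intro x hx
  rw [mem_iInter₂] at hx
  have hxu : x ∈ ⋃₀ ℱ := by rw [hcovℱ]; trivial
  obtain ⟨U, hU, hxU⟩ := hxu
  have hmem : sel U hU ∈ ⋃ (U : Set X) (hU : U ∈ ℱ), ({sel U hU} : Set ι) :=
    mem_iUnion₂.mpr ⟨U, hU, rfl⟩
  have : x ∈ A (sel U hU) := hx _ hmem
  rw [← hsel U hU] at hxU
  exact hxU this

lemma od_main {X : Type u} [TopologicalSpace X] [T1Space X] (hod : OdLindelof X)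
    (Y : Set X) (hYiso : ∀ x ∈ Y, ¬ IsOpen ({x} : Set X)) (hYclosed : IsClosed Y)
    (𝒰 : Set (Set ↥Y)) (hUopen : ∀ U ∈ 𝒰, IsOpen U) (hUchain : IsChain (· ⊆ ·) 𝒰)
    (hUcov : ⋃₀ 𝒰 = Set.univ) :
    ∃ ℱ ⊆ 𝒰, ℱ.Countable ∧ ⋃₀ ℱ = Set.univ := by
  classical
  by_contra hno
  push_neg at hno
  -- extend the relatively open sets to open sets of X
  have hOpex : ∀ U : Set ↥Y, ∃ O : Set X, U ∈ 𝒰 → IsOpen O ∧ Subtype.val ⁻¹' O = U := by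
    intro U
    by_cases hU : U ∈ 𝒰
    · obtain ⟨O, hO, hOU⟩ := isOpen_induced_iff.mp (hUopen U hU)
      exact ⟨O, fun _ => ⟨hO, hOU⟩⟩
    · exact ⟨∅, fun h => absurd h hU⟩
  choose Op hOp using hOpex
  -- transfinite recursion picking ever larger elements of the chain
  obtain ⟨f, hf⟩ := od_aux_fix (fun α rec =>
    if h : ∃ U ∈ 𝒰, ¬ U ⊆ ⋃ β, ⋃ hβ : β < α, rec β hβ then h.choose else (∅ : Set ↥Y))
  set A : Ordinal.{u} → Set ↥Y := fun α => ⋃ β, ⋃ _ : β < α, f β with hAdef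
  have hfspec : ∀ α : Ordinal.{u}, (∃ U ∈ 𝒰, ¬ U ⊆ A α) → f α ∈ 𝒰 ∧ ¬ f α ⊆ A α := by
    intro α hα
    have h2 : f α = if h : ∃ U ∈ 𝒰, ¬ U ⊆ A α then h.choose else ∅ := hf α
    rw [h2, dif_pos hα]
    exact ⟨hα.choose_spec.1, hα.choose_spec.2⟩
  have hfsubA : ∀ {β α : Ordinal.{u}}, β < α → f β ⊆ A α := by
    intro β α hβ
    exact subset_iUnion₂ (s := fun β _ => f β) β hβ
  have hAmono : ∀ {α α' : Ordinal.{u}}, α ≤ α' → A α ⊆ A α' := by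
    intro α α' hαα'
    exact iUnion₂_subset fun β hβ => hfsubA (lt_of_lt_of_le hβ hαα')
  have hGoodSpec : ∀ α : Ordinal.{u}, A α ≠ univ → f α ∈ 𝒰 ∧ ∃ y, y ∈ f α ∧ y ∉ A α := by
    intro α hα
    obtain ⟨y, hy⟩ := (ne_univ_iff_exists_notMem _).mp hα
    obtain ⟨U, hU, hyU⟩ : ∃ U ∈ 𝒰, y ∈ U := by
      have : y ∈ ⋃₀ 𝒰 := by rw [hUcov]; trivial
      simpa using this
    have hh := hfspec α ⟨U, hU, fun hsub => hy (hsub hyU)⟩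
    exact ⟨hh.1, not_subset.mp hh.2⟩
  have hfmono : ∀ {β α : Ordinal.{u}}, β ≤ α → A α ≠ univ → f β ⊆ f α := by
    intro β α hβα hα
    rcases eq_or_lt_of_le hβα with rfl | hlt
    · exact subset_rfl
    have hβ : A β ≠ univ := fun h => hα (univ_subset_iff.mp (h ▸ hAmono hβα))
    obtain ⟨hfβU, _⟩ := hGoodSpec β hβ
    obtain ⟨hfαU, y, hyfα, hyA⟩ := hGoodSpec α hα
    by_cases heq : f β = f α
    · exact heq ▸ subset_rfl
    rcases hUchain hfβU hfαU heq with hss | hss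
    · exact hss
    · exact absurd (hfsubA hlt (hss hyfα)) hyA
  -- there is a stage where everything is covered
  have hEx : ∃ α : Ordinal.{u}, A α = univ := by
    by_contra hne
    push_neg at hne
    have hy := fun α => (hGoodSpec α (hne α)).2
    choose y hy1 hy2 using hy
    have hinj : Function.Injective y := by
      intro a b hab
      by_contra hne2
      rcases lt_or_gt_of_ne hne2 with hlt | hlt
      · exact hy2 b (by rw [← hab]; exact hfsubA hlt (hy1 a))
      · exact hy2 a (by rw [hab]; exact hfsubA hlt (hy1 b))
    exact not_small_ordinal.{u,u} (small_of_injective hinj)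
  set Λ : Ordinal.{u} := sInf {α | A α = univ} with hΛdef
  have hΛuniv : A Λ = univ := csInf_mem hEx
  have hGood : ∀ α, α < Λ → A α ≠ univ := by
    intro α hα h
    have hmem : α ∈ {o : Ordinal.{u} | A o = univ} := h
    exact absurd (csInf_le' hmem) (not_le.mpr hα)
  have hfin : ∀ β, β < Λ → f β ∈ 𝒰 := fun β hβ => (hGoodSpec β (hGood β hβ)).1
  -- no countable cofinal subset of Λ
  have hNoCof : ∀ t : Set Ordinal.{u}, t.Countable → (∀ γ ∈ t, γ < Λ) →
      (∀ β, β < Λ → ∃ γ ∈ t, β ≤ γ) → False := by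
    intro t htc htΛ htcof
    refine hno (f '' t) ?_ (htc.image f) ?_
    · rintro _ ⟨γ, hγ, rfl⟩
      exact hfin γ (htΛ γ hγ)
    · rw [eq_univ_iff_forall]
      intro z
      have hz : z ∈ A Λ := by rw [hΛuniv]; trivial
      obtain ⟨β, hβΛ, hzβ⟩ : ∃ β, ∃ _ : β < Λ, z ∈ f β := by simpa [hAdef] using hz
      obtain ⟨γ, hγt, hβγ⟩ := htcof β hβΛ
      exact ⟨f γ, mem_image_of_mem f hγt, hfmono hβγ (hGood γ (htΛ γ hγt)) hzβ⟩
  have hΛlim : Order.IsSuccLimit Λ := by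
    rcases Ordinal.zero_or_succ_or_isSuccLimit Λ with h0 | ⟨σ, hσ⟩ | hl
    · exfalso
      have hA0 : A 0 = ∅ := by
        rw [hAdef]
        simp
      refine hno ∅ (empty_subset _) countable_empty ?_
      have h00 : A 0 = univ := by rw [← h0]; exact hΛuniv
      rw [sUnion_empty, ← hA0]
      exact h00
    · exfalso
      refine hNoCof {σ} (countable_singleton σ) ?_ ?_
      · intro γ hγ
        rw [mem_singleton_iff] at hγ
        subst hγ
        rw [← hσ]
        exact Order.lt_succ γ
      · intro β hβ
        refine ⟨σ, rfl, ?_⟩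
        rw [← hσ] at hβ
        exact Order.lt_succ_iff.mp hβ
    · exact hl
  have hsuccΛ : ∀ {β : Ordinal.{u}}, β < Λ → β + 1 < Λ := by
    intro β hβ
    rw [Ordinal.add_one_eq_succ]
    exact hΛlim.succ_lt hβ
  -- now move to the ambient space X
  set O' : Ordinal.{u} → Set X := fun β => Op (f β) with hO'def
  have hO'open : ∀ β, β < Λ → IsOpen (O' β) := fun β hβ => (hOp (f β) (hfin β hβ)).1
  have hO'pre : ∀ β, β < Λ → Subtype.val ⁻¹' (O' β) = f β := fun β hβ => (hOp (f β) (hfin β hβ)).2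
  set K : Ordinal.{u} → Set X := fun i => Y ∩ ⋂ β, ⋂ _ : β < i, (O' β)ᶜ with hKdef
  have hK : ∀ (i : Ordinal.{u}) (x : X), x ∈ K i ↔ (x ∈ Y ∧ ∀ β, β < i → x ∉ O' β) := by
    intro i x
    rw [hKdef]
    simp [mem_iInter]
  have hKY : ∀ i, K i ⊆ Y := by
    intro i x hx
    exact ((hK i x).mp hx).1
  have hKanti : ∀ {i j : Ordinal.{u}}, i ≤ j → K j ⊆ K i := by
    intro i j hij x hx
    rw [hK] at hx ⊢
    exact ⟨hx.1, fun β hβ => hx.2 β (lt_of_lt_of_le hβ hij)⟩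
  have hKclosed : ∀ i, i ≤ Λ → IsClosed (K i) := by
    intro i hi
    rw [hKdef]
    refine hYclosed.inter (isClosed_iInter fun β => isClosed_iInter fun hβ => ?_)
    exact (hO'open β (lt_of_lt_of_le hβ hi)).isClosed_compl
  have hmemf : ∀ (x : X) (hx : x ∈ Y) (β : Ordinal.{u}), β < Λ →
      ((⟨x, hx⟩ : ↥Y) ∈ f β ↔ x ∈ O' β) := by
    intro x hx β hβ
    rw [← hO'pre β hβ]
    rfl
  have hKΛ : K Λ = ∅ := by
    rw [eq_empty_iff_forall_notMem]
    intro x hx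
    have hxY : x ∈ Y := (hKY Λ) hx
    have hmem : (⟨x, hxY⟩ : ↥Y) ∈ A Λ := by rw [hΛuniv]; trivial
    obtain ⟨β, hβΛ, hm⟩ : ∃ β, ∃ _ : β < Λ, (⟨x, hxY⟩ : ↥Y) ∈ f β := by
      simpa [hAdef] using hmem
    exact ((hK Λ x).mp hx).2 β hβΛ ((hmemf x hxY β hβΛ).mp hm)
  have hKne : ∀ i, i < Λ → (K i).Nonempty := by
    intro i hi
    obtain ⟨_, y, hyf, hyA⟩ := hGoodSpec i (hGood i hi)
    refine ⟨(y : X), (hK i y).mpr ⟨y.2, fun β hβ hxO => ?_⟩⟩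
    have hm : (⟨(y : X), y.2⟩ : ↥Y) ∈ f β := (hmemf _ y.2 β (lt_trans hβ hi)).mpr hxO
    rw [Subtype.coe_eta] at hm
    exact hyA (hfsubA hβ hm)
  have hsucclt : ∀ β : Ordinal.{u}, β < β + 1 := by
    intro β
    rw [Ordinal.add_one_eq_succ]
    exact Order.lt_succ β
  have hsuccle : ∀ {β γ : Ordinal.{u}}, β < γ → β + 1 ≤ γ := by
    intro β γ h
    rw [Ordinal.add_one_eq_succ]
    exact Order.succ_le_of_lt h
  set RU : Set X := ⋃ β, ⋃ _ : β < Λ, (interior (K β) \ K (β + 1)) with hRUdef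
  have hRUopen : IsOpen RU := by
    rw [hRUdef]
    refine isOpen_iUnion fun β => isOpen_iUnion fun hβ => ?_
    exact IsOpen.sdiff isOpen_interior (hKclosed (β + 1) (hsuccΛ hβ).le)
  have hRloc : ∀ (x : X) (γ : Ordinal.{u}), γ < Λ → x ∈ K γ → x ∉ K (γ + 1) →
      x ∉ interior (K γ) → x ∉ RU := by
    intro x γ hγ hx1 hx2 hx3 hxRU
    rw [hRUdef] at hxRU
    obtain ⟨β, hβΛ, hxβ⟩ : ∃ β, ∃ _ : β < Λ, x ∈ interior (K β) \ K (β + 1) := by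
      simpa using hxRU
    rcases lt_trichotomy β γ with hlt | rfl | hlt
    · exact hxβ.2 (hKanti (hsuccle hlt) hx1)
    · exact hx3 hxβ.1
    · exact hx2 (hKanti (hsuccle hlt) (interior_subset hxβ.1))
  have hMint : ∀ δ, δ < Λ → interior (K δ \ RU) = ∅ := by
    intro δ hδ
    have hsub : ∀ i : Ordinal.{u}, i ≤ Λ → interior (K δ \ RU) ⊆ K i := by
      intro i
      induction i using Ordinal.induction with
      | h i IH =>
        intro hiΛ x hx
        have hxM : x ∈ K δ \ RU := interior_subset hx
        rcases le_or_gt i δ with hle | hgt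
        · exact hKanti hle hxM.1
        · refine (hK i x).mpr ⟨(hKY δ) hxM.1, fun β hβi => ?_⟩
          rcases lt_or_ge β δ with hβδ | hδβ
          · exact ((hK δ x).mp hxM.1).2 β hβδ
          · have hβΛ : β < Λ := lt_of_lt_of_le hβi hiΛ
            have h1 : interior (K δ \ RU) ⊆ K β := IH β hβi hβΛ.le
            have h2 : x ∈ interior (K β) := interior_maximal h1 isOpen_interior hx
            have h4 : x ∈ K (β + 1) := by
              by_contra hc
              refine hxM.2 ?_
              rw [hRUdef]
              exact mem_iUnion₂.mpr ⟨β, hβΛ, ⟨h2, hc⟩⟩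
            exact ((hK (β + 1) x).mp h4).2 β (hsucclt β)
    have hfin2 := hsub Λ le_rfl
    rw [hKΛ, subset_empty_iff] at hfin2
    exact hfin2
  by_cases hB : ∀ δ, δ < Λ → ∃ γ, δ ≤ γ ∧ γ < Λ ∧
      ∃ x, x ∈ K γ ∧ x ∉ K (γ + 1) ∧ x ∉ interior (K γ)
  · -- Case B: nowhere dense residues K δ \ RU give a contradiction
    obtain ⟨t, htc, htI⟩ := od_tool hod (ι := {δ : Ordinal.{u} // δ < Λ})
      (fun δ => K δ.1 \ RU)
      (fun δ => by
        show IsClosed (K δ.1 \ RU)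
        rw [diff_eq]
        exact (hKclosed δ.1 δ.2.le).inter hRUopen.isClosed_compl)
      (fun δ => hMint δ.1 δ.2)
      (by
        rw [eq_empty_iff_forall_notMem]
        intro x hx
        rw [mem_iInter] at hx
        have h0 : x ∈ K 0 \ RU := hx ⟨0, hΛlim.pos⟩
        have hxΛ : x ∈ K Λ := by
          refine (hK Λ x).mpr ⟨(hKY 0) h0.1, fun β hβ => ?_⟩
          have hβ1 := hx ⟨β + 1, hsuccΛ hβ⟩
          exact ((hK (β + 1) x).mp hβ1.1).2 β (hsucclt β)
        rw [hKΛ] at hxΛ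
        exact hxΛ)
    have hbound : ∃ b, b < Λ ∧ ∀ δ ∈ t, (δ : {δ : Ordinal.{u} // δ < Λ}).1 < b := by
      by_contra hcf
      push_neg at hcf
      refine hNoCof (Subtype.val '' t) (htc.image _) ?_ ?_
      · rintro _ ⟨δ, hδ, rfl⟩
        exact δ.2
      · intro β hβ
        obtain ⟨δ, hδt, hle⟩ := hcf β hβ
        exact ⟨δ.1, mem_image_of_mem _ hδt, hle⟩
    obtain ⟨b, hbΛ, hb⟩ := hbound
    obtain ⟨γ, hbγ, hγΛ, x, hx1, hx2, hx3⟩ := hB b hbΛ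
    have hxmem : x ∈ ⋂ δ ∈ t, (K (δ : {δ : Ordinal.{u} // δ < Λ}).1 \ RU) := by
      rw [mem_iInter₂]
      intro δ hδ
      exact ⟨hKanti (le_of_lt (lt_of_lt_of_le (hb δ hδ) hbγ)) hx1, hRloc x γ hγΛ hx1 hx2 hx3⟩
    rw [htI] at hxmem
    exact hxmem
  · push_neg at hB
    obtain ⟨δ₁, hδ₁Λ, hflat⟩ := hB
    set P : Ordinal.{u} → Set X := fun γ => K γ \ K (γ + 1) with hPdef
    have hPsub : ∀ γ, P γ ⊆ K γ := by
      intro γ x hx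
      exact hx.1
    have hPopen : ∀ γ, δ₁ ≤ γ → γ < Λ → IsOpen (P γ) := by
      intro γ h1 h2
      have hPeq : P γ = interior (K γ) \ K (γ + 1) := by
        rw [hPdef]
        apply Subset.antisymm
        · intro x hx
          exact ⟨hflat γ h1 h2 x hx.1 hx.2, hx.2⟩
        · intro x hx
          exact ⟨interior_subset hx.1, hx.2⟩
      rw [hPeq]
      exact IsOpen.sdiff isOpen_interior (hKclosed (γ + 1) (hsuccΛ h2).le)
    have hPdisj : ∀ γ γ' : Ordinal.{u}, γ < γ' → ∀ x, x ∈ P γ → x ∈ P γ' → False := by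
      intro γ γ' hlt x hx hx'
      exact hx.2 (hKanti (hsuccle hlt) (hPsub γ' hx'))
    have hPdisj' : ∀ γ γ' : Ordinal.{u}, ∀ x, x ∈ P γ → x ∈ P γ' → γ = γ' := by
      intro γ γ' x hx hx'
      rcases lt_trichotomy γ γ' with h | h | h
      · exact absurd (hPdisj γ γ' h x hx hx') not_false
      · exact h
      · exact absurd (hPdisj γ' γ h x hx' hx) not_false
    have hrank : ∀ (x : X) (δ : Ordinal.{u}), δ < Λ → x ∈ K δ →
        ∃ γ, δ ≤ γ ∧ γ < Λ ∧ x ∈ P γ := by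
      intro x δ hδΛ hxδ
      set ρ : Ordinal.{u} := sInf {i | x ∉ K i} with hρdef
      have hΛmem : Λ ∈ {i : Ordinal.{u} | x ∉ K i} := by
        show x ∉ K Λ
        rw [hKΛ]
        exact notMem_empty x
      have hxρ : x ∉ K ρ := csInf_mem ⟨Λ, hΛmem⟩
      have hlow : ∀ j, j < ρ → x ∈ K j := by
        intro j hj
        by_contra hc
        have hmem2 : j ∈ {i : Ordinal.{u} | x ∉ K i} := hc
        exact absurd (csInf_le' hmem2) (not_le.mpr hj)
      have hρΛ : ρ ≤ Λ := csInf_le' hΛmem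
      have hδρ : δ < ρ := by
        by_contra hc
        push_neg at hc
        exact hxρ (hKanti hc hxδ)
      rcases Ordinal.zero_or_succ_or_isSuccLimit ρ with h0 | ⟨γ, hγ⟩ | hlim
      · rw [h0] at hδρ
        exact absurd hδρ (by simp : ¬ δ < 0)
      · rw [← Ordinal.add_one_eq_succ, eq_comm] at hγ
        have hγρ : γ < ρ := by
          rw [hγ]
          exact hsucclt γ
        have hγΛ : γ < Λ := by
          rcases lt_or_eq_of_le hρΛ with h | h
          · exact lt_trans hγρ h
          · exfalso
            have hΛeq : Λ = γ + 1 := by rw [← h, hγ]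
            have hγltΛ : γ < Λ := by rw [hΛeq]; exact hsucclt γ
            have h2 := hsuccΛ hγltΛ
            rw [hΛeq] at h2
            exact lt_irrefl _ h2
        refine ⟨γ, ?_, hγΛ, hlow γ hγρ, ?_⟩
        · rw [hγ] at hδρ
          rcases lt_or_ge δ (γ + 1) with h | h
          · rw [Ordinal.add_one_eq_succ] at h
            exact Order.lt_succ_iff.mp h
          · exact absurd hδρ (not_lt.mpr h)
        · rw [← hγ]
          exact hxρ
      · exfalso
        apply hxρ
        refine (hK ρ x).mpr ⟨(hKY δ) hxδ, fun β hβρ => ?_⟩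
        have hβ1 : x ∈ K (β + 1) := by
          apply hlow
          rw [Ordinal.add_one_eq_succ]
          exact hlim.succ_lt hβρ
        exact ((hK (β + 1) x).mp hβ1).2 β (hsucclt β)
    obtain ⟨x₀, hx₀⟩ := hKne δ₁ hδ₁Λ
    have hxselex : ∀ γ : Ordinal.{u}, ∃ z : X, (P γ).Nonempty → z ∈ P γ := by
      intro γ
      by_cases hne : (P γ).Nonempty
      · exact ⟨hne.some, fun _ => hne.some_mem⟩
      · exact ⟨x₀, fun hh => absurd hh hne⟩
    choose xsel hxsel using hxselex
    set Sf : {δ : Ordinal.{u} // δ₁ ≤ δ ∧ δ < Λ} → Set X :=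
      fun δ => {z : X | ∃ γ, δ.1 ≤ γ ∧ γ < Λ ∧ (P γ).Nonempty ∧ z = xsel γ} with hSfdef
    have hSsub : ∀ δ, Sf δ ⊆ K δ.1 := by
      rintro δ z ⟨γ, hγ1, hγ2, hγ3, rfl⟩
      exact hKanti hγ1 (hPsub γ (hxsel γ hγ3))
    have hSclosed : ∀ δ, IsClosed (Sf δ) := by
      intro δ
      refine isClosed_of_closure_subset ?_
      intro z hz
      have hzK : z ∈ K δ.1 :=
        ((hKclosed δ.1 δ.2.2.le).closure_subset_iff.mpr (hSsub δ)) hz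
      obtain ⟨γz, hγz1, hγz2, hzP⟩ := hrank z δ.1 δ.2.2 hzK
      by_contra hzS
      have hPne : (P γz).Nonempty := ⟨z, hzP⟩
      have hzne : z ≠ xsel γz := by
        intro he
        exact hzS ⟨γz, hγz1, hγz2, hPne, he⟩
      have hNopen : IsOpen (P γz \ {xsel γz}) :=
        IsOpen.sdiff (hPopen γz (le_trans δ.2.1 hγz1) hγz2) isClosed_singleton
      have hzN : z ∈ P γz \ {xsel γz} := ⟨hzP, by simpa using hzne⟩
      obtain ⟨w, hwN, hwS⟩ := mem_closure_iff.mp hz _ hNopen hzN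
      obtain ⟨γw, hγw1, hγw2, hγw3, rfl⟩ := hwS
      have heq : γw = γz := hPdisj' γw γz _ (hxsel γw hγw3) hwN.1
      apply hwN.2
      rw [heq]
      rfl
    have hSint : ∀ δ, interior (Sf δ) = ∅ := by
      intro δ
      rw [eq_empty_iff_forall_notMem]
      intro x hxint
      obtain ⟨γ, hγ1, hγ2, hγ3, rfl⟩ := interior_subset hxint
      have hNopen : IsOpen (interior (Sf δ) ∩ P γ) :=
        isOpen_interior.inter (hPopen γ (le_trans δ.2.1 hγ1) hγ2)
      have hNsub : interior (Sf δ) ∩ P γ ⊆ {xsel γ} := by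
        rintro w ⟨hwint, hwP⟩
        obtain ⟨γ', hγ'1, hγ'2, hγ'3, rfl⟩ := interior_subset hwint
        have heq : γ' = γ := hPdisj' γ' γ _ (hxsel γ' hγ'3) hwP
        rw [heq]
        rfl
      have hNeq : interior (Sf δ) ∩ P γ = {xsel γ} :=
        Subset.antisymm hNsub (singleton_subset_iff.mpr ⟨hxint, hxsel γ hγ3⟩)
      have hiso : ¬ IsOpen ({xsel γ} : Set X) :=
        hYiso _ ((hKY γ) (hPsub γ (hxsel γ hγ3)))
      rw [← hNeq] at hiso
      exact hiso hNopen
    obtain ⟨t, htc, htI⟩ := od_tool hod Sf hSclosed hSint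
      (by
        rw [eq_empty_iff_forall_notMem]
        intro z hz
        rw [mem_iInter] at hz
        obtain ⟨γ₀, hγ₀1, hγ₀2, hγ₀3, hzeq⟩ := hz ⟨δ₁, le_rfl, hδ₁Λ⟩
        have hidx2 : δ₁ ≤ γ₀ + 1 ∧ γ₀ + 1 < Λ :=
          ⟨le_trans hγ₀1 (hsucclt γ₀).le, hsuccΛ hγ₀2⟩
        obtain ⟨γ₁, hγ₁1, hγ₁2, hγ₁3, hzeq'⟩ := hz ⟨γ₀ + 1, hidx2⟩
        have hlt : γ₀ < γ₁ := lt_of_lt_of_le (hsucclt γ₀) hγ₁1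
        refine hPdisj γ₀ γ₁ hlt z (by rw [hzeq]; exact hxsel γ₀ hγ₀3) ?_
        rw [hzeq']
        exact hxsel γ₁ hγ₁3)
    have hbound : ∃ b, b < Λ ∧ ∀ δ ∈ t,
        (δ : {δ : Ordinal.{u} // δ₁ ≤ δ ∧ δ < Λ}).1 < b := by
      by_contra hcf
      push_neg at hcf
      refine hNoCof (Subtype.val '' t) (htc.image _) ?_ ?_
      · rintro _ ⟨δ, hδ, rfl⟩
        exact δ.2.2
      · intro β hβ
        obtain ⟨δ, hδt, hle⟩ := hcf β hβ
        exact ⟨δ.1, mem_image_of_mem _ hδt, hle⟩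
    obtain ⟨b, hbΛ, hb⟩ := hbound
    have hcΛ : max b δ₁ < Λ := max_lt hbΛ hδ₁Λ
    obtain ⟨w, hw⟩ := hKne (max b δ₁) hcΛ
    obtain ⟨γ, hγ1, hγ2, hwP⟩ := hrank w (max b δ₁) hcΛ hw
    have hwmem : xsel γ ∈ ⋂ δ ∈ t, Sf δ := by
      rw [mem_iInter₂]
      intro δ hδ
      refine ⟨γ, ?_, hγ2, ⟨w, hwP⟩, rfl⟩
      exact le_of_lt (lt_of_lt_of_le (hb δ hδ) (le_trans (le_max_left b δ₁) hγ1))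
    rw [htI] at hwmem
    exact hwmem


open Set in
lemma od_isClosed_nonIsolated {X : Type u} [TopologicalSpace X] :
    IsClosed {x : X | ¬ IsOpen ({x} : Set X)} := by
  have h : {x : X | ¬ IsOpen ({x} : Set X)} = {x : X | IsOpen ({x} : Set X)}ᶜ := rfl
  rw [h]
  refine IsOpen.isClosed_compl ?_
  rw [isOpen_iff_forall_mem_open]
  intro x hx
  refine ⟨{x}, fun y hy => ?_, hx, rfl⟩
  rw [mem_singleton_iff] at hy
  subst hy
  exact hx

/-- If a T1 space is od-Lindelöf, then the subspace of its non-isolated points is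
linearly Lindelöf. -/
theorem odLindelof_nonIsolated_linearlyLindelof (X : Type*) [TopologicalSpace X]
    [T1Space X] (h : OdLindelof X) :
    LinearlyLindelof {x : X | ¬ IsOpen ({x} : Set X)} := by
  intro 𝒰 h1 h2 h3
  exact od_main h {x : X | ¬ IsOpen ({x} : Set X)} (fun x hx => hx)
    od_isClosed_nonIsolated 𝒰 h1 h2 h3
end
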